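/- arXiv:2407.01466 — 5 statements merged into one kernel-verified Lean document; each statement's English description precedes it below -/
import Mathlib

section
/- Let n be a positive integer and p ∈ (0,1). Let ℓ₂(n,p) denote the expected number of pairs 1 ≤ i < j ≤ n that have no straight path with at most 2 edges in H ~ D(K_n,p). Then ℓ(n,p) ≤ ℓ₂(n,p) ≤ n/p². -/
open Finset

attribute [local instance] Classical.propDecidable

noncomputable section

/-- There is a straight path (strictly increasing vertex sequence) from `i` to `j` in `H`. -/
def HasStraightPath {n : ℕ} (H : SimpleGraph (Fin n)) (i j : Fin n) : Prop :=
  ∃ (m : ℕ) (f : Fin (m + 1) → Fin n),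
    f 0 = i ∧ f (Fin.last m) = j ∧ StrictMono f ∧
    ∀ t : Fin m, H.Adj (f t.castSucc) (f t.succ)

/-- There is a straight path from `i` to `j` in `H` using at most `k` edges. -/
def HasStraightPathHop {n : ℕ} (H : SimpleGraph (Fin n)) (i j : Fin n) (k : ℕ) : Prop :=
  ∃ (m : ℕ) (f : Fin (m + 1) → Fin n), m ≤ k ∧
    f 0 = i ∧ f (Fin.last m) = j ∧ StrictMono f ∧
    ∀ t : Fin m, H.Adj (f t.castSucc) (f t.succ)

/-- The deficiency: number of pairs `i < j` with no straight path from `i` to `j`. -/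
def deficiency {n : ℕ} (H : SimpleGraph (Fin n)) : ℕ :=
  (Finset.univ.filter fun pq : Fin n × Fin n =>
    pq.1 < pq.2 ∧ ¬ HasStraightPath H pq.1 pq.2).card

/-- Expectation of `F` over the random subgraph of `G` keeping each edge
independently with probability `p`. -/
def graphExpect {V : Type} [Fintype V] (G : SimpleGraph V) (p : ℝ)
    (F : SimpleGraph V → ℝ) : ℝ :=
  ∑ S ∈ G.edgeFinset.powerset,
    p ^ S.card * (1 - p) ^ (G.edgeFinset.card - S.card) *
      F (SimpleGraph.fromEdgeSet (S : Set (Sym2 V)))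

/-- Probability of the event `A` for the random subgraph of `G` keeping each edge
independently with probability `p`. -/
def graphProb {V : Type} [Fintype V] (G : SimpleGraph V) (p : ℝ)
    (A : SimpleGraph V → Prop) : ℝ :=
  ∑ S ∈ G.edgeFinset.powerset.filter
      (fun (S : Finset (Sym2 V)) => A (SimpleGraph.fromEdgeSet (S : Set (Sym2 V)))),
    p ^ S.card * (1 - p) ^ (G.edgeFinset.card - S.card)

/-- The optimal deficiency `ℓ(n,p)`: expected deficiency of `D(K_n, p)`. -/
def optDeficiency (n : ℕ) (p : ℝ) : ℝ :=
  graphExpect (⊤ : SimpleGraph (Fin n)) p (fun H => (deficiency H : ℝ))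

/-- `ℓ₂(n,p)`: the expected number of pairs `i < j` with no straight path using at
most `2` edges in `D(K_n, p)`. -/
def ellTwo (n : ℕ) (p : ℝ) : ℝ :=
  graphExpect (⊤ : SimpleGraph (Fin n)) p (fun H =>
    ((Finset.univ.filter fun pq : Fin n × Fin n =>
      pq.1 < pq.2 ∧ ¬ HasStraightPathHop H pq.1 pq.2 2).card : ℝ))



private lemma sum_w_ind {α : Type*} [DecidableEq α] (p : ℝ) (A F : Finset α) (hF : F ⊆ A) :
    ∑ S ∈ A.powerset, p ^ S.card * (if F ⊆ S then (1 - p) ^ (A.card - S.card) else 0)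
      = p ^ F.card := by
  have h := Finset.prod_add (fun _ : α => p) (fun e => if e ∈ F then 0 else (1 - p)) A
  have hL : ∏ e ∈ A, (p + if e ∈ F then (0:ℝ) else (1 - p)) = p ^ F.card := by
    rw [Finset.prod_congr rfl (g := fun e => if e ∈ F then p else 1)
      (fun e _ => by by_cases he : e ∈ F <;> simp [he])]
    rw [Finset.prod_ite_mem, Finset.inter_eq_right.mpr hF, Finset.prod_const]
  rw [hL] at h
  rw [h]
  apply Finset.sum_congr rfl
  intro S hS
  rw [Finset.mem_powerset] at hS
  rw [Finset.prod_const]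
  congr 1
  by_cases hFS : F ⊆ S
  · rw [if_pos hFS]
    rw [Finset.prod_congr rfl
      (fun e he => if_neg (fun hc => (Finset.mem_sdiff.mp he).2 (hFS hc)))]
    rw [Finset.prod_const, Finset.card_sdiff_of_subset hS]
  · rw [if_neg hFS]
    obtain ⟨e, heF, heS⟩ := Finset.not_subset.mp hFS
    symm
    apply Finset.prod_eq_zero (Finset.mem_sdiff.mpr ⟨hF heF, heS⟩)
    simp [heF]

private lemma core_eq {n : ℕ} (p : ℝ) (A : Finset (Sym2 (Fin n)))
    (hA : ∀ a b : Fin n, a ≠ b → s(a,b) ∈ A) (i j : Fin n) (hij : i < j) :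
    ∑ S ∈ A.powerset,
      p ^ S.card * (1 - p) ^ (A.card - S.card) *
        ∏ k ∈ Finset.Ioo i j, (1 - if s(i,k) ∈ S ∧ s(k,j) ∈ S then (1:ℝ) else 0)
      = (1 - p ^ 2) ^ (Finset.Ioo i j).card := by
  classical
  set K := Finset.Ioo i j with hK
  set Fe : Finset (Fin n) → Finset (Sym2 (Fin n)) :=
    fun T => T.biUnion (fun k => {s(i,k), s(k,j)}) with hFe
  -- Fe T ⊆ A
  have hFA : ∀ T ∈ K.powerset, Fe T ⊆ A := by
    intro T hT
    rw [Finset.mem_powerset] at hT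
    apply Finset.biUnion_subset.mpr
    intro k hk
    have hk' := Finset.mem_Ioo.mp (hT hk)
    intro e he
    rcases Finset.mem_insert.mp he with rfl | he
    · exact hA _ _ (ne_of_lt hk'.1)
    · rw [Finset.mem_singleton] at he; subst he
      exact hA _ _ (ne_of_lt hk'.2)
  -- card of Fe T
  have hcard : ∀ T ∈ K.powerset, (Fe T).card = 2 * T.card := by
    intro T hT
    rw [Finset.mem_powerset] at hT
    rw [hFe, Finset.card_biUnion]
    · rw [Finset.sum_congr rfl (g := fun _ => 2) ?_, Finset.sum_const, smul_eq_mul, mul_comm]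
      intro k hk
      have hk' := Finset.mem_Ioo.mp (hT hk)
      have hij' : i < j := hij
      rw [Finset.card_insert_of_notMem, Finset.card_singleton]
      rw [Finset.mem_singleton, Sym2.eq_iff]
      rw [Fin.lt_def] at hk'
      obtain ⟨h1, h2⟩ := hk'
      simp only [Fin.ext_iff]
      omega
    · intro k hk k' hk' hne
      have h1 := Finset.mem_Ioo.mp (hT hk)
      have h2 := Finset.mem_Ioo.mp (hT hk')
      rw [Function.onFun, Finset.disjoint_left]
      intro e he he'
      simp only [Finset.mem_insert, Finset.mem_singleton] at he he'
      obtain ⟨h1a, h1b⟩ := h1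
      obtain ⟨h2a, h2b⟩ := h2
      rw [Fin.lt_def] at h1a h1b h2a h2b
      have hne' : (k:ℕ) ≠ (k':ℕ) := fun h => hne (Fin.ext h)
      rcases he with rfl | rfl <;> rcases he' with h | h <;>
        rw [Sym2.eq_iff] at h <;> simp only [Fin.ext_iff] at h <;> omega
  -- expand the product via inclusion-exclusion
  have hexp : ∀ S : Finset (Sym2 (Fin n)),
      ∏ k ∈ K, (1 - if s(i,k) ∈ S ∧ s(k,j) ∈ S then (1:ℝ) else 0)
        = ∑ T ∈ K.powerset, (-1 : ℝ) ^ T.card * (if Fe T ⊆ S then 1 else 0) := by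
    intro S
    rw [Finset.prod_congr rfl
      (g := fun k => (fun k => -(if s(i,k) ∈ S ∧ s(k,j) ∈ S then (1:ℝ) else 0)) k
        + (fun _ => (1:ℝ)) k) (fun k _ => by ring)]
    rw [Finset.prod_add]
    apply Finset.sum_congr rfl
    intro T hT
    rw [Finset.prod_const_one, mul_one]
    rw [Finset.prod_congr rfl
      (g := fun k => (-1 : ℝ) * (if s(i,k) ∈ S ∧ s(k,j) ∈ S then (1:ℝ) else 0))
      (fun k _ => by ring)]
    rw [Finset.prod_mul_distrib, Finset.prod_const]
    congr 1
    have hiff : (∀ k ∈ T, s(i,k) ∈ S ∧ s(k,j) ∈ S) ↔ Fe T ⊆ S := by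
      constructor
      · intro h
        apply Finset.biUnion_subset.mpr
        intro k hk
        apply Finset.insert_subset_iff.mpr
        exact ⟨(h k hk).1, Finset.singleton_subset_iff.mpr (h k hk).2⟩
      · intro h k hk
        refine ⟨h ?_, h ?_⟩
        · exact Finset.mem_biUnion.mpr ⟨k, hk, Finset.mem_insert_self _ _⟩
        · exact Finset.mem_biUnion.mpr ⟨k, hk, by simp⟩
    by_cases hsub : Fe T ⊆ S
    · rw [if_pos hsub]
      apply Finset.prod_eq_one
      intro k hk
      rw [if_pos (hiff.mpr hsub k hk)]
    · rw [if_neg hsub]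
      have : ¬ ∀ k ∈ T, s(i,k) ∈ S ∧ s(k,j) ∈ S := fun h => hsub (hiff.mp h)
      push_neg at this
      obtain ⟨k, hk, hc⟩ := this
      apply Finset.prod_eq_zero hk
      rw [if_neg]
      intro hcc
      exact hc hcc.1 hcc.2
  -- main computation
  have step1 : ∑ S ∈ A.powerset, p ^ S.card * (1 - p) ^ (A.card - S.card) *
        ∏ k ∈ K, (1 - if s(i,k) ∈ S ∧ s(k,j) ∈ S then (1:ℝ) else 0)
      = ∑ T ∈ K.powerset, (-1 : ℝ) ^ T.card *
          ∑ S ∈ A.powerset, p ^ S.card *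
            (if Fe T ⊆ S then (1 - p) ^ (A.card - S.card) else 0) := by
    rw [Finset.sum_congr rfl (g := fun S => ∑ T ∈ K.powerset, (-1 : ℝ) ^ T.card *
        (p ^ S.card * (if Fe T ⊆ S then (1 - p) ^ (A.card - S.card) else 0))) ?_]
    · rw [Finset.sum_comm]
      apply Finset.sum_congr rfl
      intro T _
      rw [← Finset.mul_sum]
    · intro S _
      rw [hexp S, Finset.mul_sum]
      apply Finset.sum_congr rfl
      intro T _
      by_cases h : Fe T ⊆ S <;> simp [h] <;> ring
  rw [step1]
  have hgeom : ∑ T ∈ K.powerset, ((-(p^2)) : ℝ)^T.card = (1-p^2)^K.card := by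
    have h := Finset.prod_add (fun _ : Fin n => -(p^2)) (fun _ => (1:ℝ)) K
    rw [Finset.prod_congr rfl (g := fun _ : Fin n => 1 - p^2) (fun k _ => by ring),
      Finset.prod_const] at h
    rw [h]
    apply Finset.sum_congr rfl
    intro T _
    rw [Finset.prod_const, Finset.prod_const_one, mul_one]
  rw [← hgeom]
  apply Finset.sum_congr rfl
  intro T hT
  rw [sum_w_ind p A (Fe T) (hFA T hT), hcard T hT]
  rw [pow_mul, ← mul_pow, neg_one_mul]


private lemma pair_le {n : ℕ} (p : ℝ) (hp0 : 0 ≤ p) (hp1 : p ≤ 1)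
    (A : Finset (Sym2 (Fin n))) (hA : ∀ a b : Fin n, a ≠ b → s(a,b) ∈ A)
    (i j : Fin n) (hij : i < j) :
    ∑ S ∈ A.powerset,
      p ^ S.card * (1 - p) ^ (A.card - S.card) *
        (if i < j ∧ ¬ HasStraightPathHop (SimpleGraph.fromEdgeSet (S : Set (Sym2 (Fin n)))) i j 2
          then (1:ℝ) else 0)
      ≤ (1 - p ^ 2) ^ (Finset.Ioo i j).card := by
  rw [← core_eq p A hA i j hij]
  apply Finset.sum_le_sum
  intro S _
  apply mul_le_mul_of_nonneg_left _ (mul_nonneg (pow_nonneg hp0 _) (pow_nonneg (by linarith) _))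
  by_cases h2 : HasStraightPathHop (SimpleGraph.fromEdgeSet (S : Set (Sym2 (Fin n)))) i j 2
  · rw [if_neg (by tauto)]
    apply Finset.prod_nonneg
    intro k _
    split <;> norm_num
  · rw [if_pos ⟨hij, h2⟩]
    have : ∏ k ∈ Finset.Ioo i j, (1 - if s(i,k) ∈ S ∧ s(k,j) ∈ S then (1:ℝ) else 0) = 1 := by
      apply Finset.prod_eq_one
      intro k hk
      rw [Finset.mem_Ioo] at hk
      rw [if_neg, sub_zero]
      rintro ⟨h5, h6⟩
      apply h2
      refine ⟨2, ![i, k, j], le_refl 2, rfl, rfl, ?_, ?_⟩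
      · rw [Fin.strictMono_iff_lt_succ]
        intro t
        fin_cases t
        · exact hk.1
        · exact hk.2
      · intro t
        fin_cases t
        · rw [SimpleGraph.fromEdgeSet_adj]
          exact ⟨Finset.mem_coe.mpr h5, ne_of_lt hk.1⟩
        · rw [SimpleGraph.fromEdgeSet_adj]
          exact ⟨Finset.mem_coe.mpr h6, ne_of_lt hk.2⟩
    rw [this]

private lemma inner_sum_le {n : ℕ} (p : ℝ) (hp0 : 0 < p) (hp1 : p < 1) (i : Fin n) :
    ∑ j : Fin n, (if i < j then ((1 - p^2) ^ ((Finset.Ioo i j).card) : ℝ) else 0)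
      ≤ 1 / p^2 := by
  have hq0 : (0:ℝ) ≤ 1 - p^2 := by nlinarith
  rw [← Finset.sum_filter]
  have himg : ∑ j ∈ Finset.univ.filter (fun j : Fin n => i < j),
      ((1 - p^2) ^ ((Finset.Ioo i j).card) : ℝ)
      = ∑ d ∈ (Finset.univ.filter (fun j : Fin n => i < j)).image
          (fun j : Fin n => (Finset.Ioo i j).card), ((1 - p^2) ^ d : ℝ) := by
    rw [Finset.sum_image]
    intro a ha b hb hab
    rw [Finset.mem_coe, Finset.mem_filter] at ha hb
    simp only [Fin.card_Ioo] at hab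
    have h1 := ha.2; have h2 := hb.2
    rw [Fin.lt_def] at h1 h2
    exact Fin.ext (by omega)
  rw [himg]
  have hsub : (Finset.univ.filter (fun j : Fin n => i < j)).image
      (fun j : Fin n => (Finset.Ioo i j).card) ⊆ Finset.range n := by
    intro d hd
    obtain ⟨j, _, rfl⟩ := Finset.mem_image.mp hd
    rw [Finset.mem_range, Fin.card_Ioo]
    omega
  calc _ ≤ ∑ d ∈ Finset.range n, ((1 - p^2) ^ d : ℝ) :=
        Finset.sum_le_sum_of_subset_of_nonneg hsub (fun d _ _ => pow_nonneg hq0 d)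
    _ ≤ 1 / p^2 := by
        rw [le_div_iff₀ (by positivity)]
        have hg := geom_sum_mul (1 - p^2) n
        nlinarith [pow_nonneg hq0 n]

private lemma main2 {n : ℕ} (p : ℝ) (hp0 : 0 < p) (hp1 : p < 1)
    (A : Finset (Sym2 (Fin n))) (hA : ∀ a b : Fin n, a ≠ b → s(a,b) ∈ A) :
    ∑ S ∈ A.powerset, p ^ S.card * (1 - p) ^ (A.card - S.card) *
      ((Finset.univ.filter fun pq : Fin n × Fin n =>
        pq.1 < pq.2 ∧ ¬ HasStraightPathHop
          (SimpleGraph.fromEdgeSet (S : Set (Sym2 (Fin n)))) pq.1 pq.2 2).card : ℝ)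
      ≤ (n : ℝ) / p ^ 2 := by
  have hstep : ∀ S : Finset (Sym2 (Fin n)),
      p ^ S.card * (1 - p) ^ (A.card - S.card) *
        ((Finset.univ.filter fun pq : Fin n × Fin n =>
          pq.1 < pq.2 ∧ ¬ HasStraightPathHop
            (SimpleGraph.fromEdgeSet (S : Set (Sym2 (Fin n)))) pq.1 pq.2 2).card : ℝ)
      = ∑ pq ∈ (Finset.univ : Finset (Fin n × Fin n)),
          p ^ S.card * (1 - p) ^ (A.card - S.card) *
            (if pq.1 < pq.2 ∧ ¬ HasStraightPathHop
                (SimpleGraph.fromEdgeSet (S : Set (Sym2 (Fin n)))) pq.1 pq.2 2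
              then (1:ℝ) else 0) := by
    intro S
    rw [Finset.card_filter]
    push_cast
    rw [Finset.mul_sum]
  refine le_trans (le_of_eq ((Finset.sum_congr rfl fun S _ => hstep S).trans
    Finset.sum_comm)) ?_
  have hpair : ∀ pq : Fin n × Fin n,
      ∑ S ∈ A.powerset, p ^ S.card * (1 - p) ^ (A.card - S.card) *
        (if pq.1 < pq.2 ∧ ¬ HasStraightPathHop
            (SimpleGraph.fromEdgeSet (S : Set (Sym2 (Fin n)))) pq.1 pq.2 2
          then (1:ℝ) else 0)
      ≤ (if pq.1 < pq.2 then ((1 - p^2) ^ ((Finset.Ioo pq.1 pq.2).card) : ℝ) else 0) := by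
    intro pq
    by_cases hlt : pq.1 < pq.2
    · rw [if_pos hlt]
      exact pair_le p hp0.le hp1.le A hA pq.1 pq.2 hlt
    · rw [if_neg hlt]
      apply le_of_eq
      apply Finset.sum_eq_zero
      intro S _
      rw [if_neg (fun hc => hlt hc.1), mul_zero]
  refine le_trans (Finset.sum_le_sum fun pq _ => hpair pq) ?_
  rw [Fintype.sum_prod_type]
  refine le_trans (Finset.sum_le_sum fun i _ => inner_sum_le p hp0 hp1 i) ?_
  rw [Finset.sum_const, Finset.card_univ, Fintype.card_fin, nsmul_eq_mul]
  apply le_of_eq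
  field_simp

theorem stmt_1 (n : ℕ) (hn : 0 < n) (p : ℝ) (hp : p ∈ Set.Ioo (0 : ℝ) 1) :
    optDeficiency n p ≤ ellTwo n p ∧ ellTwo n p ≤ (n : ℝ) / p ^ 2 := by
  obtain ⟨hp0, hp1⟩ := hp
  constructor
  · rw [optDeficiency, ellTwo, graphExpect, graphExpect]
    apply Finset.sum_le_sum
    intro S _
    apply mul_le_mul_of_nonneg_left _
      (mul_nonneg (pow_nonneg hp0.le _) (pow_nonneg (by linarith) _))
    rw [Nat.cast_le, deficiency]
    apply Finset.card_le_card
    apply Finset.monotone_filter_right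
    intro pq _ hpq
    refine ⟨hpq.1, fun h2 => hpq.2 ?_⟩
    obtain ⟨m, f, _, h⟩ := h2
    exact ⟨m, f, h⟩
  · rw [ellTwo, graphExpect]
    apply main2 p hp0 hp1
    intro a b hab
    simp only [SimpleGraph.mem_edgeFinset, SimpleGraph.mem_edgeSet, SimpleGraph.top_adj]
    exact hab
end
end

section
/- There is an integer constant c₀ ≥ 37 such that the following holds for every integer c ≥ c₀ and every p ∈ (0,1) with M = c/p an integer. Let B and B' be disjoint finite sets of size M, let S ⊆ B be nonempty with |S| = u, and include each edge of S × B' in a random bipartite graph independently with probability p. Let Y be the number of vertices of B' incident to at least one included edge. Then P[Y ≥ min(2u, M/3)] ≥ 1/2. -/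
open Finset

attribute [local instance] Classical.propDecidable

noncomputable section

/-- Expectation of `F` over the random subset of `E` keeping each pair
independently with probability `ρ`. -/
def bipExpect {α : Type} (E : Finset (α × α)) (ρ : ℝ) (F : Finset (α × α) → ℝ) : ℝ :=
  ∑ T ∈ E.powerset, ρ ^ T.card * (1 - ρ) ^ (E.card - T.card) * F T

/-- Probability of the event `A` for the random subset of `E` keeping each pair
independently with probability `ρ`. -/
def bipProb {α : Type} (E : Finset (α × α)) (ρ : ℝ) (A : Finset (α × α) → Prop) : ℝ :=
  ∑ T ∈ E.powerset.filter (fun (T : Finset (α × α)) => A T),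
    ρ ^ T.card * (1 - ρ) ^ (E.card - T.card)

/-- Number of vertices of `C` incident to at least one included pair of `T`. -/
def coveredCount {α : Type} (C : Finset α) (T : Finset (α × α)) : ℕ :=
  (C.filter fun c => ∃ a, (a, c) ∈ T).card

/-- `|Γ(S)|`: number of vertices of `R` joined by a pair of `T` to some vertex of `S`. -/
def nbrCount {α : Type} (S R : Finset α) (T : Finset (α × α)) : ℕ :=
  (R.filter fun r => ∃ s ∈ S, (s, r) ∈ T).card

lemma sum_powerset_pow_mul_pow {β : Type*} (E : Finset β) (x y : ℝ) :
    ∑ W ∈ E.powerset, x ^ W.card * y ^ (E.card - W.card) = (x + y) ^ E.card := by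
  classical
  have h := Finset.prod_add (fun _ : β => x) (fun _ : β => y) E
  simp only [Finset.prod_const] at h
  rw [h]
  refine Finset.sum_congr rfl fun W hW => ?_
  rw [Finset.card_sdiff, Finset.inter_eq_left.2 (Finset.mem_powerset.1 hW)]

lemma sum_powerset_union_disjoint {β : Type*} [DecidableEq β] (s t : Finset β)
    (h : Disjoint s t) (f : Finset β → ℝ) :
    ∑ W ∈ (s ∪ t).powerset, f W = ∑ a ∈ s.powerset, ∑ b ∈ t.powerset, f (a ∪ b) := by
  rw [← Finset.sum_product']
  refine (Finset.sum_nbij' (fun W => (W ∩ s, W ∩ t)) (fun ab => ab.1 ∪ ab.2) ?_ ?_ ?_ ?_ ?_).symm.symm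
  · intro W hW
    simp only [Finset.mem_product, Finset.mem_powerset] at *
    exact ⟨Finset.inter_subset_right, Finset.inter_subset_right⟩
  · intro ab hab
    simp only [Finset.mem_product, Finset.mem_powerset] at *
    exact Finset.union_subset (hab.1.trans Finset.subset_union_left)
      (hab.2.trans Finset.subset_union_right)
  · intro W hW
    simp only [Finset.mem_powerset] at hW
    show W ∩ s ∪ W ∩ t = W
    rw [← Finset.inter_union_distrib_left, Finset.inter_eq_left.2 hW]
  · intro ab hab
    simp only [Finset.mem_product, Finset.mem_powerset] at hab
    have h1 : ab.1 ∩ s = ab.1 := Finset.inter_eq_left.2 hab.1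
    have h2 : ab.2 ∩ t = ab.2 := Finset.inter_eq_left.2 hab.2
    have h3 : ab.2 ∩ s = ∅ := Finset.eq_empty_of_forall_notMem fun x hx => by
      have := Finset.mem_inter.1 hx
      exact (Finset.disjoint_right.1 h (hab.2 this.1)) this.2
    have h4 : ab.1 ∩ t = ∅ := Finset.eq_empty_of_forall_notMem fun x hx => by
      have := Finset.mem_inter.1 hx
      exact (Finset.disjoint_left.1 h (hab.1 this.1)) this.2
    show ((ab.1 ∪ ab.2) ∩ s, (ab.1 ∪ ab.2) ∩ t) = ab
    have e1 : (ab.1 ∪ ab.2) ∩ s = ab.1 := by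
      rw [Finset.union_inter_distrib_right, h1, h3, Finset.union_empty]
    have e2 : (ab.1 ∪ ab.2) ∩ t = ab.2 := by
      rw [Finset.union_inter_distrib_right, h2, h4, Finset.empty_union]
    rw [e1, e2]
  · intro W hW
    simp only [Finset.mem_powerset] at hW
    show f W = f (W ∩ s ∪ W ∩ t)
    rw [← Finset.inter_union_distrib_left, Finset.inter_eq_left.2 hW]

lemma coveredCount_union {α : Type} {S C : Finset α} {b : α} (hb : b ∉ C)
    {A U : Finset (α × α)} (hA : A ⊆ S ×ˢ C) (hU : U ⊆ S ×ˢ {b}) :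
    coveredCount (insert b C) (A ∪ U) =
      coveredCount C A + (if U.Nonempty then 1 else 0) := by
  classical
  unfold coveredCount
  have hsnd : ∀ x ∈ U, x.2 = b := fun x hx => Finset.mem_singleton.1 (Finset.mem_product.1 (hU hx)).2
  have hPb : (∃ a, (a, b) ∈ A ∪ U) ↔ U.Nonempty := by
    constructor
    · rintro ⟨a, ha⟩
      rcases Finset.mem_union.1 ha with h' | h'
      · exact absurd (Finset.mem_product.1 (hA h')).2 (by simpa using hb)
      · exact ⟨_, h'⟩
    · rintro ⟨x, hx⟩
      refine ⟨x.1, Finset.mem_union_right _ ?_⟩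
      have := hsnd x hx
      rw [← this, Prod.mk.eta]
      exact hx
  have hfilter : C.filter (fun c => ∃ a, (a, c) ∈ A ∪ U) = C.filter (fun c => ∃ a, (a, c) ∈ A) := by
    apply Finset.filter_congr
    intro c hc
    constructor
    · rintro ⟨a, ha⟩
      rcases Finset.mem_union.1 ha with h' | h'
      · exact ⟨a, h'⟩
      · exact absurd (hsnd _ h') (by rintro rfl; exact hb hc)
    · rintro ⟨a, ha⟩
      exact ⟨a, Finset.mem_union_left _ ha⟩
  rw [Finset.filter_insert]
  by_cases hU' : U.Nonempty
  · rw [if_pos (hPb.2 hU'), if_pos hU', Finset.card_insert_of_notMem, hfilter]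
    simp [hb]
  · rw [if_neg (fun h => hU' (hPb.1 h)), if_neg hU', hfilter, add_zero]

lemma bip_inner_sum {α : Type} (p : ℝ) (S : Finset α) (b : α) (y : ℕ) (g : ℕ → ℝ) :
    ∑ U ∈ (S ×ˢ ({b} : Finset α)).powerset,
        p ^ U.card * (1 - p) ^ (S.card - U.card) * g (y + if U.Nonempty then 1 else 0)
      = (1 - p) ^ S.card * g y + (1 - (1 - p) ^ S.card) * g (y + 1) := by
  classical
  have hbij : ∑ U ∈ (S ×ˢ ({b} : Finset α)).powerset,
        p ^ U.card * (1 - p) ^ (S.card - U.card) * g (y + if U.Nonempty then 1 else 0)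
      = ∑ A ∈ S.powerset,
        p ^ A.card * (1 - p) ^ (S.card - A.card) * g (y + if A.Nonempty then 1 else 0) := by
    refine Finset.sum_nbij' (fun U => U.image Prod.fst) (fun A => A.image (fun a => (a, b)))
      ?_ ?_ ?_ ?_ ?_
    · intro U hU
      simp only [Finset.mem_powerset] at *
      intro a ha
      rcases Finset.mem_image.1 ha with ⟨x, hx, rfl⟩
      exact (Finset.mem_product.1 (hU hx)).1
    · intro A hA
      simp only [Finset.mem_powerset] at *
      intro x hx
      rcases Finset.mem_image.1 hx with ⟨a, ha, rfl⟩
      exact Finset.mem_product.2 ⟨hA ha, Finset.mem_singleton_self b⟩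
    · intro U hU
      simp only [Finset.mem_powerset] at hU
      have hsnd : ∀ x ∈ U, x = (x.1, b) := by
        intro x hx
        have := Finset.mem_singleton.1 (Finset.mem_product.1 (hU hx)).2
        rw [← this, Prod.mk.eta]
      show (U.image Prod.fst).image (fun a => (a, b)) = U
      ext x
      simp only [Finset.mem_image, exists_exists_and_eq_and]
      constructor
      · rintro ⟨z, hz, rfl⟩
        rwa [← hsnd z hz]
      · intro hx
        exact ⟨x, hx, (hsnd x hx).symm⟩
    · intro A hA
      show (A.image (fun a => (a, b))).image Prod.fst = A
      ext a
      simp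
    · intro U hU
      simp only [Finset.mem_powerset] at hU
      have hinj : Set.InjOn Prod.fst (U : Set (α × α)) := by
        intro x hx y hy hxy
        have hx' := Finset.mem_singleton.1 (Finset.mem_product.1 (hU hx)).2
        have hy' := Finset.mem_singleton.1 (Finset.mem_product.1 (hU hy)).2
        exact Prod.ext hxy (hx'.trans hy'.symm)
      have hcard : (U.image Prod.fst).card = U.card := Finset.card_image_of_injOn hinj
      have hne : (U.image Prod.fst).Nonempty ↔ U.Nonempty := Finset.image_nonempty
      show _ = p ^ (U.image Prod.fst).card * (1 - p) ^ (S.card - (U.image Prod.fst).card) *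
        g (y + if (U.image Prod.fst).Nonempty then 1 else 0)
      by_cases h' : U.Nonempty
      · rw [hcard, if_pos h', if_pos (hne.2 h')]
      · rw [hcard, if_neg h', if_neg (fun hh => h' (hne.1 hh))]
  rw [hbij]
  have hempty : (∅ : Finset α) ∈ S.powerset := Finset.empty_mem_powerset S
  rw [← Finset.sum_erase_add _ _ hempty]
  have h1 : ∀ A ∈ S.powerset.erase ∅,
      p ^ A.card * (1 - p) ^ (S.card - A.card) * g (y + if A.Nonempty then 1 else 0)
        = p ^ A.card * (1 - p) ^ (S.card - A.card) * g (y + 1) := by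
    intro A hA
    have : A.Nonempty := Finset.nonempty_of_ne_empty (Finset.mem_erase.1 hA).1
    rw [if_pos this]
  rw [Finset.sum_congr rfl h1, ← Finset.sum_mul]
  have hsum : ∑ A ∈ S.powerset.erase ∅, p ^ A.card * (1 - p) ^ (S.card - A.card)
      = 1 - (1 - p) ^ S.card := by
    have := Finset.sum_erase_add S.powerset
      (fun A => p ^ A.card * (1 - p) ^ (S.card - A.card)) hempty
    have htot : ∑ A ∈ S.powerset, p ^ A.card * (1 - p) ^ (S.card - A.card) = 1 := by
      rw [sum_powerset_pow_mul_pow]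
      simp
    rw [htot] at this
    simp only [Finset.card_empty, pow_zero, one_mul, Nat.sub_zero] at this
    linarith
  rw [hsum]
  have he : (y + if (∅ : Finset α).Nonempty then 1 else 0) = y := by simp
  rw [he]
  simp only [Finset.card_empty, pow_zero, one_mul, Nat.sub_zero]
  ring

lemma bip_key {α : Type} (p : ℝ) (S : Finset α) (C : Finset α) : ∀ g : ℕ → ℝ,
    ∑ T ∈ (S ×ˢ C).powerset,
        p ^ T.card * (1 - p) ^ ((S ×ˢ C).card - T.card) * g (coveredCount C T)
      = ∑ W ∈ C.powerset,
          (1 - (1 - p) ^ S.card) ^ W.card * ((1 - p) ^ S.card) ^ (C.card - W.card) * g W.card := by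
  classical
  induction C using Finset.induction_on with
  | empty =>
    intro g
    simp [coveredCount]
  | @insert b C hb ih =>
    intro g
    set q : ℝ := (1 - p) ^ S.card with hqdef
    set θ : ℝ := 1 - (1 - p) ^ S.card with hθdef
    have hunion : S ×ˢ insert b C = (S ×ˢ C) ∪ (S ×ˢ {b}) := by
      ext x
      simp only [Finset.mem_product, Finset.mem_insert, Finset.mem_union, Finset.mem_singleton]
      tauto
    have hdisj : Disjoint (S ×ˢ C) (S ×ˢ ({b} : Finset α)) := by
      rw [Finset.disjoint_left]
      intro x hx hx'
      have h1 := (Finset.mem_product.1 hx).2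
      have h2 := Finset.mem_singleton.1 (Finset.mem_product.1 hx').2
      rw [h2] at h1
      exact hb h1
    have hcardsb : (S ×ˢ ({b} : Finset α)).card = S.card := by
      rw [Finset.card_product, Finset.card_singleton, mul_one]
    rw [hunion, sum_powerset_union_disjoint _ _ hdisj]
    have hstep : ∀ A ∈ (S ×ˢ C).powerset,
        (∑ U ∈ (S ×ˢ ({b} : Finset α)).powerset,
          p ^ (A ∪ U).card * (1 - p) ^ (((S ×ˢ C) ∪ (S ×ˢ ({b} : Finset α))).card - (A ∪ U).card)
            * g (coveredCount (insert b C) (A ∪ U)))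
        = p ^ A.card * (1 - p) ^ ((S ×ˢ C).card - A.card) *
            (q * g (coveredCount C A) + θ * g (coveredCount C A + 1)) := by
      intro A hA
      have hA' : A ⊆ S ×ˢ C := Finset.mem_powerset.1 hA
      have hterm : ∀ U ∈ (S ×ˢ ({b} : Finset α)).powerset,
          p ^ (A ∪ U).card * (1 - p) ^ (((S ×ˢ C) ∪ (S ×ˢ ({b} : Finset α))).card - (A ∪ U).card)
            * g (coveredCount (insert b C) (A ∪ U))
          = (p ^ A.card * (1 - p) ^ ((S ×ˢ C).card - A.card)) *
            (p ^ U.card * (1 - p) ^ (S.card - U.card) *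
              g (coveredCount C A + if U.Nonempty then 1 else 0)) := by
        intro U hU
        have hU' : U ⊆ S ×ˢ ({b} : Finset α) := Finset.mem_powerset.1 hU
        have hAU : Disjoint A U := hdisj.mono hA' hU'
        have hcardAU : (A ∪ U).card = A.card + U.card := Finset.card_union_of_disjoint hAU
        have hcardT : ((S ×ˢ C) ∪ (S ×ˢ ({b} : Finset α))).card
            = (S ×ˢ C).card + S.card := by
          rw [Finset.card_union_of_disjoint hdisj, hcardsb]
        have hAle : A.card ≤ (S ×ˢ C).card := Finset.card_le_card hA'
        have hUle : U.card ≤ S.card := by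
          have := Finset.card_le_card hU'
          rwa [hcardsb] at this
        have hexp : ((S ×ˢ C).card + S.card) - (A.card + U.card)
            = ((S ×ˢ C).card - A.card) + (S.card - U.card) := by omega
        rw [hcardAU, hcardT, hexp, coveredCount_union hb hA' hU', pow_add, pow_add]
        ring
      rw [Finset.sum_congr rfl hterm, ← Finset.mul_sum, bip_inner_sum p S b _ g]
    rw [Finset.sum_congr rfl hstep]
    have hsplit : ∑ A ∈ (S ×ˢ C).powerset,
        p ^ A.card * (1 - p) ^ ((S ×ˢ C).card - A.card) *
          (q * g (coveredCount C A) + θ * g (coveredCount C A + 1))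
        = q * (∑ A ∈ (S ×ˢ C).powerset,
            p ^ A.card * (1 - p) ^ ((S ×ˢ C).card - A.card) * g (coveredCount C A))
          + θ * (∑ A ∈ (S ×ˢ C).powerset,
            p ^ A.card * (1 - p) ^ ((S ×ˢ C).card - A.card) * g (coveredCount C A + 1)) := by
      rw [Finset.mul_sum, Finset.mul_sum, ← Finset.sum_add_distrib]
      exact Finset.sum_congr rfl fun A hA => by ring
    rw [hsplit, ih g, ih (fun k => g (k + 1))]
    rw [Finset.sum_powerset_insert hb]
    have hc1 : (insert b C).card = C.card + 1 := Finset.card_insert_of_notMem hb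
    rw [Finset.mul_sum, Finset.mul_sum, hc1]
    congr 1
    · refine Finset.sum_congr rfl fun W hW => ?_
      have hWle : W.card ≤ C.card := Finset.card_le_card (Finset.mem_powerset.1 hW)
      have : C.card + 1 - W.card = (C.card - W.card) + 1 := by omega
      rw [this, pow_succ]
      ring
    · refine Finset.sum_congr rfl fun W hW => ?_
      have hW' : W ⊆ C := Finset.mem_powerset.1 hW
      have hbW : b ∉ W := fun h => hb (hW' h)
      have hWc : (insert b W).card = W.card + 1 := Finset.card_insert_of_notMem hbW
      have hWle : W.card ≤ C.card := Finset.card_le_card hW'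
      have hexp : C.card + 1 - (W.card + 1) = C.card - W.card := by omega
      rw [hWc, hexp, pow_succ]
      ring

lemma bip_cheb {n : ℕ} {θ t : ℝ} (hθ0 : 0 ≤ θ) (hθ1 : θ ≤ 1) (h8 : 8 ≤ n * θ)
    (ht : t ≤ n * θ / 2) :
    1 / 2 ≤ ∑ k ∈ Finset.range (n + 1),
      (n.choose k : ℝ) * (θ ^ k * (1 - θ) ^ (n - k) * (if t ≤ (k : ℝ) then 1 else 0)) := by
  have h1θ : 0 ≤ 1 - θ := by linarith
  set w : ℕ → ℝ := fun k => (n.choose k : ℝ) * θ ^ k * (1 - θ) ^ (n - k) with hw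
  have hw0 : ∀ k, 0 ≤ w k := fun k =>
    mul_nonneg (mul_nonneg (Nat.cast_nonneg _) (pow_nonneg hθ0 _)) (pow_nonneg h1θ _)
  have hn : 0 < n := by
    rcases Nat.eq_zero_or_pos n with h | h
    · subst h; norm_num at h8
    · exact h
  have hnR : (0 : ℝ) < n := by exact_mod_cast hn
  have hne : (n : ℝ) ≠ 0 := hnR.ne'
  have hsum : ∑ k ∈ Finset.range (n + 1), w k = 1 := by
    have h := add_pow θ (1 - θ) n
    have h1 : θ + (1 - θ) = 1 := by ring
    rw [h1, one_pow] at h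
    rw [show (1 : ℝ) = ∑ m ∈ Finset.range (n + 1), θ ^ m * (1 - θ) ^ (n - m) * (n.choose m : ℝ)
      from h]
    exact Finset.sum_congr rfl fun k hk => by rw [hw]; ring
  have hb := bernstein.variance (n := n) hn.ne' ⟨θ, hθ0, hθ1⟩
  have h2 : ∑ k ∈ Finset.range (n + 1), (θ - (k : ℝ) / n) ^ 2 * w k = θ * (1 - θ) / n := by
    rw [← Fin.sum_univ_eq_sum_range (fun k => (θ - (k : ℝ) / n) ^ 2 * w k) (n + 1), ← hb]
    refine Finset.sum_congr rfl fun k _ => ?_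
    simp only [hw, bernstein.z, bernstein_apply]
  have hvar : ∑ k ∈ Finset.range (n + 1), w k * ((k : ℝ) - n * θ) ^ 2 = n * θ * (1 - θ) := by
    have h3 : ∀ k : ℕ, w k * ((k : ℝ) - n * θ) ^ 2 = ((θ - (k : ℝ) / n) ^ 2 * w k) * (n : ℝ) ^ 2 := by
      intro k
      have hx : ((k : ℝ) - n * θ) ^ 2 = (θ - (k : ℝ) / n) ^ 2 * (n : ℝ) ^ 2 := by
        field_simp
        ring
      rw [hx]; ring
    calc ∑ k ∈ Finset.range (n + 1), w k * ((k : ℝ) - n * θ) ^ 2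
        = ∑ k ∈ Finset.range (n + 1), ((θ - (k : ℝ) / n) ^ 2 * w k) * (n : ℝ) ^ 2 :=
          Finset.sum_congr rfl fun k _ => h3 k
      _ = (∑ k ∈ Finset.range (n + 1), (θ - (k : ℝ) / n) ^ 2 * w k) * (n : ℝ) ^ 2 :=
          (Finset.sum_mul _ _ _).symm
      _ = θ * (1 - θ) / n * (n : ℝ) ^ 2 := by rw [h2]
      _ = n * θ * (1 - θ) := by field_simp
  have hnθ : (0 : ℝ) < n * θ := by linarith
  have hhalf : (0 : ℝ) < n * θ / 2 := by linarith
  have hbad : ∑ k ∈ Finset.range (n + 1), w k * (if t ≤ (k : ℝ) then 0 else 1) ≤ 1 / 2 := by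
    have hterm : ∀ k ∈ Finset.range (n + 1),
        w k * (if t ≤ (k : ℝ) then 0 else 1)
          ≤ w k * (((k : ℝ) - n * θ) ^ 2 / (n * θ / 2) ^ 2) := by
      intro k _
      by_cases h : t ≤ (k : ℝ)
      · rw [if_pos h, mul_zero]
        positivity
      · rw [if_neg h, mul_one]
        push_neg at h
        have hk2 : (k : ℝ) ≤ n * θ / 2 := le_of_lt (lt_of_lt_of_le h ht)
        have hd : n * θ / 2 ≤ n * θ - (k : ℝ) := by linarith
        have hsq : (n * θ / 2) ^ 2 ≤ ((k : ℝ) - n * θ) ^ 2 := by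
          have h0 : (0 : ℝ) ≤ n * θ / 2 := le_of_lt hhalf
          calc (n * θ / 2) ^ 2 ≤ (n * θ - (k : ℝ)) ^ 2 := by nlinarith
            _ = ((k : ℝ) - n * θ) ^ 2 := by ring
        have hone : (1 : ℝ) ≤ ((k : ℝ) - n * θ) ^ 2 / (n * θ / 2) ^ 2 :=
          (one_le_div (by positivity)).2 hsq
        nlinarith [hw0 k]
    calc ∑ k ∈ Finset.range (n + 1), w k * (if t ≤ (k : ℝ) then 0 else 1)
        ≤ ∑ k ∈ Finset.range (n + 1), w k * (((k : ℝ) - n * θ) ^ 2 / (n * θ / 2) ^ 2) :=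
          Finset.sum_le_sum hterm
      _ = (∑ k ∈ Finset.range (n + 1), w k * ((k : ℝ) - n * θ) ^ 2) / (n * θ / 2) ^ 2 := by
          rw [Finset.sum_div]
          exact Finset.sum_congr rfl fun k _ => by ring
      _ = n * θ * (1 - θ) / (n * θ / 2) ^ 2 := by rw [hvar]
      _ ≤ 1 / 2 := by
          rw [div_le_iff₀ (by positivity)]
          nlinarith
  have hrw : ∀ k ∈ Finset.range (n + 1),
      (n.choose k : ℝ) * (θ ^ k * (1 - θ) ^ (n - k) * (if t ≤ (k : ℝ) then 1 else 0))
        = w k - w k * (if t ≤ (k : ℝ) then 0 else 1) := by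
    intro k _
    rw [hw]
    by_cases h : t ≤ (k : ℝ)
    · rw [if_pos h, if_pos h]; ring
    · rw [if_neg h, if_neg h]; ring
  rw [Finset.sum_congr rfl hrw, Finset.sum_sub_distrib, hsum]
  linarith

set_option maxHeartbeats 2000000 in
theorem stmt_2 :
    ∃ c₀ : ℕ, 37 ≤ c₀ ∧
      ∀ c : ℕ, c₀ ≤ c →
      ∀ p : ℝ, p ∈ Set.Ioo (0 : ℝ) 1 →
      ∀ M : ℕ, (M : ℝ) = (c : ℝ) / p →
      ∀ (α : Type) (B B' : Finset α), Disjoint B B' → B.card = M → B'.card = M →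
      ∀ S : Finset α, S ⊆ B → S.Nonempty →
        (1 : ℝ) / 2 ≤ bipProb (S ×ˢ B') p
          (fun T => min (2 * (S.card : ℝ)) ((M : ℝ) / 3) ≤ (coveredCount B' T : ℝ)) := by
  classical
  refine ⟨37, le_refl 37, ?_⟩
  intro c hc p hp M hM α B B' hBB' hB hB' S hSB hSne
  obtain ⟨hp0, hp1⟩ := hp
  set u : ℕ := S.card with hu
  set q : ℝ := (1 - p) ^ u with hqdef
  set θ : ℝ := 1 - q with hθdef
  set t : ℝ := min (2 * (u : ℝ)) ((M : ℝ) / 3) with htdef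
  clear_value t θ q
  -- numeric facts
  have hu1 : 1 ≤ u := Finset.card_pos.2 hSne
  have huR : (1 : ℝ) ≤ u := by exact_mod_cast hu1
  have hcR : (37 : ℝ) ≤ c := by exact_mod_cast hc
  have hMp : (M : ℝ) * p = c := by
    rw [hM]; field_simp
  have hM0 : (0 : ℝ) ≤ M := Nat.cast_nonneg M
  have hM37 : (37 : ℝ) ≤ M := by nlinarith
  have h1p : 0 < 1 - p := by linarith
  have hq0 : 0 ≤ q := by rw [hqdef]; exact pow_nonneg h1p.le u
  have hq1 : q ≤ 1 := by rw [hqdef]; exact pow_le_one₀ h1p.le (by linarith)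
  have hθ0 : 0 ≤ θ := by rw [hθdef]; linarith
  have hθ1 : θ ≤ 1 := by rw [hθdef]; linarith
  have hup0 : (0 : ℝ) ≤ (u : ℝ) * p := by positivity
  -- q * (1 + u p) ≤ 1
  have hbound : q * (1 + (u : ℝ) * p) ≤ 1 := by
    have hx0 : (0 : ℝ) ≤ p / (1 - p) := by positivity
    have hkey := one_add_mul_le_pow (a := p / (1 - p)) (by linarith) u
    have he : 1 + p / (1 - p) = 1 / (1 - p) := by field_simp; ring
    have h2 : q * (1 + (u : ℝ) * (p / (1 - p))) ≤ q * (1 / (1 - p)) ^ u := by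
      rw [← he] at *
      exact mul_le_mul_of_nonneg_left hkey hq0
    have h3 : q * (1 / (1 - p)) ^ u = 1 := by
      rw [hqdef, ← mul_pow]
      rw [mul_one_div, div_self h1p.ne', one_pow]
    have h4 : (u : ℝ) * p ≤ (u : ℝ) * (p / (1 - p)) := by
      have : p ≤ p / (1 - p) := by
        rw [le_div_iff₀ h1p]
        nlinarith
      nlinarith
    nlinarith
  have hθmin : min ((u : ℝ) * p) 2 / 3 ≤ θ := by
    rcases le_total ((u : ℝ) * p) 2 with h | h
    · rw [min_eq_left h, hθdef]
      nlinarith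
    · rw [min_eq_right h, hθdef]
      nlinarith
  have hcu : (c : ℝ) * u = (M : ℝ) * ((u : ℝ) * p) := by rw [← hMp]; ring
  have hMθ : min ((c : ℝ) * u) (2 * M) / 3 ≤ (M : ℝ) * θ := by
    have h1 : (M : ℝ) * (min ((u : ℝ) * p) 2 / 3) ≤ (M : ℝ) * θ :=
      mul_le_mul_of_nonneg_left hθmin hM0
    rcases le_total ((u : ℝ) * p) 2 with h | h
    · have h2 : (M : ℝ) * ((u : ℝ) * p) ≤ (M : ℝ) * 2 := mul_le_mul_of_nonneg_left h hM0
      rw [min_eq_left h] at h1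
      rw [min_eq_left (by linarith : (c : ℝ) * u ≤ 2 * M)]
      linarith
    · have h2 : (M : ℝ) * 2 ≤ (M : ℝ) * ((u : ℝ) * p) := mul_le_mul_of_nonneg_left h hM0
      rw [min_eq_right h] at h1
      have h3 := min_le_right ((c : ℝ) * u) (2 * (M : ℝ))
      linarith
  have hcu37 : (37 : ℝ) ≤ (c : ℝ) * u := by
    have h1 : (37 : ℝ) * 1 ≤ (c : ℝ) * (u : ℝ) :=
      mul_le_mul hcR huR (by norm_num) (by linarith)
    linarith
  have hminlow : (37 : ℝ) ≤ min ((c : ℝ) * u) (2 * M) := by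
    apply le_min
    · linarith
    · linarith
  have h8 : 8 ≤ (M : ℝ) * θ := by linarith
  have ht : t ≤ (M : ℝ) * θ / 2 := by
    have h1 : t ≤ min ((c : ℝ) * u) (2 * M) / 6 := by
      rw [htdef]
      have h2 : min ((c : ℝ) * u) (2 * M) / 6 = min ((c : ℝ) * u / 6) ((M : ℝ) / 3) := by
        rw [← min_div_div_right (by norm_num : (0:ℝ) ≤ 6)]
        congr 1
        ring
      rw [h2]
      apply min_le_min
      · have h3 : (37 : ℝ) * u ≤ (c : ℝ) * u := mul_le_mul_of_nonneg_right hcR (by linarith)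
        linarith
      · exact le_rfl
    linarith
  -- rewrite bipProb as a sum with indicator
  have hbip : bipProb (S ×ˢ B') p
      (fun T => t ≤ (coveredCount B' T : ℝ))
      = ∑ T ∈ (S ×ˢ B').powerset, p ^ T.card * (1 - p) ^ ((S ×ˢ B').card - T.card) *
          (if t ≤ ((coveredCount B' T : ℕ) : ℝ) then 1 else 0) := by
    rw [bipProb, Finset.sum_filter]
    refine Finset.sum_congr rfl fun T _ => ?_
    by_cases h : t ≤ (coveredCount B' T : ℝ)
    · rw [if_pos h, if_pos h, mul_one]
    · rw [if_neg h, if_neg h, mul_zero]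
  rw [hbip, bip_key p S B' (fun k => if t ≤ (k : ℝ) then 1 else 0)]
  have hgroup := Finset.sum_powerset_apply_card
    (f := fun k => (1 - (1 - p) ^ S.card) ^ k * ((1 - p) ^ S.card) ^ (B'.card - k) *
      (if t ≤ (k : ℝ) then 1 else 0)) (x := B')
  rw [hgroup, hB']
  have hfin : ∀ k ∈ Finset.range (M + 1),
      M.choose k • ((1 - (1 - p) ^ S.card) ^ k * ((1 - p) ^ S.card) ^ (M - k) *
        (if t ≤ (k : ℝ) then 1 else 0))
      = (M.choose k : ℝ) * (θ ^ k * (1 - θ) ^ (M - k) * (if t ≤ (k : ℝ) then 1 else 0)) := by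
    intro k _
    rw [nsmul_eq_mul]
    have h1 : (1 : ℝ) - θ = q := by rw [hθdef]; ring
    rw [h1, hθdef, hqdef, hu]
  rw [Finset.sum_congr rfl hfin]
  exact bip_cheb hθ0 hθ1 h8 ht
end
end

section
/- There is a constant C > 0 such that for every positive integer n and every p ∈ (0,1), the optimal deficiency satisfies ℓ(n,p) ≤ C·(n/p)·log(2/p). -/
open Finset

attribute [local instance] Classical.propDecidable

noncomputable section

namespace StraightAux


variable {α : Type*} [DecidableEq α]

/-- weight of subset S of A -/
def wt (p : ℝ) (A S : Finset α) : ℝ := p ^ S.card * (1 - p) ^ (A.card - S.card)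

lemma sum_wt (p : ℝ) (A : Finset α) : ∑ S ∈ A.powerset, wt p A S = 1 := by
  induction A using Finset.induction_on with
  | empty => simp [wt]
  | insert a s ha ih =>
    rw [Finset.sum_powerset_insert ha]
    have h1 : ∀ S ∈ s.powerset, wt p (insert a s) S = (1 - p) * wt p s S := by
      intro S hS
      have hc : S.card ≤ s.card := Finset.card_le_card (Finset.mem_powerset.1 hS)
      have : (insert a s).card = s.card + 1 := Finset.card_insert_of_notMem ha
      simp only [wt, this]
      have : s.card + 1 - S.card = (s.card - S.card) + 1 := by omega
      rw [this, pow_succ]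
      ring
    have h2 : ∀ S ∈ s.powerset, wt p (insert a s) (insert a S) = p * wt p s S := by
      intro S hS
      have hSs := Finset.mem_powerset.1 hS
      have haS : a ∉ S := fun h => ha (hSs h)
      have hc : S.card ≤ s.card := Finset.card_le_card hSs
      have hA : (insert a s).card = s.card + 1 := Finset.card_insert_of_notMem ha
      have hS' : (insert a S).card = S.card + 1 := Finset.card_insert_of_notMem haS
      simp only [wt, hA, hS']
      have : s.card + 1 - (S.card + 1) = s.card - S.card := by omega
      rw [this, pow_succ]
      ring
    rw [Finset.sum_congr rfl h1, Finset.sum_congr rfl h2, ← Finset.mul_sum, ← Finset.mul_sum, ih]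
    ring

lemma sum_wt_disj (p : ℝ) {A T : Finset α} (hT : T ⊆ A) :
    ∑ S ∈ A.powerset.filter (fun S => Disjoint S T), wt p A S = (1 - p) ^ T.card := by
  have hset : A.powerset.filter (fun S => Disjoint S T) = (A \ T).powerset := by
    ext S
    simp [Finset.mem_powerset, Finset.subset_sdiff, and_comm]
  rw [hset]
  have h1 : ∀ S ∈ (A \ T).powerset, wt p A S = (1 - p) ^ T.card * wt p (A \ T) S := by
    intro S hS
    have hS' := Finset.mem_powerset.1 hS
    have hc : S.card ≤ (A \ T).card := Finset.card_le_card hS'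
    have hcard : (A \ T).card = A.card - T.card := Finset.card_sdiff_of_subset hT
    have hTA : T.card ≤ A.card := Finset.card_le_card hT
    simp only [wt]
    have : A.card - S.card = T.card + ((A \ T).card - S.card) := by omega
    rw [this, pow_add]
    ring
  rw [Finset.sum_congr rfl h1, ← Finset.mul_sum, sum_wt]
  ring

lemma sum_wt_ite (p : ℝ) {A T : Finset α} (hT : T ⊆ A) (c₀ c₁ : ℝ) :
    ∑ S ∈ A.powerset, wt p A S * (if Disjoint S T then c₀ else c₁)
      = (1 - p) ^ T.card * c₀ + (1 - (1 - p) ^ T.card) * c₁ := by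
  have key : ∀ S : Finset α, wt p A S * (if Disjoint S T then c₀ else c₁)
      = wt p A S * c₁ + (if Disjoint S T then wt p A S * (c₀ - c₁) else 0) := by
    intro S
    by_cases h : Disjoint S T <;> simp [h] <;> ring
  rw [Finset.sum_congr rfl (fun S _ => key S), Finset.sum_add_distrib]
  rw [← Finset.sum_filter, ← Finset.sum_mul, ← Finset.sum_mul, sum_wt, sum_wt_disj p hT]
  ring

lemma sum_wt_union (p : ℝ) {F₁ F₂ : Finset α} (h : Disjoint F₁ F₂) (G : Finset α → ℝ) :
    ∑ S ∈ (F₁ ∪ F₂).powerset, wt p (F₁ ∪ F₂) S * G S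
      = ∑ S₁ ∈ F₁.powerset, ∑ S₂ ∈ F₂.powerset, wt p F₁ S₁ * wt p F₂ S₂ * G (S₁ ∪ S₂) := by
  rw [← Finset.sum_product']
  apply Finset.sum_nbij' (i := fun S => (S ∩ F₁, S ∩ F₂)) (j := fun P => P.1 ∪ P.2)
  · intro S hS
    simp only [Finset.mem_product, Finset.mem_powerset]
    exact ⟨Finset.inter_subset_right, Finset.inter_subset_right⟩
  · intro P hP
    simp only [Finset.mem_product, Finset.mem_powerset] at hP ⊢
    exact Finset.union_subset_union hP.1 hP.2
  · intro S hS
    rw [Finset.mem_powerset] at hS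
    rw [← Finset.inter_union_distrib_left, Finset.inter_eq_left.2 hS]
  · intro P hP
    simp only [Finset.mem_product, Finset.mem_powerset] at hP
    obtain ⟨h1, h2⟩ := hP
    have e1 : (P.1 ∪ P.2) ∩ F₁ = P.1 := by
      have : P.2 ∩ F₁ = ∅ := Finset.disjoint_iff_inter_eq_empty.1
        (Finset.disjoint_of_subset_left h2 h.symm)
      rw [Finset.union_inter_distrib_right, Finset.inter_eq_left.2 h1, this, Finset.union_empty]
    have e2 : (P.1 ∪ P.2) ∩ F₂ = P.2 := by
      have : P.1 ∩ F₂ = ∅ := Finset.disjoint_iff_inter_eq_empty.1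
        (Finset.disjoint_of_subset_left h1 h)
      rw [Finset.union_inter_distrib_right, Finset.inter_eq_left.2 h2, this, Finset.empty_union]
    rw [e1, e2]
  · intro S hS
    rw [Finset.mem_powerset] at hS
    have hd : Disjoint (S ∩ F₁) (S ∩ F₂) :=
      Finset.disjoint_of_subset_left Finset.inter_subset_right
        (Finset.disjoint_of_subset_right Finset.inter_subset_right h)
    have hu : S ∩ F₁ ∪ S ∩ F₂ = S := by
      rw [← Finset.inter_union_distrib_left, Finset.inter_eq_left.2 hS]
    have hcard : S.card = (S ∩ F₁).card + (S ∩ F₂).card := by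
      rw [← Finset.card_union_of_disjoint hd, hu]
    have hcardU : (F₁ ∪ F₂).card = F₁.card + F₂.card := Finset.card_union_of_disjoint h
    have hc1 : (S ∩ F₁).card ≤ F₁.card := Finset.card_le_card Finset.inter_subset_right
    have hc2 : (S ∩ F₂).card ≤ F₂.card := Finset.card_le_card Finset.inter_subset_right
    simp only [wt, hu]
    rw [hcard, hcardU]
    have : F₁.card + F₂.card - ((S ∩ F₁).card + (S ∩ F₂).card)
        = (F₁.card - (S ∩ F₁).card) + (F₂.card - (S ∩ F₂).card) := by omega
    rw [this, pow_add, pow_add]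
    ring



variable {n : ℕ}

def pathFrom (S : Finset (Sym2 (Fin n))) (v j : Fin n) : Prop :=
  HasStraightPath (SimpleGraph.fromEdgeSet (S : Set (Sym2 (Fin n)))) v j

lemma pathFrom_self (S : Finset (Sym2 (Fin n))) (j : Fin n) : pathFrom S j j := by
  refine ⟨0, fun _ => j, rfl, rfl, ?_, fun t => t.elim0⟩
  intro a b hab
  have h1 := b.isLt
  have h2 := Fin.lt_def.mp hab
  omega

lemma pathFrom_le {S : Finset (Sym2 (Fin n))} {v j : Fin n} (h : pathFrom S v j) : v ≤ j := by
  obtain ⟨m, f, h0, hl, hmono, -⟩ := h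
  rw [← h0, ← hl]
  exact hmono.monotone (Fin.zero_le _)

/-- monotonicity -/
lemma pathFrom_mono {S S' : Finset (Sym2 (Fin n))} (hss : S' ⊆ S) {v j : Fin n}
    (h : pathFrom S' v j) : pathFrom S v j := by
  obtain ⟨m, f, h0, hl, hmono, hadj⟩ := h
  refine ⟨m, f, h0, hl, hmono, fun t => ?_⟩
  have := hadj t
  rw [SimpleGraph.fromEdgeSet_adj] at this ⊢
  exact ⟨hss this.1, this.2⟩

/-- locality: edges incident to a vertex below `v` are irrelevant -/
lemma pathFrom_local {S S' : Finset (Sym2 (Fin n))} {k : Fin n} (hss : S' ⊆ S)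
    (hk : ∀ e ∈ S, e ∉ S' → (k ∈ e)) {v j : Fin n} (hv : k < v) :
    pathFrom S v j ↔ pathFrom S' v j := by
  constructor
  · rintro ⟨m, f, h0, hl, hmono, hadj⟩
    refine ⟨m, f, h0, hl, hmono, fun t => ?_⟩
    have hin : ∀ i : Fin (m+1), k < f i := by
      intro i
      calc k < v := hv
        _ = f 0 := h0.symm
        _ ≤ f i := hmono.monotone (Fin.zero_le _)
    have := hadj t
    rw [SimpleGraph.fromEdgeSet_adj] at this ⊢
    refine ⟨?_, this.2⟩
    by_contra hmem
    have hmem' := hk _ this.1 hmem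
    rw [Sym2.mem_iff] at hmem'
    rcases hmem' with h' | h'
    · exact absurd h' (ne_of_lt (hin _))
    · exact absurd h' (ne_of_lt (hin _))
  · exact pathFrom_mono hss

/-- first-edge decomposition -/
lemma pathFrom_iff_first {S : Finset (Sym2 (Fin n))} {k j : Fin n} (hkj : k < j) :
    pathFrom S k j ↔ ∃ v : Fin n, k < v ∧ s(k, v) ∈ S ∧ pathFrom S v j := by
  constructor
  · rintro ⟨m, f, h0, hl, hmono, hadj⟩
    cases m with
    | zero =>
      exfalso
      have : k = j := by rw [← h0, ← hl]; rfl
      exact absurd this (ne_of_lt hkj)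
    | succ m' =>
      refine ⟨f 1, ?_, ?_, ?_⟩
      · rw [← h0]
        exact hmono (by simp [Fin.lt_def])
      · have := hadj 0
        rw [SimpleGraph.fromEdgeSet_adj] at this
        have e0 : ((0 : Fin (m'+1)).castSucc) = (0 : Fin (m'+2)) := rfl
        have e1 : ((0 : Fin (m'+1)).succ) = (1 : Fin (m'+2)) := rfl
        rw [e0, e1, h0] at this
        exact this.1
      · refine ⟨m', f ∘ Fin.succ, rfl, ?_, ?_, ?_⟩
        · show f (Fin.last m').succ = j
          rw [Fin.succ_last, hl]
        · exact hmono.comp Fin.strictMono_succ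
        · intro t
          have := hadj t.succ
          have e : (t.succ).castSucc = (t.castSucc).succ := (Fin.succ_castSucc t).symm
          rw [e] at this
          exact this
  · rintro ⟨v, hkv, hedge, m, f, h0, hl, hmono, hadj⟩
    refine ⟨m + 1, Fin.cons k f, Fin.cons_zero _ _, ?_, ?_, ?_⟩
    · rw [← Fin.succ_last, Fin.cons_succ, hl]
    · rw [Fin.strictMono_iff_lt_succ]
      intro i
      induction i using Fin.cases with
      | zero =>
        simp only [Fin.castSucc_zero, Fin.cons_zero, Fin.cons_succ, h0]
        exact hkv
      | succ t =>
        rw [← Fin.succ_castSucc, Fin.cons_succ, Fin.cons_succ]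
        exact (Fin.strictMono_iff_lt_succ.1 hmono) t
    · intro t
      induction t using Fin.cases with
      | zero =>
        simp only [Fin.castSucc_zero, Fin.cons_zero, Fin.cons_succ, h0,
          SimpleGraph.fromEdgeSet_adj]
        exact ⟨hedge, ne_of_lt hkv⟩
      | succ t' =>
        rw [← Fin.succ_castSucc, Fin.cons_succ, Fin.cons_succ]
        exact hadj t'


def EE (n : ℕ) : Finset (Sym2 (Fin n)) := (⊤ : SimpleGraph (Fin n)).edgeFinset

lemma mem_EE {n : ℕ} {e : Sym2 (Fin n)} : e ∈ EE n ↔ ¬ e.IsDiag := by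
  simp [EE, SimpleGraph.mem_edgeFinset, SimpleGraph.edgeSet_top]

/-- expectation over random subgraph of K_n -/
def ex (n : ℕ) (p : ℝ) (f : Finset (Sym2 (Fin n)) → ℝ) : ℝ :=
  ∑ S ∈ (EE n).powerset, wt p (EE n) S * f S

lemma wt_nonneg {α : Type*} {p : ℝ} (hp0 : 0 ≤ p) (hp1 : p ≤ 1) (A S : Finset α) :
    0 ≤ wt p A S :=
  mul_nonneg (pow_nonneg hp0 _) (pow_nonneg (by linarith) _)

lemma ex_const (n : ℕ) (p : ℝ) (c : ℝ) : ex n p (fun _ => c) = c := by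
  unfold ex
  rw [← Finset.sum_mul, sum_wt, one_mul]

lemma ex_mono {n : ℕ} {p : ℝ} (hp0 : 0 ≤ p) (hp1 : p ≤ 1) {f g : Finset (Sym2 (Fin n)) → ℝ}
    (h : ∀ S, f S ≤ g S) : ex n p f ≤ ex n p g := by
  apply Finset.sum_le_sum
  intro S _
  exact mul_le_mul_of_nonneg_left (h S) (wt_nonneg hp0 hp1 _ _)

/-- number of vertices `v` with `k ≤ v` from which `j` is reachable -/
def RR {n : ℕ} (S : Finset (Sym2 (Fin n))) (j : Fin n) (k : ℕ) : ℕ :=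
  (Finset.univ.filter (fun v : Fin n => k ≤ (v : ℕ) ∧ pathFrom S v j)).card

lemma RR_self {n : ℕ} (S : Finset (Sym2 (Fin n))) (j : Fin n) : RR S j (j : ℕ) = 1 := by
  have : (Finset.univ.filter (fun v : Fin n => (j : ℕ) ≤ (v : ℕ) ∧ pathFrom S v j)) = {j} := by
    ext v
    simp only [Finset.mem_filter, Finset.mem_univ, true_and, Finset.mem_singleton]
    constructor
    · rintro ⟨h1, h2⟩
      have := pathFrom_le h2
      exact le_antisymm this (by rwa [Fin.le_def])
    · rintro rfl
      exact ⟨le_refl _, pathFrom_self S _⟩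
  rw [RR, this, Finset.card_singleton]

lemma RR_pos {n : ℕ} (S : Finset (Sym2 (Fin n))) (j : Fin n) {k : ℕ} (hk : k ≤ (j : ℕ)) :
    1 ≤ RR S j k := by
  rw [RR]
  exact Finset.card_pos.mpr ⟨j, Finset.mem_filter.2 ⟨Finset.mem_univ _, hk, pathFrom_self S j⟩⟩

lemma RR_le {n : ℕ} (S : Finset (Sym2 (Fin n))) (j : Fin n) (k : ℕ) : RR S j k ≤ n := by
  calc RR S j k ≤ (Finset.univ : Finset (Fin n)).card := Finset.card_le_card (Finset.filter_subset _ _)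
    _ = n := Finset.card_univ.trans (Fintype.card_fin n)

lemma RR_succ {n : ℕ} (S : Finset (Sym2 (Fin n))) (j : Fin n) (u : Fin n) :
    RR S j (u : ℕ) = RR S j ((u : ℕ) + 1) + (if pathFrom S u j then 1 else 0) := by
  classical
  have hsplit : (Finset.univ.filter (fun v : Fin n => (u : ℕ) ≤ (v : ℕ) ∧ pathFrom S v j))
      = (Finset.univ.filter (fun v : Fin n => (u : ℕ) + 1 ≤ (v : ℕ) ∧ pathFrom S v j))
        ∪ (Finset.univ.filter (fun v : Fin n => v = u ∧ pathFrom S v j)) := by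
    ext v
    simp only [Finset.mem_filter, Finset.mem_univ, true_and, Finset.mem_union]
    constructor
    · rintro ⟨h1, h2⟩
      rcases Nat.lt_or_ge (u : ℕ) (v : ℕ) with h | h
      · exact Or.inl ⟨h, h2⟩
      · exact Or.inr ⟨Fin.ext (le_antisymm h h1), h2⟩
    · rintro (⟨h1, h2⟩ | ⟨rfl, h2⟩)
      · exact ⟨by omega, h2⟩
      · exact ⟨le_refl _, h2⟩
  have hdisj : Disjoint
      (Finset.univ.filter (fun v : Fin n => (u : ℕ) + 1 ≤ (v : ℕ) ∧ pathFrom S v j))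
      (Finset.univ.filter (fun v : Fin n => v = u ∧ pathFrom S v j)) := by
    rw [Finset.disjoint_left]
    intro v hv hv'
    simp only [Finset.mem_filter] at hv hv'
    rcases hv'.2.1 with rfl
    omega
  rw [RR, hsplit, Finset.card_union_of_disjoint hdisj]
  congr 1
  by_cases h : pathFrom S u j
  · have : (Finset.univ.filter (fun v : Fin n => v = u ∧ pathFrom S v j)) = {u} := by
      ext v
      simp only [Finset.mem_filter, Finset.mem_univ, true_and, Finset.mem_singleton]
      constructor
      · rintro ⟨rfl, -⟩; rfl
      · rintro rfl; exact ⟨rfl, h⟩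
    simp [this, h]
  · have : (Finset.univ.filter (fun v : Fin n => v = u ∧ pathFrom S v j)) = ∅ := by
      ext v
      simp only [Finset.mem_filter, Finset.mem_univ, true_and, Finset.notMem_empty,
        iff_false, not_and]
      rintro rfl
      exact h
    simp [this, h]

/-- the set of "useful" star edges at `u` towards `j` given background `S₁` -/
def Tset {n : ℕ} (S₁ : Finset (Sym2 (Fin n))) (j u : Fin n) : Finset (Sym2 (Fin n)) :=
  (Finset.univ.filter (fun v : Fin n => (u : ℕ) + 1 ≤ (v : ℕ) ∧ pathFrom S₁ v j)).image
    (fun v => s(u, v))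

lemma Tset_card {n : ℕ} (S₁ : Finset (Sym2 (Fin n))) (j u : Fin n) :
    (Tset S₁ j u).card = RR S₁ j ((u : ℕ) + 1) := by
  rw [Tset, RR, Finset.card_image_of_injOn]
  intro v hv w hw h
  exact Sym2.congr_right.1 h

lemma master {n : ℕ} (p : ℝ) (j u : Fin n) (huj : u < j) (g₀ g₁ : ℕ → ℝ) :
    ex n p (fun S => if pathFrom S u j then g₁ (RR S j ((u : ℕ) + 1))
        else g₀ (RR S j ((u : ℕ) + 1)))
    = ex n p (fun S => (1 - p) ^ (RR S j ((u : ℕ) + 1)) * g₀ (RR S j ((u : ℕ) + 1))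
        + (1 - (1 - p) ^ (RR S j ((u : ℕ) + 1))) * g₁ (RR S j ((u : ℕ) + 1))) := by
  classical
  set F₂ := (EE n).filter (fun e => u ∈ e) with hF₂
  set F₁ := (EE n).filter (fun e => ¬ u ∈ e) with hF₁
  have hdisj : Disjoint F₁ F₂ := by
    rw [Finset.disjoint_left]
    intro e he he'
    rw [hF₁, Finset.mem_filter] at he
    rw [hF₂, Finset.mem_filter] at he'
    exact he.2 he'.2
  have hE : EE n = F₁ ∪ F₂ := by
    rw [hF₁, hF₂, Finset.union_comm, Finset.filter_union_filter_not_eq]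
  have keyR : ∀ S₁ S₂ : Finset (Sym2 (Fin n)), S₁ ⊆ F₁ → S₂ ⊆ F₂ →
      RR (S₁ ∪ S₂) j ((u : ℕ) + 1) = RR S₁ j ((u : ℕ) + 1) := by
    intro S₁ S₂ h1 h2
    unfold RR
    congr 1
    apply Finset.filter_congr
    intro v _
    have hk : ∀ e ∈ S₁ ∪ S₂, e ∉ S₁ → u ∈ e := by
      intro e he hne
      rcases Finset.mem_union.1 he with h | h
      · exact absurd h hne
      · exact (Finset.mem_filter.1 (h2 h)).2
    constructor
    · rintro ⟨hv1, hv2⟩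
      refine ⟨hv1, ?_⟩
      rw [← pathFrom_local Finset.subset_union_left hk (show u < v from Fin.lt_def.2 (by omega))]
      exact hv2
    · rintro ⟨hv1, hv2⟩
      refine ⟨hv1, ?_⟩
      rw [pathFrom_local Finset.subset_union_left hk (show u < v from Fin.lt_def.2 (by omega))]
      exact hv2
  have keyPath : ∀ S₁ S₂ : Finset (Sym2 (Fin n)), S₁ ⊆ F₁ → S₂ ⊆ F₂ →
      (pathFrom (S₁ ∪ S₂) u j ↔ ¬ Disjoint S₂ (Tset S₁ j u)) := by
    intro S₁ S₂ h1 h2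
    have hk : ∀ e ∈ S₁ ∪ S₂, e ∉ S₁ → u ∈ e := by
      intro e he hne
      rcases Finset.mem_union.1 he with h | h
      · exact absurd h hne
      · exact (Finset.mem_filter.1 (h2 h)).2
    rw [pathFrom_iff_first huj, Finset.not_disjoint_iff]
    constructor
    · rintro ⟨v, hv, he, hp⟩
      refine ⟨s(u, v), ?_, ?_⟩
      · rcases Finset.mem_union.1 he with h | h
        · exact absurd (Finset.mem_filter.1 (h1 h)).2 (by simp [Sym2.mem_mk_left])
        · exact h
      · refine Finset.mem_image.2 ⟨v, Finset.mem_filter.2 ⟨Finset.mem_univ _, ?_, ?_⟩, rfl⟩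
        · rw [Fin.lt_def] at hv; omega
        · rw [← pathFrom_local Finset.subset_union_left hk hv]
          exact hp
    · rintro ⟨e, heS₂, heT⟩
      obtain ⟨v, hv, rfl⟩ := Finset.mem_image.1 heT
      obtain ⟨-, hv1, hv2⟩ := Finset.mem_filter.1 hv
      have huv : u < v := Fin.lt_def.2 (by omega)
      exact ⟨v, huv, Finset.mem_union_right _ heS₂, pathFrom_mono Finset.subset_union_left hv2⟩
  have keyTF₂ : ∀ S₁ : Finset (Sym2 (Fin n)), Tset S₁ j u ⊆ F₂ := by
    intro S₁ e he
    obtain ⟨v, hv, rfl⟩ := Finset.mem_image.1 he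
    obtain ⟨-, hv1, -⟩ := Finset.mem_filter.1 hv
    rw [hF₂, Finset.mem_filter]
    refine ⟨mem_EE.2 ?_, Sym2.mem_mk_left _ _⟩
    rw [Sym2.mk_isDiag_iff]
    intro h
    rw [h] at hv1
    omega
  unfold ex
  rw [hE, sum_wt_union p hdisj, sum_wt_union p hdisj]
  apply Finset.sum_congr rfl
  intro S₁ hS₁
  rw [Finset.mem_powerset] at hS₁
  have hL : ∀ S₂ ∈ F₂.powerset,
      wt p F₁ S₁ * wt p F₂ S₂ * (if pathFrom (S₁ ∪ S₂) u j
          then g₁ (RR (S₁ ∪ S₂) j ((u : ℕ) + 1)) else g₀ (RR (S₁ ∪ S₂) j ((u : ℕ) + 1)))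
      = wt p F₁ S₁ * (wt p F₂ S₂ * (if Disjoint S₂ (Tset S₁ j u)
          then g₀ (RR S₁ j ((u : ℕ) + 1)) else g₁ (RR S₁ j ((u : ℕ) + 1)))) := by
    intro S₂ hS₂
    rw [Finset.mem_powerset] at hS₂
    rw [keyR S₁ S₂ hS₁ hS₂]
    by_cases hd : Disjoint S₂ (Tset S₁ j u)
    · have : ¬ pathFrom (S₁ ∪ S₂) u j := by
        rw [keyPath S₁ S₂ hS₁ hS₂]; exact not_not_intro hd
      rw [if_neg this, if_pos hd]; ring
    · have : pathFrom (S₁ ∪ S₂) u j := (keyPath S₁ S₂ hS₁ hS₂).2 hd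
      rw [if_pos this, if_neg hd]; ring
  have hR : ∀ S₂ ∈ F₂.powerset,
      wt p F₁ S₁ * wt p F₂ S₂ * ((1 - p) ^ (RR (S₁ ∪ S₂) j ((u : ℕ) + 1))
            * g₀ (RR (S₁ ∪ S₂) j ((u : ℕ) + 1))
          + (1 - (1 - p) ^ (RR (S₁ ∪ S₂) j ((u : ℕ) + 1)))
            * g₁ (RR (S₁ ∪ S₂) j ((u : ℕ) + 1)))
      = (wt p F₁ S₁ * ((1 - p) ^ (RR S₁ j ((u : ℕ) + 1)) * g₀ (RR S₁ j ((u : ℕ) + 1))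
          + (1 - (1 - p) ^ (RR S₁ j ((u : ℕ) + 1))) * g₁ (RR S₁ j ((u : ℕ) + 1))))
        * wt p F₂ S₂ := by
    intro S₂ hS₂
    rw [Finset.mem_powerset] at hS₂
    rw [keyR S₁ S₂ hS₁ hS₂]
    ring
  rw [Finset.sum_congr rfl hL, Finset.sum_congr rfl hR, ← Finset.mul_sum, ← Finset.mul_sum,
    sum_wt, sum_wt_ite p (keyTF₂ S₁), Tset_card, mul_one]

/-- the potential function -/
noncomputable def Phi (p : ℝ) (N m : ℕ) : ℝ :=
  ∑ i ∈ Finset.Ico m (N + 1), (1 - p) ^ i / (1 - (1 - p) ^ i)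

lemma Phi_nonneg {p : ℝ} (hp0 : 0 < p) (hp1 : p < 1) (N m : ℕ) : 0 ≤ Phi p N m := by
  apply Finset.sum_nonneg
  intro i _
  have hx0 : (0:ℝ) ≤ 1 - p := by linarith
  have hx1 : (1 - p) ^ i ≤ 1 := pow_le_one₀ hx0 (by linarith)
  exact div_nonneg (pow_nonneg hx0 _) (by linarith)

lemma Phi_diff {p : ℝ} (N m : ℕ) (hm : m ≤ N) :
    Phi p N m = (1 - p) ^ m / (1 - (1 - p) ^ m) + Phi p N (m + 1) := by
  rw [Phi, Phi, Finset.sum_eq_sum_Ico_succ_bot (by omega : m < N + 1)]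

lemma Phi_step {p : ℝ} (hp0 : 0 < p) (hp1 : p < 1) {N m : ℕ} (hm1 : 1 ≤ m) (hmN : m ≤ N) :
    (1 - p) ^ m + ((1 - p) ^ m * Phi p N m + (1 - (1 - p) ^ m) * Phi p N (m + 1))
      ≤ Phi p N m := by
  have hx0 : (0:ℝ) ≤ 1 - p := by linarith
  have hxm : (1 - p) ^ m < 1 := pow_lt_one₀ hx0 (by linarith) (by omega)
  have hd : (0:ℝ) < 1 - (1 - p) ^ m := by linarith
  rw [Phi_diff N m hmN]
  have key : (1 - p) ^ m + (1 - p) ^ m * ((1 - p) ^ m / (1 - (1 - p) ^ m))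
      = (1 - p) ^ m / (1 - (1 - p) ^ m) := by
    field_simp
    ring
  nlinarith [key]

lemma term_bound {y : ℝ} (hy0 : 0 ≤ y) (hy1 : y < 1) {m : ℕ} (hm : 1 ≤ m) :
    y ^ (2 * m) / (1 - y ^ (2 * m)) ≤ 2 / (1 - y ^ 2) * (y ^ m / m) := by
  have h2m1 : y ^ (2 * m) < 1 := pow_lt_one₀ hy0 hy1 (by omega)
  have hden : (0:ℝ) < 1 - y ^ (2 * m) := by linarith
  have hy2 : y ^ 2 < 1 := pow_lt_one₀ hy0 hy1 (by omega)
  have hA : (0:ℝ) < 1 - y ^ 2 := by linarith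
  have hgeom : 1 - y ^ (2 * m) = (1 - y ^ 2) * ∑ i ∈ Finset.range m, (y ^ 2) ^ i := by
    have h := geom_sum_mul (y ^ 2) m
    have h2 : y ^ (2 * m) = (y ^ 2) ^ m := by rw [pow_mul]
    rw [h2]
    linear_combination h
  have hsum : (m : ℝ) / 2 * y ^ m ≤ ∑ i ∈ Finset.range m, (y ^ 2) ^ i := by
    have hsub : Finset.range (m / 2 + 1) ⊆ Finset.range m := by
      apply Finset.range_subset_range.2
      omega
    have h1 : ∑ i ∈ Finset.range (m / 2 + 1), (y ^ 2) ^ i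
        ≤ ∑ i ∈ Finset.range m, (y ^ 2) ^ i := by
      apply Finset.sum_le_sum_of_subset_of_nonneg hsub
      intro i _ _
      positivity
    have h2 : ∀ i ∈ Finset.range (m / 2 + 1), y ^ m ≤ (y ^ 2) ^ i := by
      intro i hi
      rw [← pow_mul]
      apply pow_le_pow_of_le_one hy0 hy1.le
      have := Finset.mem_range.1 hi
      omega
    have h3 : (↑(m / 2 + 1) : ℝ) * y ^ m ≤ ∑ i ∈ Finset.range (m / 2 + 1), (y ^ 2) ^ i := by
      calc (↑(m / 2 + 1) : ℝ) * y ^ m = ∑ _i ∈ Finset.range (m / 2 + 1), y ^ m := by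
            rw [Finset.sum_const, Finset.card_range, nsmul_eq_mul]
        _ ≤ _ := Finset.sum_le_sum h2
    have h4 : (m : ℝ) / 2 ≤ (↑(m / 2 + 1) : ℝ) := by
      have : m ≤ 2 * (m / 2 + 1) := by omega
      have := (Nat.cast_le (α := ℝ)).2 this
      push_cast at this ⊢
      linarith
    have hym : (0:ℝ) ≤ y ^ m := pow_nonneg hy0 _
    nlinarith
  rw [div_le_iff₀ hden]
  have hym : (0:ℝ) ≤ y ^ m := pow_nonneg hy0 _
  have hmR : (0:ℝ) < m := by exact_mod_cast hm
  have expand : 2 / (1 - y ^ 2) * (y ^ m / ↑m) * (1 - y ^ (2 * m))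
      = 2 * y ^ m * (∑ i ∈ Finset.range m, (y ^ 2) ^ i) / m := by
    rw [hgeom]
    field_simp
  rw [expand, le_div_iff₀ hmR]
  have h2m : y ^ (2 * m) = y ^ m * y ^ m := by rw [two_mul, pow_add]
  rw [h2m]
  nlinarith [mul_le_mul_of_nonneg_left hsum hym]

lemma sum_log_bound {y : ℝ} (hy0 : 0 ≤ y) (hy1 : y < 1) (N : ℕ) :
    ∑ i ∈ Finset.Ico 1 (N + 1), y ^ i / i ≤ -Real.log (1 - y) := by
  have hH := Real.hasSum_pow_div_log_of_abs_lt_one (x := y) (by rw [abs_of_nonneg hy0]; exact hy1)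
  have hre : ∑ i ∈ Finset.Ico 1 (N + 1), y ^ i / i
      = ∑ i ∈ Finset.range N, y ^ (i + 1) / (i + 1) := by
    rw [Finset.sum_Ico_eq_sum_range]
    simp only [Nat.add_sub_cancel]
    apply Finset.sum_congr rfl
    intro i _
    push_cast
    rw [add_comm 1 i, add_comm (1:ℝ) (i:ℝ)]
  rw [hre]
  have : ∑ i ∈ Finset.range N, y ^ (i + 1) / (i + 1)
      = ∑ i ∈ Finset.range N, (fun n : ℕ => y ^ (n + 1) / (n + 1)) i := rfl
  rw [this]
  apply sum_le_hasSum _ _ hH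
  intro i _
  positivity

lemma Phi_one_le {p : ℝ} (hp0 : 0 < p) (hp1 : p < 1) (N : ℕ) :
    Phi p N 1 ≤ 2 / p * Real.log (2 / p) := by
  set x := 1 - p with hxdef
  have hx0 : (0:ℝ) ≤ x := by linarith
  have hx1 : x < 1 := by linarith
  set y := Real.sqrt x with hydef
  have hy0 : 0 ≤ y := Real.sqrt_nonneg x
  have hy1 : y < 1 := by
    rw [hydef, Real.sqrt_lt' one_pos]
    simpa using hx1
  have hxy : x = y ^ 2 := (Real.sq_sqrt hx0).symm
  have h1y : p / 2 ≤ 1 - y := by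
    have : 1 - y ^ 2 = (1 - y) * (1 + y) := by ring
    nlinarith [hxy]
  have h1ypos : 0 < 1 - y := by nlinarith
  have step1 : Phi p N 1 ≤ ∑ i ∈ Finset.Ico 1 (N + 1), 2 / p * (y ^ i / i) := by
    apply Finset.sum_le_sum
    intro i hi
    rw [Finset.mem_Ico] at hi
    have hxi : x ^ i = y ^ (2 * i) := by rw [hxy, ← pow_mul]
    rw [hxi]
    have := term_bound hy0 hy1 hi.1
    calc y ^ (2 * i) / (1 - y ^ (2 * i)) ≤ 2 / (1 - y ^ 2) * (y ^ i / i) := this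
      _ = 2 / p * (y ^ i / i) := by rw [← hxy]; norm_num [hxdef]
  have step2 : ∑ i ∈ Finset.Ico 1 (N + 1), 2 / p * (y ^ i / i)
      ≤ 2 / p * -Real.log (1 - y) := by
    rw [← Finset.mul_sum]
    apply mul_le_mul_of_nonneg_left (sum_log_bound hy0 hy1 N)
    positivity
  have step3 : -Real.log (1 - y) ≤ Real.log (2 / p) := by
    rw [← Real.log_inv]
    apply Real.log_le_log (by positivity)
    rw [inv_eq_one_div, div_le_div_iff₀ h1ypos hp0]
    linarith
  calc Phi p N 1 ≤ 2 / p * -Real.log (1 - y) := le_trans step1 step2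
    _ ≤ 2 / p * Real.log (2 / p) := mul_le_mul_of_nonneg_left step3 (by positivity)

lemma ex_congr {n : ℕ} {p : ℝ} {f g : Finset (Sym2 (Fin n)) → ℝ} (h : ∀ S, f S = g S) :
    ex n p f = ex n p g := by
  unfold ex
  exact Finset.sum_congr rfl (fun S _ => by rw [h S])

lemma ex_add {n : ℕ} (p : ℝ) (f g : Finset (Sym2 (Fin n)) → ℝ) :
    ex n p f + ex n p g = ex n p (fun S => f S + g S) := by
  unfold ex
  rw [← Finset.sum_add_distrib]
  apply Finset.sum_congr rfl
  intro S _
  ring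

lemma perj {n : ℕ} {p : ℝ} (hp0 : 0 < p) (hp1 : p < 1) (j : Fin n) :
    ∀ t k, k + t = (j : ℕ) →
      (∑ u ∈ Finset.univ.filter (fun u : Fin n => k ≤ (u : ℕ) ∧ u < j),
          ex n p (fun S => if pathFrom S u j then (0:ℝ) else 1))
        + ex n p (fun S => Phi p n (RR S j k)) ≤ Phi p n 1 := by
  intro t
  induction t with
  | zero =>
    intro k hk
    have hfil : Finset.univ.filter (fun u : Fin n => k ≤ (u : ℕ) ∧ u < j) = ∅ := by
      ext u
      simp only [Finset.mem_filter, Finset.mem_univ, true_and, Finset.notMem_empty, iff_false,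
        not_and]
      intro h1 h2
      rw [Fin.lt_def] at h2
      omega
    have hRR : ∀ S : Finset (Sym2 (Fin n)), Phi p n (RR S j k) = Phi p n 1 := by
      intro S
      have : k = (j : ℕ) := by omega
      rw [this, RR_self]
    rw [hfil, Finset.sum_empty, zero_add]
    rw [ex_congr (fun S => hRR S), ex_const]
  | succ t ih =>
    intro k hk
    have hkj : k < (j : ℕ) := by omega
    have hkn : k < n := lt_trans hkj j.isLt
    set u₀ : Fin n := ⟨k, hkn⟩ with hu₀def
    have hu₀ : (u₀ : ℕ) = k := rfl
    have hu₀j : u₀ < j := Fin.lt_def.2 hkj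
    have hsplit : Finset.univ.filter (fun u : Fin n => k ≤ (u : ℕ) ∧ u < j)
        = insert u₀ (Finset.univ.filter (fun u : Fin n => k + 1 ≤ (u : ℕ) ∧ u < j)) := by
      ext u
      simp only [Finset.mem_filter, Finset.mem_univ, true_and, Finset.mem_insert]
      constructor
      · rintro ⟨h1, h2⟩
        rcases Nat.lt_or_ge k (u : ℕ) with h | h
        · exact Or.inr ⟨h, h2⟩
        · exact Or.inl (Fin.ext (le_antisymm h h1))
      · rintro (rfl | ⟨h1, h2⟩)
        · exact ⟨le_refl _, hu₀j⟩
        · exact ⟨by omega, h2⟩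
    have hnotmem : u₀ ∉ Finset.univ.filter (fun u : Fin n => k + 1 ≤ (u : ℕ) ∧ u < j) := by
      simp only [Finset.mem_filter, Finset.mem_univ, true_and, not_and]
      intro h
      have hv : (u₀ : ℕ) = k := rfl
      omega
    rw [hsplit, Finset.sum_insert hnotmem]
    have hIH := ih (k + 1) (by omega)
    have hm1 : ex n p (fun S => if pathFrom S u₀ j then (0:ℝ) else 1)
        = ex n p (fun S => (1 - p) ^ (RR S j (k + 1)) * 1
            + (1 - (1 - p) ^ (RR S j (k + 1))) * 0) := by
      exact master p j u₀ hu₀j (fun _ => (1:ℝ)) (fun _ => (0:ℝ))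
    have hm2 : ex n p (fun S => Phi p n (RR S j k))
        = ex n p (fun S => (1 - p) ^ (RR S j (k + 1)) * Phi p n (RR S j (k + 1))
            + (1 - (1 - p) ^ (RR S j (k + 1))) * Phi p n (RR S j (k + 1) + 1)) := by
      have heq : ex n p (fun S => Phi p n (RR S j k))
          = ex n p (fun S => if pathFrom S u₀ j then Phi p n (RR S j (k + 1) + 1)
              else Phi p n (RR S j (k + 1))) := by
        apply ex_congr
        intro S
        have hr := RR_succ S j u₀
        rw [hu₀] at hr
        rw [hr]
        by_cases h : pathFrom S u₀ j
        · simp [h]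
        · simp [h]
      rw [heq]
      exact master p j u₀ hu₀j (Phi p n) (fun m => Phi p n (m + 1))
    have hcomb : ex n p (fun S => if pathFrom S u₀ j then (0:ℝ) else 1)
        + ex n p (fun S => Phi p n (RR S j k))
        ≤ ex n p (fun S => Phi p n (RR S j (k + 1))) := by
      rw [hm1, hm2, ex_add]
      apply ex_mono hp0.le hp1.le
      intro S
      have hm1' : 1 ≤ RR S j (k + 1) := RR_pos S j (by omega)
      have hmN : RR S j (k + 1) ≤ n := RR_le S j (k + 1)
      have := Phi_step hp0 hp1 hm1' hmN
      linarith
    linarith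

lemma optDeficiency_eq (n : ℕ) (p : ℝ) :
    optDeficiency n p = ∑ j : Fin n, ∑ u : Fin n,
      ex n p (fun S => if u < j ∧ ¬ pathFrom S u j then (1:ℝ) else 0) := by
  have h0 : optDeficiency n p
      = ex n p (fun S => (deficiency (SimpleGraph.fromEdgeSet (S : Set (Sym2 (Fin n)))) : ℝ)) := by
    unfold optDeficiency graphExpect ex wt EE
    congr!
  rw [h0]
  have h1 : ∀ S : Finset (Sym2 (Fin n)),
      (deficiency (SimpleGraph.fromEdgeSet (S : Set (Sym2 (Fin n)))) : ℝ)
      = ∑ pq : Fin n × Fin n, (if pq.1 < pq.2 ∧ ¬ pathFrom S pq.1 pq.2 then (1:ℝ) else 0) := by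
    intro S
    rw [deficiency, Finset.card_filter]
    push_cast
    first
    | rfl
    | exact Finset.sum_congr rfl (fun pq _ => rfl)
  rw [ex_congr h1]
  have h2 : ex n p (fun S => ∑ pq : Fin n × Fin n,
        (if pq.1 < pq.2 ∧ ¬ pathFrom S pq.1 pq.2 then (1:ℝ) else 0))
      = ∑ pq : Fin n × Fin n,
        ex n p (fun S => if pq.1 < pq.2 ∧ ¬ pathFrom S pq.1 pq.2 then (1:ℝ) else 0) := by
    unfold ex
    rw [Finset.sum_comm]
    apply Finset.sum_congr rfl
    intro S _
    rw [Finset.mul_sum]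
  rw [h2, Fintype.sum_prod_type, Finset.sum_comm]

lemma perj_final {n : ℕ} {p : ℝ} (hp0 : 0 < p) (hp1 : p < 1) (j : Fin n) :
    ∑ u : Fin n, ex n p (fun S => if u < j ∧ ¬ pathFrom S u j then (1:ℝ) else 0)
      ≤ 2 / p * Real.log (2 / p) := by
  have h0 : ∑ u : Fin n, ex n p (fun S => if u < j ∧ ¬ pathFrom S u j then (1:ℝ) else 0)
      = ∑ u ∈ Finset.univ.filter (fun u : Fin n => 0 ≤ (u : ℕ) ∧ u < j),
          ex n p (fun S => if pathFrom S u j then (0:ℝ) else 1) := by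
    rw [Finset.sum_filter]
    apply Finset.sum_congr rfl
    intro u _
    by_cases h : u < j
    · rw [if_pos (⟨Nat.zero_le _, h⟩ : 0 ≤ (u : ℕ) ∧ u < j)]
      apply ex_congr
      intro S
      by_cases hq : pathFrom S u j
      · simp [hq, h]
      · simp [hq, h]
    · rw [if_neg (fun hc => h hc.2)]
      rw [ex_congr (g := fun _ => (0:ℝ)) (fun S => by simp [h]), ex_const]
  rw [h0]
  have hperj := perj hp0 hp1 j (j : ℕ) 0 (by omega)
  have hnn : 0 ≤ ex n p (fun S => Phi p n (RR S j 0)) := by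
    have hmono := ex_mono (n := n) (p := p) hp0.le hp1.le (f := fun _ => (0:ℝ))
      (g := fun S => Phi p n (RR S j 0)) (fun S => Phi_nonneg hp0 hp1 n _)
    rwa [ex_const] at hmono
  have hone := Phi_one_le hp0 hp1 n
  linarith

end StraightAux

theorem stmt_5 :
    ∃ C : ℝ, 0 < C ∧
      ∀ n : ℕ, 0 < n → ∀ p : ℝ, p ∈ Set.Ioo (0 : ℝ) 1 →
        optDeficiency n p ≤ C * ((n : ℝ) / p) * Real.log (2 / p) := by
  refine ⟨2, by norm_num, ?_⟩
  intro n hn p hp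
  obtain ⟨hp0, hp1⟩ := hp
  rw [StraightAux.optDeficiency_eq n p]
  calc ∑ j : Fin n, ∑ u : Fin n,
        StraightAux.ex n p (fun S => if u < j ∧ ¬ StraightAux.pathFrom S u j then (1:ℝ) else 0)
      ≤ ∑ _j : Fin n, 2 / p * Real.log (2 / p) :=
        Finset.sum_le_sum (fun j _ => StraightAux.perj_final hp0 hp1 j)
    _ = (n : ℝ) * (2 / p * Real.log (2 / p)) := by
        rw [Finset.sum_const, Finset.card_univ, Fintype.card_fin, nsmul_eq_mul]
    _ = 2 * ((n : ℝ) / p) * Real.log (2 / p) := by ring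
end
end

section
/- There are constants 0 < c ≤ C such that the following holds. Let u ≥ 8 be an integer, p = 1/u, and let n be an integer with n ≥ (2/p)·ln(1/p). Then c·(n/p)·ln(1/p) ≤ ℓ(n,p) ≤ C·(n/p)·ln(1/p); that is, the optimal deficiency is Θ((n/p)·log(1/p)). -/
open Finset

attribute [local instance] Classical.propDecidable

noncomputable section

namespace StraightPathAux


variable {α : Type*} [DecidableEq α]

/-- weighted sum over subsets -/
def wsum (p q : ℝ) (E : Finset α) (F : Finset α → ℝ) : ℝ :=
  ∑ S ∈ E.powerset, p ^ S.card * q ^ (E.card - S.card) * F S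

theorem wsum_fubini (p q : ℝ) {E₀ E₁ : Finset α} (h : Disjoint E₀ E₁)
    (F : Finset α → ℝ) :
    wsum p q (E₀ ∪ E₁) F =
      ∑ S₀ ∈ E₀.powerset, p ^ S₀.card * q ^ (E₀.card - S₀.card) *
        wsum p q E₁ (fun S₁ => F (S₀ ∪ S₁)) := by
  unfold wsum
  simp_rw [Finset.mul_sum]
  rw [← Finset.sum_product']
  apply Finset.sum_nbij' (i := fun S => (S ∩ E₀, S ∩ E₁)) (j := fun P => P.1 ∪ P.2)
  · intro S hS
    simp only [Finset.mem_powerset] at hS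
    simp only [Finset.mem_product, Finset.mem_powerset]
    exact ⟨Finset.inter_subset_right, Finset.inter_subset_right⟩
  · intro P hP
    simp only [Finset.mem_product, Finset.mem_powerset] at hP ⊢
    exact Finset.union_subset_union hP.1 hP.2
  · intro S hS
    simp only [Finset.mem_powerset] at hS
    rw [← Finset.inter_union_distrib_left, Finset.inter_eq_left.2 hS]
  · intro P hP
    simp only [Finset.mem_product, Finset.mem_powerset] at hP
    obtain ⟨h0, h1⟩ := hP
    have e0 : (P.1 ∪ P.2) ∩ E₀ = P.1 := by
      rw [Finset.union_inter_distrib_right, Finset.inter_eq_left.2 h0,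
        Finset.disjoint_iff_inter_eq_empty.1 (h.symm.mono_left h1),
        Finset.union_empty]
    have e1 : (P.1 ∪ P.2) ∩ E₁ = P.2 := by
      rw [Finset.union_inter_distrib_right, Finset.inter_eq_left.2 h1,
        Finset.disjoint_iff_inter_eq_empty.1 (h.mono_left h0), Finset.empty_union]
    simp [e0, e1]
  · intro S hS
    simp only [Finset.mem_powerset] at hS
    have hd : Disjoint (S ∩ E₀) (S ∩ E₁) :=
      h.mono Finset.inter_subset_right Finset.inter_subset_right
    have hdec : S ∩ E₀ ∪ S ∩ E₁ = S := by
      rw [← Finset.inter_union_distrib_left, Finset.inter_eq_left.2 hS]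
    have hcard : S.card = (S ∩ E₀).card + (S ∩ E₁).card := by
      rw [← Finset.card_union_of_disjoint hd, hdec]
    have hcardE : (E₀ ∪ E₁).card = E₀.card + E₁.card := Finset.card_union_of_disjoint h
    have c0 : (S ∩ E₀).card ≤ E₀.card := Finset.card_le_card Finset.inter_subset_right
    have c1 : (S ∩ E₁).card ≤ E₁.card := Finset.card_le_card Finset.inter_subset_right
    have he : (E₀ ∪ E₁).card - S.card
        = (E₀.card - (S ∩ E₀).card) + (E₁.card - (S ∩ E₁).card) := by omega
    rw [he, hcard, pow_add, pow_add, hdec]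
    ring

theorem wsum_mass (p q : ℝ) (E : Finset α) : wsum p q E (fun _ => 1) = (p + q) ^ E.card := by
  classical
  induction E using Finset.induction_on with
  | empty => simp [wsum]
  | @insert a E' ha ih =>
    unfold wsum at ih ⊢
    rw [Finset.sum_powerset_insert ha]
    have hc : (insert a E').card = E'.card + 1 := Finset.card_insert_of_notMem ha
    have h1 : ∀ t ∈ E'.powerset,
        p ^ t.card * q ^ ((insert a E').card - t.card) * 1
          = q * (p ^ t.card * q ^ (E'.card - t.card) * 1) := by
      intro t ht
      have : t.card ≤ E'.card := Finset.card_le_card (Finset.mem_powerset.1 ht)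
      rw [hc, show E'.card + 1 - t.card = (E'.card - t.card) + 1 by omega, pow_succ]
      ring
    have h2 : ∀ t ∈ E'.powerset,
        p ^ (insert a t).card * q ^ ((insert a E').card - (insert a t).card) * 1
          = p * (p ^ t.card * q ^ (E'.card - t.card) * 1) := by
      intro t ht
      have hts := Finset.mem_powerset.1 ht
      have hat : a ∉ t := fun hmem => ha (hts hmem)
      have : t.card ≤ E'.card := Finset.card_le_card hts
      rw [Finset.card_insert_of_notMem hat, hc,
        show E'.card + 1 - (t.card + 1) = E'.card - t.card by omega, pow_succ]
      ring
    rw [Finset.sum_congr rfl h1, Finset.sum_congr rfl h2, ← Finset.mul_sum, ← Finset.mul_sum, ih,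
      hc, pow_succ]
    ring

section WsumSec
variable {p q : ℝ} (hpq : p + q = 1)
include hpq

theorem wsum_const (E : Finset α) (c : ℝ) : wsum p q E (fun _ => c) = c := by
  unfold wsum
  have := wsum_mass p q E
  unfold wsum at this
  calc ∑ S ∈ E.powerset, p ^ S.card * q ^ (E.card - S.card) * c
      = (∑ S ∈ E.powerset, p ^ S.card * q ^ (E.card - S.card) * 1) * c := by
        rw [Finset.sum_mul]; apply Finset.sum_congr rfl; intros; ring
    _ = c := by rw [this, hpq]; simp

omit hpq in
theorem wsum_congr' (E : Finset α) {F G : Finset α → ℝ}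
    (h : ∀ S ∈ E.powerset, F S = G S) : wsum p q E F = wsum p q E G := by
  unfold wsum; exact Finset.sum_congr rfl fun S hS => by rw [h S hS]

/-- if F only depends on the part of S inside E₀, the sum reduces to E₀ -/
theorem wsum_reduce {E₀ E : Finset α} (hE : E₀ ⊆ E) {F : Finset α → ℝ}
    (hF : ∀ S S' : Finset α, S ∩ E₀ = S' ∩ E₀ → F S = F S') :
    wsum p q E F = wsum p q E₀ F := by
  have hu : E = E₀ ∪ (E \ E₀) := by
    rw [Finset.union_sdiff_of_subset hE]
  rw [show wsum p q E F = wsum p q (E₀ ∪ (E \ E₀)) F by rw [← hu],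
    wsum_fubini p q (Finset.disjoint_sdiff) F]
  have main : ∀ S₀ ∈ E₀.powerset,
      p ^ S₀.card * q ^ (E₀.card - S₀.card) * wsum p q (E \ E₀) (fun S₁ => F (S₀ ∪ S₁))
        = p ^ S₀.card * q ^ (E₀.card - S₀.card) * F S₀ := by
    intro S₀ hS₀
    have hS₀E : S₀ ⊆ E₀ := Finset.mem_powerset.1 hS₀
    have : wsum p q (E \ E₀) (fun S₁ => F (S₀ ∪ S₁)) = F S₀ := by
      rw [wsum_congr' _ (G := fun _ => F S₀) ?_, wsum_const hpq]
      intro S₁ hS₁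
      have hS₁E : S₁ ⊆ E \ E₀ := Finset.mem_powerset.1 hS₁
      apply hF
      rw [Finset.union_inter_distrib_right, Finset.inter_eq_left.2 hS₀E,
        Finset.disjoint_iff_inter_eq_empty.1 (Finset.disjoint_sdiff.symm.mono_left hS₁E),
        Finset.union_empty]
    rw [this]
  rw [Finset.sum_congr rfl main]
  rfl

/-- probability that S misses all of B -/
theorem wsum_disjoint_mass {B E : Finset α} (hB : B ⊆ E) :
    wsum p q E (fun S => if Disjoint S B then 1 else 0) = q ^ B.card := by
  rw [wsum_reduce hpq hB (F := fun S => if Disjoint S B then 1 else 0) ?_]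
  · unfold wsum
    rw [Finset.sum_eq_single ∅ ?_ ?_]
    · simp
    · intro S hS hne
      have hSB := Finset.mem_powerset.1 hS
      have : ¬ Disjoint S B := by
        intro hd
        exact hne (Finset.subset_empty.1 (by
          intro x hx
          exact absurd (hSB hx) (Finset.disjoint_left.1 hd hx)))
      simp [this]
    · intro h; exact absurd (Finset.empty_mem_powerset B) h
  · intro S S' hss
    have : Disjoint S B ↔ Disjoint S' B := by
      rw [Finset.disjoint_iff_inter_eq_empty, Finset.disjoint_iff_inter_eq_empty, hss]
    simp only [this]



theorem wsum_ite {B E : Finset α} (hB : B ⊆ E) (c d : ℝ) :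
    wsum p q E (fun S => if Disjoint S B then c else d)
      = q^B.card * c + (1 - q^B.card) * d := by
  have e1 : wsum p q E (fun S => if Disjoint S B then c else d)
      = wsum p q E (fun S => d + (c - d) * (if Disjoint S B then 1 else 0)) := by
    apply wsum_congr'
    intro S _
    split <;> ring
  have e2 : wsum p q E (fun S => d + (c - d) * (if Disjoint S B then 1 else 0))
      = wsum p q E (fun _ => d)
        + (c - d) * wsum p q E (fun S => if Disjoint S B then 1 else 0) := by
    unfold wsum
    rw [Finset.mul_sum, ← Finset.sum_add_distrib]
    apply Finset.sum_congr rfl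
    intros; ring
  rw [e1, e2, wsum_const hpq, wsum_disjoint_mass hpq hB]
  ring

end WsumSec

/-- distribution of the size of the reachable set after exposing t additional vertices -/
def rho (x : ℝ) : ℕ → ℕ → ℝ
  | 0, r => if r = 1 then 1 else 0
  | (t+1), 0 => 0
  | (t+1), (r+1) => x^(r+1) * rho x t (r+1) + (1 - x^r) * rho x t r

theorem rho_zero (x : ℝ) (t : ℕ) : rho x t 0 = 0 := by
  cases t <;> simp [rho]

theorem rho_support (x : ℝ) (t : ℕ) : ∀ r, t + 1 < r → rho x t r = 0 := by
  induction t with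
  | zero =>
    intro r hr
    have : r ≠ 1 := by omega
    simp [rho, this]
  | succ t ih =>
    intro r hr
    match r, hr with
    | (r+1), hr =>
      simp only [rho]
      rw [ih (r+1) (by omega), ih r (by omega)]
      ring

theorem rho_nonneg {x : ℝ} (hx0 : 0 ≤ x) (hx1 : x ≤ 1) (t r : ℕ) : 0 ≤ rho x t r := by
  induction t generalizing r with
  | zero => simp only [rho]; split <;> norm_num
  | succ t ih =>
    match r with
    | 0 => simp [rho]
    | (r+1) =>
      simp only [rho]
      have h1 : (0:ℝ) ≤ x^(r+1) := pow_nonneg hx0 _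
      have h2 : x^r ≤ 1 := pow_le_one₀ hx0 hx1
      exact add_nonneg (mul_nonneg h1 (ih (r+1))) (mul_nonneg (by linarith) (ih r))

/-- the master recursion for expectations -/
theorem rho_rec (x : ℝ) (t : ℕ) (φ : ℕ → ℝ) :
    ∑ r ∈ Finset.range (t+3), rho x (t+1) r * φ r
      = ∑ r ∈ Finset.range (t+2), rho x t r * (x^r * φ r + (1 - x^r) * φ (r+1)) := by
  rw [Finset.sum_range_succ' (fun r => rho x (t+1) r * φ r) (t+2)]
  rw [rho_zero, zero_mul, add_zero]
  have expand : ∀ r ∈ Finset.range (t+2), rho x (t+1) (r+1) * φ (r+1)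
      = x^(r+1) * rho x t (r+1) * φ (r+1) + (1 - x^r) * rho x t r * φ (r+1) := by
    intro r _; simp only [rho]; ring
  rw [Finset.sum_congr rfl expand, Finset.sum_add_distrib]
  have rhs : ∀ r ∈ Finset.range (t+2), rho x t r * (x^r * φ r + (1 - x^r) * φ (r+1))
      = x^r * rho x t r * φ r + (1 - x^r) * rho x t r * φ (r+1) := by
    intro r _; ring
  rw [Finset.sum_congr rfl rhs, Finset.sum_add_distrib]
  congr 1
  -- ∑_{r<t+2} x^(r+1) ρ t (r+1) φ(r+1) = ∑_{r<t+2} x^r ρ t r φ r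
  rw [Finset.sum_range_succ (fun r => x^(r+1) * rho x t (r+1) * φ (r+1)) (t+1)]
  rw [rho_support x t (t+2) (by omega)]
  rw [Finset.sum_range_succ' (fun r => x^r * rho x t r * φ r) (t+1)]
  rw [rho_zero]
  simp

def gfun (x : ℝ) (t : ℕ) (z : ℝ) : ℝ := ∑ r ∈ Finset.range (t+2), rho x t r * z^r

def afun (x : ℝ) (t : ℕ) : ℝ := ∑ r ∈ Finset.range (t+2), rho x t r * r

theorem gfun_zero (x z : ℝ) : gfun x 0 z = z := by
  simp [gfun, rho, Finset.sum_range_succ]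

theorem afun_zero (x : ℝ) : afun x 0 = 1 := by
  simp [afun, rho, Finset.sum_range_succ]

theorem rho_mass {x : ℝ} (t : ℕ) : ∑ r ∈ Finset.range (t+2), rho x t r = 1 := by
  induction t with
  | zero => simp [rho, Finset.sum_range_succ]
  | succ t ih =>
    have := rho_rec x t (fun _ => 1)
    simp only [mul_one] at this
    calc ∑ r ∈ Finset.range (t+3), rho x (t+1) r
        = ∑ r ∈ Finset.range (t+3), rho x (t+1) r * (fun _ => (1:ℝ)) r := by simp
      _ = ∑ r ∈ Finset.range (t+2), rho x t r * (x^r * 1 + (1 - x^r) * 1) := rho_rec x t _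
      _ = ∑ r ∈ Finset.range (t+2), rho x t r := by apply Finset.sum_congr rfl; intros; ring_nf
      _ = 1 := ih

theorem gfun_rec (x : ℝ) (t : ℕ) (z : ℝ) :
    gfun x (t+1) z = z * gfun x t z + (1 - z) * gfun x t (x*z) := by
  unfold gfun
  rw [rho_rec x t (fun r => z^r)]
  rw [Finset.mul_sum, Finset.mul_sum, ← Finset.sum_add_distrib]
  apply Finset.sum_congr rfl
  intro r _
  simp only [mul_pow]
  ring

theorem afun_rec (x : ℝ) (t : ℕ) :
    afun x (t+1) = afun x t + 1 - gfun x t x := by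
  unfold afun
  rw [rho_rec x t (fun r => (r:ℝ))]
  have : ∀ r ∈ Finset.range (t+2), rho x t r * (x^r * (r:ℝ) + (1 - x^r) * ((r+1 : ℕ):ℝ))
      = rho x t r * r + rho x t r - rho x t r * x^r := by
    intro r _; push_cast; ring
  rw [Finset.sum_congr rfl this]
  rw [Finset.sum_sub_distrib, Finset.sum_add_distrib, rho_mass]
  rfl

section GfunSec
variable {x : ℝ} (hx0 : 0 < x) (hx1 : x < 1)
include hx0 hx1

theorem gfun_nonneg (t : ℕ) {z : ℝ} (hz : 0 ≤ z) : 0 ≤ gfun x t z := by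
  apply Finset.sum_nonneg
  intro r _
  exact mul_nonneg (rho_nonneg hx0.le hx1.le t r) (pow_nonneg hz r)

theorem gfun_le (t : ℕ) {z : ℝ} (hz0 : 0 ≤ z) (hz1 : z ≤ 1) : gfun x t z ≤ z := by
  have : ∀ r ∈ Finset.range (t+2), rho x t r * z^r ≤ rho x t r * z := by
    intro r hr
    match r with
    | 0 => rw [rho_zero]; simp
    | (r+1) =>
      apply mul_le_mul_of_nonneg_left ?_ (rho_nonneg hx0.le hx1.le t (r+1))
      calc z^(r+1) ≤ z^1 := pow_le_pow_of_le_one hz0 hz1 (by omega)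
        _ = z := pow_one z
  calc gfun x t z ≤ ∑ r ∈ Finset.range (t+2), rho x t r * z := Finset.sum_le_sum this
    _ = z := by rw [← Finset.sum_mul, rho_mass, one_mul]

theorem gfun_bern (t : ℕ) : 1 - (1-x) * afun x t ≤ gfun x t x := by
  have h : ∀ r ∈ Finset.range (t+2), rho x t r * (1 - (1-x) * r) ≤ rho x t r * x^r := by
    intro r _
    apply mul_le_mul_of_nonneg_left ?_ (rho_nonneg hx0.le hx1.le t r)
    have := one_add_mul_le_pow (a := x - 1) (by linarith) r
    calc 1 - (1-x) * r = 1 + r * (x - 1) := by ring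
      _ ≤ (1 + (x-1))^r := this
      _ = x^r := by norm_num
  have e : ∑ r ∈ Finset.range (t+2), rho x t r * (1 - (1-x) * r)
      = (∑ r ∈ Finset.range (t+2), rho x t r) - (1-x) * ∑ r ∈ Finset.range (t+2), rho x t r * r := by
    rw [Finset.mul_sum, ← Finset.sum_sub_distrib]
    apply Finset.sum_congr rfl; intros; ring
  rw [rho_mass] at e
  calc 1 - (1-x) * afun x t
      = ∑ r ∈ Finset.range (t+2), rho x t r * (1 - (1-x) * r) := by rw [e]; rfl
    _ ≤ ∑ r ∈ Finset.range (t+2), rho x t r * x^r := Finset.sum_le_sum h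
    _ = gfun x t x := rfl

theorem afun_nonneg (t : ℕ) : 0 ≤ afun x t :=
  Finset.sum_nonneg fun r _ => mul_nonneg (rho_nonneg hx0.le hx1.le t r) (Nat.cast_nonneg r)

theorem afun_le (t : ℕ) : afun x t ≤ (2 - x)^t := by
  induction t with
  | zero => rw [afun_zero]; norm_num
  | succ t ih =>
    rw [afun_rec]
    have h1 : 1 - gfun x t x ≤ (1 - x) * afun x t := by
      have := gfun_bern hx0 hx1 t; linarith
    calc afun x t + 1 - gfun x t x ≤ afun x t + (1-x) * afun x t := by linarith
      _ = (2 - x) * afun x t := by ring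
      _ ≤ (2 - x) * (2 - x)^t := by
          apply mul_le_mul_of_nonneg_left ih (by linarith)
      _ = (2 - x)^(t+1) := by rw [pow_succ]; ring

theorem gfun_jensen (t : ℕ) : x ^ (afun x t) ≤ gfun x t x := by
  have key := Real.geom_mean_le_arith_mean_weighted (Finset.range (t+2)) (rho x t)
    (fun r => x ^ r)
    (fun r _ => rho_nonneg hx0.le hx1.le t r) (rho_mass t)
    (fun r _ => pow_nonneg hx0.le r)
  refine le_trans (le_of_eq ?_) key
  calc x ^ afun x t = x ^ (∑ r ∈ Finset.range (t+2), rho x t r * (r:ℝ)) := rfl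
    _ = ∏ r ∈ Finset.range (t+2), x ^ (rho x t r * (r:ℝ)) :=
        Real.rpow_sum_of_pos hx0 _ _
    _ = ∏ r ∈ Finset.range (t+2), (fun r => x ^ r) r ^ rho x t r := by
        apply Finset.prod_congr rfl
        intro r _
        rw [mul_comm, Real.rpow_mul hx0.le, Real.rpow_natCast]

/-- partial sums of `gfun` -/
def Hs (x : ℝ) (N : ℕ) (z : ℝ) : ℝ := ∑ t ∈ Finset.range N, gfun x t z

theorem Hs_nonneg (N : ℕ) {z : ℝ} (hz : 0 ≤ z) : 0 ≤ Hs x N z :=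
  Finset.sum_nonneg fun t _ => gfun_nonneg hx0 hx1 t hz

theorem Hs_le (N : ℕ) {z : ℝ} (hz0 : 0 ≤ z) (hz1 : z ≤ 1) : Hs x N z ≤ N * z := by
  calc Hs x N z ≤ ∑ _t ∈ Finset.range N, z :=
        Finset.sum_le_sum fun t _ => gfun_le hx0 hx1 t hz0 hz1
    _ = N * z := by rw [Finset.sum_const, Finset.card_range, nsmul_eq_mul]

theorem Hs_mono {N M : ℕ} (h : N ≤ M) {z : ℝ} (hz : 0 ≤ z) : Hs x N z ≤ Hs x M z := by
  unfold Hs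
  apply Finset.sum_le_sum_of_subset_of_nonneg (Finset.range_subset_range.2 h)
  intro t _ _
  exact gfun_nonneg hx0 hx1 t hz

theorem Hs_step (N : ℕ) {z : ℝ} (hz0 : 0 < z) (hz1 : z < 1) :
    Hs x N z ≤ z / (1 - z) + Hs x N (x * z) := by
  have hxz0 : 0 < x * z := mul_pos hx0 hz0
  have hxz1 : x * z < 1 := by nlinarith
  match N with
  | 0 =>
    simp only [Hs, Finset.range_zero, Finset.sum_empty]
    have : (0:ℝ) ≤ z / (1 - z) := div_nonneg hz0.le (by linarith)
    linarith
  | (M+1) =>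
    have key : Hs x (M+1) z ≤ z + z * Hs x (M+1) z + (1 - z) * Hs x (M+1) (x*z) := by
      have e1 : Hs x (M+1) z = z + ∑ t ∈ Finset.range M, gfun x (t+1) z := by
        unfold Hs
        rw [Finset.sum_range_succ' (fun t => gfun x t z) M, gfun_zero, add_comm]
      have e2 : ∀ t ∈ Finset.range M, gfun x (t+1) z
          = z * gfun x t z + (1 - z) * gfun x t (x*z) := fun t _ => gfun_rec x t z
      have hA : (∑ t ∈ Finset.range M, gfun x t z) ≤ Hs x (M+1) z :=
        Hs_mono hx0 hx1 (Nat.le_succ M) hz0.le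
      have hB : (∑ t ∈ Finset.range M, gfun x t (x*z)) ≤ Hs x (M+1) (x*z) :=
        Hs_mono hx0 hx1 (Nat.le_succ M) hxz0.le
      have p1 := mul_le_mul_of_nonneg_left hA hz0.le
      have p2 := mul_le_mul_of_nonneg_left hB (by linarith : (0:ℝ) ≤ 1 - z)
      calc Hs x (M+1) z = z + ∑ t ∈ Finset.range M, gfun x (t+1) z := e1
        _ = z + (z * ∑ t ∈ Finset.range M, gfun x t z
            + (1 - z) * ∑ t ∈ Finset.range M, gfun x t (x*z)) := by
            rw [Finset.sum_congr rfl e2, Finset.sum_add_distrib,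
              ← Finset.mul_sum, ← Finset.mul_sum]
        _ ≤ z + z * Hs x (M+1) z + (1 - z) * Hs x (M+1) (x*z) := by linarith
    have h1z : (0:ℝ) < 1 - z := by linarith
    have h2 : (1 - z) * Hs x (M+1) z ≤ z + (1-z) * Hs x (M+1) (x*z) := by linarith
    calc Hs x (M+1) z = ((1-z) * Hs x (M+1) z)/(1-z) := by field_simp
      _ ≤ (z + (1-z) * Hs x (M+1) (x*z))/(1-z) := (div_le_div_iff_of_pos_right h1z).2 h2
      _ = z/(1-z) + Hs x (M+1) (x*z) := by field_simp

theorem Hs_iter (N K : ℕ) :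
    Hs x N x ≤ (∑ k ∈ Finset.Icc 1 K, x^k / (1 - x^k)) + Hs x N (x^(K+1)) := by
  induction K with
  | zero => simp [pow_one]
  | succ K ih =>
    have hz0 : (0:ℝ) < x^(K+1) := pow_pos hx0 _
    have hz1 : x^(K+1) < 1 := pow_lt_one₀ hx0.le hx1 (by omega)
    have step := Hs_step hx0 hx1 N hz0 hz1
    rw [show x * x^(K+1) = x^(K+2) by rw [pow_succ]; ring] at step
    have : Hs x N x ≤ (∑ k ∈ Finset.Icc 1 K, x^k / (1 - x^k))
        + (x^(K+1) / (1 - x^(K+1)) + Hs x N (x^(K+2))) := le_trans ih (by linarith)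
    rw [Finset.sum_Icc_succ_top (by omega : 1 ≤ K + 1)]
    linarith

end GfunSec

-- (1-p)^k ≤ 1/(1+kp)
theorem pow_one_sub_le {p : ℝ} (hp0 : 0 ≤ p) (hp1 : p ≤ 1) (k : ℕ) :
    (1-p)^k * (1 + k*p) ≤ 1 := by
  induction k with
  | zero => norm_num
  | succ k ih =>
    have hnn : (0:ℝ) ≤ (1-p)^k := pow_nonneg (by linarith) k
    have e : (1-p)^(k+1) * (1 + (k+1:ℕ)*p)
        = (1-p)^k * (1 + k*p) - (1-p)^k * ((k+1)*p^2 + 0) := by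
      push_cast; ring
    rw [e]
    have : (0:ℝ) ≤ (1-p)^k * ((k+1)*p^2 + 0) := by positivity
    linarith

theorem harmonic_le (u : ℕ) (hu : 1 ≤ u) :
    ∑ k ∈ Finset.Icc 1 u, (1:ℝ)/k ≤ 1 + Real.log u := by
  induction u with
  | zero => omega
  | succ u ih =>
    match Nat.lt_or_ge u 1 with
    | Or.inl h0 =>
      interval_cases u
      simp
    | Or.inr h1 =>
      have hu0 : (0:ℝ) < u := by exact_mod_cast h1
      have hlog : Real.log u + 1/(u+1) ≤ Real.log (u+1) := by
        have hx : (0:ℝ) < (u:ℝ)/(u+1) := by positivity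
        have := Real.log_le_sub_one_of_pos hx
        rw [Real.log_div (ne_of_gt hu0) (by positivity)] at this
        have : Real.log u - Real.log (u+1) ≤ (u:ℝ)/(u+1) - 1 := this
        have he : (u:ℝ)/(u+1) - 1 = -(1/(u+1)) := by field_simp; ring
        rw [he] at this
        linarith
      rw [Finset.sum_Icc_succ_top (by omega : 1 ≤ u + 1)]
      push_cast
      push_cast at ih hlog
      linarith [ih h1]

theorem geom_le {x : ℝ} (hx0 : 0 ≤ x) (hx1 : x < 1) (N : ℕ) :
    ∑ k ∈ Finset.Icc 1 N, x^k ≤ x / (1-x) := by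
  have key : ∀ N : ℕ, ∑ k ∈ Finset.Icc 1 N, x^k = (x - x^(N+1)) / (1-x) := by
    intro N
    induction N with
    | zero => simp
    | succ N ih =>
      rw [Finset.sum_Icc_succ_top (by omega : 1 ≤ N + 1), ih]
      have h1x : (1:ℝ) - x ≠ 0 := by intro h; nlinarith
      field_simp
      ring
  rw [key N]
  have h1x : (0:ℝ) < 1 - x := by linarith
  have hle : x - x^(N+1) ≤ x := by nlinarith [pow_nonneg hx0 (N+1)]
  exact (div_le_div_iff_of_pos_right h1x).2 hle



section MainEst

variable {u : ℕ} (hu : 8 ≤ u)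

private def xv (u : ℕ) : ℝ := 1 - 1/(u:ℝ)

include hu

theorem u_pos : (0:ℝ) < u := by
  have : (8:ℝ) ≤ u := by exact_mod_cast hu
  linarith

theorem xv_pos : 0 < xv u := by
  have h8 : (8:ℝ) ≤ u := by exact_mod_cast hu
  have : 1/(u:ℝ) ≤ 1/8 := by
    apply div_le_div_of_nonneg_left (by norm_num) (by norm_num) h8
  simp only [xv]; linarith

theorem xv_lt_one : xv u < 1 := by
  have := u_pos hu
  simp only [xv]
  have : 0 < 1/(u:ℝ) := by positivity
  linarith

theorem log_u_ge_two : 2 ≤ Real.log u := by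
  have h8 : (8:ℝ) ≤ u := by exact_mod_cast hu
  have e2 : Real.exp 2 < 8 := by
    have h1 := Real.exp_one_lt_d9
    have : Real.exp 2 = Real.exp 1 * Real.exp 1 := by
      rw [← Real.exp_add]; norm_num
    nlinarith [Real.exp_pos 1]
  have : Real.exp 2 ≤ u := by linarith
  calc (2:ℝ) = Real.log (Real.exp 2) := (Real.log_exp 2).symm
    _ ≤ Real.log u := Real.log_le_log (Real.exp_pos 2) this

/-- the central series estimate -/
theorem series_bound (N : ℕ) :
    ∑ k ∈ Finset.Icc 1 N, (xv u)^k/(1-(xv u)^k) ≤ (u:ℝ) * (3 + Real.log u) := by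
  set x := xv u with hxdef
  have hx0 := xv_pos hu
  have hx1 := xv_lt_one hu
  have hu0 := u_pos hu
  have hp : x = 1 - 1/(u:ℝ) := rfl
  have hinv : ∀ k : ℕ, 1 ≤ k → x^k ≤ 1/(1 + k * (1/(u:ℝ))) := by
    intro k hk
    have h := pow_one_sub_le (p := 1/(u:ℝ)) (by positivity) (by
      have h1u : (1:ℝ) ≤ u := Nat.one_le_cast.2 (by omega)
      rw [div_le_one hu0]; linarith) k
    have hpos : (0:ℝ) < 1 + k * (1/(u:ℝ)) := by positivity
    rw [le_div_iff₀ hpos]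
    rw [hp]
    linarith [h]
  -- termwise bound
  have hterm : ∀ k ∈ Finset.Icc 1 N, x^k/(1-x^k) ≤ x^k + (if k ≤ u then (u:ℝ)/k else x^k) := by
    intro k hk
    obtain ⟨hk1, _⟩ := Finset.mem_Icc.1 hk
    have hxk1 : x^k < 1 := pow_lt_one₀ hx0.le hx1 (by omega)
    have hxk0 : 0 < x^k := pow_pos hx0 k
    have hden : 0 < 1 - x^k := by linarith
    have hkpos : (0:ℝ) < k := by exact_mod_cast hk1
    have hlow : (k:ℝ) * (1/(u:ℝ)) / (1 + k * (1/(u:ℝ))) ≤ 1 - x^k := by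
      have h1 := hinv k hk1
      have hpos : (0:ℝ) < 1 + k * (1/(u:ℝ)) := by positivity
      have h3 : x^k * (1 + k * (1/(u:ℝ))) ≤ 1 := by
        rw [← le_div_iff₀ hpos]
        exact h1
      rw [div_le_iff₀ hpos]
      nlinarith
    have hkp : (0:ℝ) < (k:ℝ) * (1/(u:ℝ)) := by positivity
    have hb : x^k/(1-x^k) ≤ x^k * ((1 + k * (1/(u:ℝ))) / (k * (1/(u:ℝ)))) := by
      rw [div_le_iff₀ hden]
      have h2 : (k:ℝ) * (1/(u:ℝ)) / (1 + k * (1/(u:ℝ))) ≤ 1 - x^k := hlow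
      have hpos : (0:ℝ) < 1 + k * (1/(u:ℝ)) := by positivity
      calc x^k = x^k * ((1 + k * (1/(u:ℝ))) / (k * (1/(u:ℝ)))) * ((k:ℝ) * (1/(u:ℝ)) / (1 + k * (1/(u:ℝ)))) := by
            field_simp
        _ ≤ x^k * ((1 + k * (1/(u:ℝ))) / (k * (1/(u:ℝ)))) * (1 - x^k) := by
            apply mul_le_mul_of_nonneg_left h2
            positivity
    have he : x^k * ((1 + k * (1/(u:ℝ))) / (k * (1/(u:ℝ)))) = x^k + x^k * ((u:ℝ)/k) := by
      field_simp
      ring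
    rw [he] at hb
    refine hb.trans ?_
    have : x^k * ((u:ℝ)/k) ≤ (if k ≤ u then (u:ℝ)/k else x^k) := by
      split
      · -- x^k ≤ 1
        calc x^k * ((u:ℝ)/k) ≤ 1 * ((u:ℝ)/k) := by
              apply mul_le_mul_of_nonneg_right hxk1.le (by positivity)
          _ = (u:ℝ)/k := one_mul _
      · -- u/k ≤ 1 since k > u
        rename_i hnk
        have hku : u < k := by omega
        have : (u:ℝ)/k ≤ 1 := by
          rw [div_le_one hkpos]
          exact_mod_cast hku.le
        calc x^k * ((u:ℝ)/k) ≤ x^k * 1 := mul_le_mul_of_nonneg_left this hxk0.le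
          _ = x^k := mul_one _
    linarith
  calc ∑ k ∈ Finset.Icc 1 N, x^k/(1-x^k)
      ≤ ∑ k ∈ Finset.Icc 1 N, (x^k + (if k ≤ u then (u:ℝ)/k else x^k)) :=
        Finset.sum_le_sum hterm
    _ = (∑ k ∈ Finset.Icc 1 N, x^k) + ∑ k ∈ Finset.Icc 1 N, (if k ≤ u then (u:ℝ)/k else x^k) := by
        rw [Finset.sum_add_distrib]
    _ ≤ (∑ k ∈ Finset.Icc 1 N, x^k) + ((∑ k ∈ Finset.Icc 1 N, (if k ≤ u then (u:ℝ)/k else 0))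
          + ∑ k ∈ Finset.Icc 1 N, x^k) := by
        have : ∀ k ∈ Finset.Icc 1 N, (if k ≤ u then (u:ℝ)/k else x^k)
            ≤ (if k ≤ u then (u:ℝ)/k else 0) + x^k := by
          intro k hk
          split
          · have : (0:ℝ) ≤ x^k := (pow_pos hx0 k).le
            linarith
          · simp
        linarith [Finset.sum_le_sum this, Finset.sum_add_distrib (s := Finset.Icc 1 N)
          (f := fun k => if k ≤ u then (u:ℝ)/k else 0) (g := fun k => x^k)]
    _ ≤ (u:ℝ) + (((u:ℝ) * (1 + Real.log u)) + (u:ℝ)) := by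
        have hgeo : ∑ k ∈ Finset.Icc 1 N, x^k ≤ (u:ℝ) := by
          refine (geom_le hx0.le hx1 N).trans ?_
          show xv u / (1 - xv u) ≤ (u:ℝ)
          rw [show xv u = 1 - 1/(u:ℝ) from rfl]
          have h1 : (1:ℝ) - (1 - 1/(u:ℝ)) = 1/(u:ℝ) := by ring
          rw [h1]
          have h2 : (1 - 1/(u:ℝ)) / (1/(u:ℝ)) = u - 1 := by
            field_simp
          rw [h2]
          linarith
        have hharm : ∑ k ∈ Finset.Icc 1 N, (if k ≤ u then (u:ℝ)/k else 0)
            ≤ (u:ℝ) * (1 + Real.log u) := by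
          rw [← Finset.sum_filter]
          have hsub : (Finset.Icc 1 N).filter (fun k => k ≤ u) ⊆ Finset.Icc 1 u := by
            intro k hk
            simp only [Finset.mem_filter, Finset.mem_Icc] at hk ⊢
            omega
          calc ∑ k ∈ (Finset.Icc 1 N).filter (fun k => k ≤ u), (u:ℝ)/k
              ≤ ∑ k ∈ Finset.Icc 1 u, (u:ℝ)/k := by
                apply Finset.sum_le_sum_of_subset_of_nonneg hsub
                intro k _ _; positivity
            _ = (u:ℝ) * ∑ k ∈ Finset.Icc 1 u, (1:ℝ)/k := by
                rw [Finset.mul_sum]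
                apply Finset.sum_congr rfl
                intros; rw [div_eq_mul_one_div]
            _ ≤ (u:ℝ) * (1 + Real.log u) := by
                apply mul_le_mul_of_nonneg_left (harmonic_le u (by omega)) hu0.le
        linarith
    _ = (u:ℝ) * (3 + Real.log u) := by ring

theorem Hs_tail (N : ℕ) : Hs (xv u) N ((xv u)^(N+1)) ≤ (u:ℝ) := by
  have hx0 := xv_pos hu
  have hx1 := xv_lt_one hu
  have hu0 := u_pos hu
  have hz0 : (0:ℝ) ≤ (xv u)^(N+1) := (pow_pos hx0 _).le
  have hz1 : (xv u)^(N+1) ≤ 1 := pow_le_one₀ hx0.le hx1.le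
  refine (Hs_le hx0 hx1 N hz0 hz1).trans ?_
  have hb := pow_one_sub_le (p := 1/(u:ℝ)) (by positivity) (by
    rw [div_le_one hu0]; exact Nat.one_le_cast.2 (by omega)) (N+1)
  rw [show (1:ℝ) - 1/(u:ℝ) = xv u from rfl] at hb
  -- N * x^(N+1) ≤ u
  have hNpos : (0:ℝ) ≤ (N:ℝ) := Nat.cast_nonneg N
  have hpow : (0:ℝ) < (xv u)^(N+1) := pow_pos hx0 _
  -- from hb : x^{N+1} (1 + (N+1)/u) ≤ 1
  have h2 : (N:ℝ) * (xv u)^(N+1) * (1 + ((N+1:ℕ):ℝ) * (1/(u:ℝ))) ≤ (N:ℝ) := by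
    calc (N:ℝ) * (xv u)^(N+1) * (1 + ((N+1:ℕ):ℝ) * (1/(u:ℝ)))
        = (N:ℝ) * ((xv u)^(N+1) * (1 + ((N+1:ℕ):ℝ) * (1/(u:ℝ)))) := by ring
      _ ≤ (N:ℝ) * 1 := mul_le_mul_of_nonneg_left hb hNpos
      _ = (N:ℝ) := mul_one _
  push_cast at h2
  have h3 : (N:ℝ) * (xv u)^(N+1) + (N:ℝ) * (xv u)^(N+1) * (((N:ℝ)+1) / (u:ℝ)) ≤ (N:ℝ) := by
    calc (N:ℝ) * (xv u)^(N+1) + (N:ℝ) * (xv u)^(N+1) * (((N:ℝ)+1) / (u:ℝ))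
        = (N:ℝ) * (xv u)^(N+1) * (1 + ((N:ℝ)+1) * (1/(u:ℝ))) := by ring
      _ ≤ (N:ℝ) := by push_cast at h2 ⊢; linarith
  -- conclude N x^{N+1} ≤ u
  by_contra hcon
  push_neg at hcon
  have h4 : (0:ℝ) < (N:ℝ) * (xv u)^(N+1) := lt_of_le_of_lt hu0.le hcon
  have h5 : (u:ℝ) * (((N:ℝ)+1)/(u:ℝ)) < (N:ℝ) * (xv u)^(N+1) * (((N:ℝ)+1)/(u:ℝ)) := by
    apply mul_lt_mul_of_pos_right hcon
    positivity
  have h6 : (u:ℝ) * (((N:ℝ)+1)/(u:ℝ)) = (N:ℝ) + 1 := by field_simp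
  nlinarith

theorem Hs_upper (N : ℕ) : Hs (xv u) N (xv u) ≤ 3 * (u:ℝ) * Real.log u := by
  have hx0 := xv_pos hu
  have hx1 := xv_lt_one hu
  have hu0 := u_pos hu
  have iter := Hs_iter hx0 hx1 N N
  have hser := series_bound hu N
  have htail := Hs_tail hu N
  have hlog := log_u_ge_two hu
  nlinarith

theorem quarter_le_pow : (1/4 : ℝ) ≤ (xv u)^u := by
  have hu0 := u_pos hu
  have h8 : (8:ℝ) ≤ u := by exact_mod_cast hu
  have hu1 : (1:ℝ) < u := by linarith
  have hum : (0:ℝ) < (u:ℝ) - 1 := by linarith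
  have hx0 := xv_pos hu
  have hprod : (xv u) * (1 + 1/((u:ℝ)-1)) = 1 := by
    rw [show xv u = 1 - 1/(u:ℝ) from rfl]
    field_simp
    ring
  have hprodpow : (xv u)^u * (1 + 1/((u:ℝ)-1))^u = 1 := by
    rw [← mul_pow, hprod, one_pow]
  have hBpos : (0:ℝ) < (1 + 1/((u:ℝ)-1))^u := by positivity
  have hexp1 : (1 + 1/((u:ℝ)-1)) ≤ Real.exp (1/((u:ℝ)-1)) := by
    have := Real.add_one_le_exp (1/((u:ℝ)-1)); linarith
  have hexp2 : (1 + 1/((u:ℝ)-1))^u ≤ Real.exp ((u:ℝ)/((u:ℝ)-1)) := by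
    calc (1 + 1/((u:ℝ)-1))^u ≤ (Real.exp (1/((u:ℝ)-1)))^u := by
          apply pow_le_pow_left₀ (by positivity) hexp1
      _ = Real.exp ((u:ℕ) * (1/((u:ℝ)-1))) := (Real.exp_nat_mul _ u).symm
      _ = Real.exp ((u:ℝ)/((u:ℝ)-1)) := by rw [mul_one_div]
  have hfrac : (u:ℝ)/((u:ℝ)-1) ≤ 8/7 := by
    rw [div_le_div_iff₀ hum (by norm_num)]
    have : (8:ℝ) ≤ u := by exact_mod_cast hu
    linarith
  have hexp3 : Real.exp ((u:ℝ)/((u:ℝ)-1)) ≤ Real.exp (8/7) := Real.exp_le_exp.2 hfrac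
  have hexp17 : Real.exp (1/7 : ℝ) ≤ 7/6 := by
    have h := Real.add_one_le_exp (-(1/7) : ℝ)
    have hp : (0:ℝ) < Real.exp (-(1/7):ℝ) := Real.exp_pos _
    have h2 : Real.exp ((1/7):ℝ) = (Real.exp (-(1/7):ℝ))⁻¹ := by
      rw [← Real.exp_neg]; norm_num
    rw [h2]
    rw [inv_le_comm₀ hp (by norm_num)]
    linarith
  have hexp4 : Real.exp (8/7 : ℝ) < 4 := by
    have he : Real.exp (8/7 : ℝ) = Real.exp 1 * Real.exp (1/7 : ℝ) := by
      rw [← Real.exp_add]; norm_num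
    have h1 := Real.exp_one_lt_d9
    have hpos17 : (0:ℝ) < Real.exp (1/7:ℝ) := Real.exp_pos _
    rw [he]
    calc Real.exp 1 * Real.exp (1/7:ℝ) ≤ Real.exp 1 * (7/6) :=
          mul_le_mul_of_nonneg_left hexp17 (Real.exp_pos 1).le
      _ < 2.7182818286 * (7/6) := by nlinarith
      _ < 4 := by norm_num
  have hB4 : (1 + 1/((u:ℝ)-1))^u < 4 := lt_of_le_of_lt (hexp2.trans hexp3) hexp4
  -- from A * B = 1 and B < 4: A ≥ 1/4
  nlinarith [pow_pos hx0 u]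

theorem gfun_quarter (t : ℕ) (ht : (t:ℝ) ≤ (u:ℝ) * Real.log u) :
    (1/4:ℝ) ≤ gfun (xv u) t (xv u) := by
  have hx0 := xv_pos hu
  have hx1 := xv_lt_one hu
  have hu0 := u_pos hu
  have jens := gfun_jensen hx0 hx1 t
  have haf : afun (xv u) t ≤ (u:ℝ) := by
    refine (afun_le hx0 hx1 t).trans ?_
    have he : (2 - xv u) = 1 + 1/(u:ℝ) := by
      rw [show xv u = 1 - 1/(u:ℝ) from rfl]; ring
    rw [he]
    have h1 : (1 + 1/(u:ℝ))^t ≤ Real.exp ((t:ℝ)/(u:ℝ)) := by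
      calc (1 + 1/(u:ℝ))^t ≤ (Real.exp (1/(u:ℝ)))^t := by
            apply pow_le_pow_left₀ (by positivity) ?_
            have := Real.add_one_le_exp (1/(u:ℝ)); linarith
        _ = Real.exp ((t:ℕ) * (1/(u:ℝ))) := (Real.exp_nat_mul _ t).symm
        _ = Real.exp ((t:ℝ)/(u:ℝ)) := by rw [mul_one_div]
    refine h1.trans ?_
    have h2 : (t:ℝ)/(u:ℝ) ≤ Real.log u := by
      rw [div_le_iff₀ hu0]
      calc (t:ℝ) ≤ (u:ℝ) * Real.log u := ht
        _ = Real.log u * u := by ring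
    calc Real.exp ((t:ℝ)/(u:ℝ)) ≤ Real.exp (Real.log u) := Real.exp_le_exp.2 h2
      _ = (u:ℝ) := Real.exp_log hu0
  have hmono : (xv u) ^ ((u:ℝ)) ≤ (xv u) ^ (afun (xv u) t) :=
    Real.rpow_le_rpow_of_exponent_ge hx0 hx1.le haf
  have hnat : (xv u) ^ ((u:ℝ)) = (xv u)^(u:ℕ) := Real.rpow_natCast _ u
  have hq := quarter_le_pow hu
  calc (1/4:ℝ) ≤ (xv u)^(u:ℕ) := hq
    _ = (xv u) ^ ((u:ℝ)) := hnat.symm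
    _ ≤ (xv u) ^ (afun (xv u) t) := hmono
    _ ≤ gfun (xv u) t (xv u) := jens

end MainEst

end StraightPathAux

-- appended fragment for testing
namespace StraightPathAux
section GraphSide
variable {n : ℕ}

theorem hsp_refl (H : SimpleGraph (Fin n)) (i : Fin n) : HasStraightPath H i i := by
  refine ⟨0, fun _ => i, rfl, rfl, ?_, fun t => t.elim0⟩
  intro a b hab
  have h1 : a.val < b.val := hab
  have h2 := a.isLt
  have h3 := b.isLt
  omega

theorem hsp_le {H : SimpleGraph (Fin n)} {i j : Fin n} (h : HasStraightPath H i j) : i ≤ j := by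
  obtain ⟨m, f, h0, hl, hm, _⟩ := h
  rw [← h0, ← hl]
  exact hm.monotone (Fin.zero_le _)

theorem hsp_mono {H H' : SimpleGraph (Fin n)} (hle : H ≤ H') {i j : Fin n} :
    HasStraightPath H i j → HasStraightPath H' i j := by
  rintro ⟨m, f, h0, hl, hm, hadj⟩
  exact ⟨m, f, h0, hl, hm, fun t => hle (hadj t)⟩

theorem hsp_step {H : SimpleGraph (Fin n)} {i j : Fin n} (hij : i < j) :
    HasStraightPath H i j ↔ ∃ v, i ≤ v ∧ v < j ∧ HasStraightPath H i v ∧ H.Adj v j := by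
  constructor
  · rintro ⟨m, f, h0, hl, hm, hadj⟩
    match m, f, h0, hl, hm, hadj with
    | 0, f, h0, hl, hm, hadj =>
      exact absurd (h0.symm.trans hl) hij.ne
    | (m+1), f, h0, hl, hm, hadj =>
      refine ⟨f (Fin.last m).castSucc, ?_, ?_, ⟨m, f ∘ Fin.castSucc, ?_, ?_, ?_, ?_⟩, ?_⟩
      · rw [← h0]; exact hm.monotone (Fin.zero_le _)
      · rw [← hl]; exact hm (Fin.castSucc_lt_last (Fin.last m))
      · show f (Fin.castSucc 0) = i
        rw [Fin.castSucc_zero, h0]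
      · rfl
      · exact hm.comp Fin.strictMono_castSucc
      · intro t
        show H.Adj (f (t.castSucc.castSucc)) (f (t.succ.castSucc))
        rw [← Fin.succ_castSucc]
        exact hadj t.castSucc
      · have := hadj (Fin.last m)
        rwa [Fin.succ_last, hl] at this
  · rintro ⟨v, hiv, hvj, ⟨m, f, h0, hl, hm, hadj⟩, hadjvj⟩
    refine ⟨m+1, fun k => if h : k.val < m+1 then f ⟨k.val, h⟩ else j, ?_, ?_, ?_, ?_⟩
    · simp only [show (0 : Fin (m+2)).val = 0 from rfl, dif_pos (by omega : 0 < m+1)]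
      rw [show (⟨0, by omega⟩ : Fin (m+1)) = 0 from rfl, h0]
    · simp only [show (Fin.last (m+1)).val = m+1 from rfl]
      rw [dif_neg (by omega)]
    · intro a b hab
      dsimp only
      have habv : a.val < b.val := hab
      by_cases hb : b.val < m+1
      · have ha : a.val < m+1 := by omega
        simp only [dif_pos ha, dif_pos hb]
        exact hm (show (⟨a.val, ha⟩ : Fin (m+1)) < ⟨b.val, hb⟩ from habv)
      · have hb' : ¬ b.val < m + 1 := hb
        rw [dif_neg hb']
        by_cases ha : a.val < m+1
        · rw [dif_pos ha]
          calc f ⟨a.val, ha⟩ ≤ f (Fin.last m) := hm.monotone (by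
              show a.val ≤ m; omega)
            _ = v := hl
            _ < j := hvj
        · exfalso
          have : a.val < m + 2 := a.isLt
          have : b.val < m + 2 := b.isLt
          omega
    · intro t
      dsimp only
      have hc : (t.castSucc : Fin (m+2)).val = t.val := rfl
      have hs : (t.succ : Fin (m+2)).val = t.val + 1 := rfl
      by_cases ht : t.val < m
      · simp only [hc, hs, dif_pos (show t.val < m+1 by omega),
          dif_pos (show t.val + 1 < m+1 by omega)]
        have := hadj ⟨t.val, ht⟩
        have e1 : ((⟨t.val, ht⟩ : Fin m).castSucc : Fin (m+1)) = ⟨t.val, by omega⟩ := rfl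
        have e2 : ((⟨t.val, ht⟩ : Fin m).succ : Fin (m+1)) = ⟨t.val + 1, by omega⟩ := rfl
        rwa [e1, e2] at this
      · have htm : t.val = m := by omega
        simp only [hc, hs, dif_pos (show t.val < m+1 by omega), dif_neg (show ¬(t.val + 1 < m+1) by omega)]
        have : (⟨t.val, by omega⟩ : Fin (m+1)) = Fin.last m := by
          apply Fin.ext; simp [htm]
        rw [this, hl]
        exact hadjvj

end GraphSide
end StraightPathAux
namespace StraightPathAux
section GraphSide2
variable {n : ℕ}

def Egr (n : ℕ) : Finset (Sym2 (Fin n)) := (⊤ : SimpleGraph (Fin n)).edgeFinset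

theorem mem_Egr {a b : Fin n} : s(a,b) ∈ Egr n ↔ a ≠ b := by
  simp [Egr]

/-- edges with both endpoints in the window [i, i+t] -/
def EW (i : Fin n) (t : ℕ) : Finset (Sym2 (Fin n)) :=
  (Egr n).filter (fun e => ∀ a ∈ e, i ≤ a ∧ a.val ≤ i.val + t)

theorem mem_EW {i : Fin n} {t : ℕ} {a b : Fin n} :
    s(a,b) ∈ EW i t ↔ a ≠ b ∧ (i ≤ a ∧ a.val ≤ i.val + t) ∧ (i ≤ b ∧ b.val ≤ i.val + t) := by
  simp only [EW, Finset.mem_filter, mem_Egr, Sym2.mem_iff]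
  constructor
  · rintro ⟨hne, hall⟩
    exact ⟨hne, hall a (Or.inl rfl), hall b (Or.inr rfl)⟩
  · rintro ⟨hne, ha, hb⟩
    refine ⟨hne, ?_⟩
    rintro c (rfl | rfl)
    · exact ha
    · exact hb

theorem hsp_window {S : Finset (Sym2 (Fin n))} {i v : Fin n} {t : ℕ}
    (hvt : v.val ≤ i.val + t) :
    HasStraightPath (SimpleGraph.fromEdgeSet ↑S) i v ↔
      HasStraightPath (SimpleGraph.fromEdgeSet ↑(S ∩ EW i t)) i v := by
  constructor
  · rintro ⟨m, f, h0, hl, hm, hadj⟩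
    refine ⟨m, f, h0, hl, hm, fun s => ?_⟩
    have hadj' := hadj s
    rw [SimpleGraph.fromEdgeSet_adj] at hadj' ⊢
    obtain ⟨hmem, hne⟩ := hadj'
    refine ⟨?_, hne⟩
    have hbound : ∀ k : Fin (m+1), i ≤ f k ∧ (f k).val ≤ i.val + t := by
      intro k
      constructor
      · rw [← h0]; exact hm.monotone (Fin.zero_le _)
      · have : f k ≤ v := by rw [← hl]; exact hm.monotone (Fin.le_last _)
        have : (f k).val ≤ v.val := this
        omega
    rw [Finset.mem_coe] at hmem ⊢
    rw [Finset.mem_inter]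
    exact ⟨hmem, mem_EW.2 ⟨hne, hbound _, hbound _⟩⟩
  · apply hsp_mono
    apply SimpleGraph.fromEdgeSet_mono
    exact Finset.coe_subset.2 Finset.inter_subset_left

/-- the set of vertices in the window [i, i+t] reachable from i -/
def Rset (i : Fin n) (t : ℕ) (S : Finset (Sym2 (Fin n))) : Finset (Fin n) :=
  Finset.univ.filter (fun v => i ≤ v ∧ v.val ≤ i.val + t ∧
    HasStraightPath (SimpleGraph.fromEdgeSet ↑S) i v)

theorem mem_Rset {i v : Fin n} {t : ℕ} {S : Finset (Sym2 (Fin n))} :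
    v ∈ Rset i t S ↔ i ≤ v ∧ v.val ≤ i.val + t ∧
      HasStraightPath (SimpleGraph.fromEdgeSet ↑S) i v := by
  simp [Rset]

theorem Rset_congr {i : Fin n} {t : ℕ} {S S' : Finset (Sym2 (Fin n))}
    (h : S ∩ EW i t = S' ∩ EW i t) : Rset i t S = Rset i t S' := by
  have key : ∀ (T T' : Finset (Sym2 (Fin n))), T ∩ EW i t = T' ∩ EW i t →
      ∀ v : Fin n, v ∈ Rset i t T → v ∈ Rset i t T' := by
    intro T T' hTT v hv
    rw [mem_Rset] at hv ⊢
    obtain ⟨h1, h2, h3⟩ := hv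
    refine ⟨h1, h2, ?_⟩
    rw [hsp_window h2] at h3
    rw [hsp_window h2, ← hTT]
    exact h3
  ext v
  exact ⟨key S S' h v, key S' S h.symm v⟩

theorem Rset_base (i : Fin n) (S : Finset (Sym2 (Fin n))) : Rset i 0 S = {i} := by
  ext v
  rw [mem_Rset, Finset.mem_singleton]
  constructor
  · rintro ⟨h1, h2, _⟩
    have h1' : i.val ≤ v.val := h1
    exact Fin.ext (by omega)
  · rintro rfl
    exact ⟨le_refl _, by omega, hsp_refl _ _⟩

theorem w_not_mem_Rset {i w : Fin n} {t : ℕ} {S : Finset (Sym2 (Fin n))}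
    (hw : i.val + t < w.val) : w ∉ Rset i t S := by
  rw [mem_Rset]
  rintro ⟨_, h2, _⟩
  omega

theorem Rset_step {i : Fin n} {t : ℕ} {w : Fin n} (hw : w.val = i.val + t + 1)
    (S : Finset (Sym2 (Fin n))) :
    Rset i (t+1) S = if (∃ v ∈ Rset i t S, s(v,w) ∈ S)
      then insert w (Rset i t S) else Rset i t S := by
  have hiw : i < w := by
    rw [Fin.lt_def]; omega
  ext z
  by_cases hz : z.val ≤ i.val + t
  · have hzw : z ≠ w := by
      intro h; rw [h] at hz; omega
    have hmem : z ∈ Rset i (t+1) S ↔ z ∈ Rset i t S := by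
      rw [mem_Rset, mem_Rset]
      constructor
      · rintro ⟨h1, _, h3⟩; exact ⟨h1, hz, h3⟩
      · rintro ⟨h1, _, h3⟩; exact ⟨h1, by omega, h3⟩
    rw [hmem]
    split
    · rw [Finset.mem_insert]
      constructor
      · intro h; exact Or.inr h
      · rintro (rfl | h)
        · exact absurd rfl hzw
        · exact h
    · rfl
  · by_cases hz2 : z.val = i.val + t + 1
    · have hzw : z = w := Fin.ext (by omega)
      subst hzw
      have hiff : z ∈ Rset i (t+1) S ↔ (∃ v ∈ Rset i t S, s(v,z) ∈ S) := by
        rw [mem_Rset]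
        constructor
        · rintro ⟨h1, h2, h3⟩
          rw [hsp_step hiw] at h3
          obtain ⟨v, hiv, hvz, hpath, hadj⟩ := h3
          rw [SimpleGraph.fromEdgeSet_adj] at hadj
          refine ⟨v, ?_, ?_⟩
          · rw [mem_Rset]
            have hvz' : v.val < z.val := hvz
            exact ⟨hiv, by omega, hpath⟩
          · rw [← Finset.mem_coe]; exact hadj.1
        · rintro ⟨v, hv, hvS⟩
          rw [mem_Rset] at hv
          obtain ⟨h1, h2, h3⟩ := hv
          refine ⟨hiw.le, by omega, ?_⟩
          rw [hsp_step hiw]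
          refine ⟨v, h1, by rw [Fin.lt_def]; omega, h3, ?_⟩
          rw [SimpleGraph.fromEdgeSet_adj]
          refine ⟨by rw [Finset.mem_coe]; exact hvS, ?_⟩
          intro h; rw [h] at h2; omega
      rw [hiff]
      split
      · rename_i hex
        exact iff_of_true hex (Finset.mem_insert_self _ _)
      · rename_i hex
        exact iff_of_false hex (fun h => w_not_mem_Rset (by omega : i.val + t < z.val) h)
    · have hbig : i.val + t + 1 < z.val := by omega
      have h1 : z ∉ Rset i (t+1) S := w_not_mem_Rset (by omega)
      have h2 : z ∉ Rset i t S := w_not_mem_Rset (by omega)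
      have hzw : z ≠ w := by
        intro h; rw [h] at hbig; omega
      simp only [h1, false_iff]
      split
      · rw [Finset.mem_insert]
        rintro (rfl | h)
        · exact hzw rfl
        · exact h2 h
      · exact h2

theorem Rset_step_card {i : Fin n} {t : ℕ} {w : Fin n} (hw : w.val = i.val + t + 1)
    (S : Finset (Sym2 (Fin n))) :
    (Rset i (t+1) S).card = if (∃ v ∈ Rset i t S, s(v,w) ∈ S)
      then (Rset i t S).card + 1 else (Rset i t S).card := by
  rw [Rset_step hw]
  split
  · rw [Finset.card_insert_of_notMem (w_not_mem_Rset (by omega))]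
  · rfl

end GraphSide2
end StraightPathAux
namespace StraightPathAux
section GraphSide3
variable {n : ℕ}

def Wset (i : Fin n) (t : ℕ) : Finset (Fin n) :=
  Finset.univ.filter (fun v => i ≤ v ∧ v.val ≤ i.val + t)

theorem Rset_subset_Wset {i : Fin n} {t : ℕ} {S : Finset (Sym2 (Fin n))} :
    Rset i t S ⊆ Wset i t := by
  intro v hv
  rw [mem_Rset] at hv
  simp only [Wset, Finset.mem_filter, Finset.mem_univ, true_and]
  exact ⟨hv.1, hv.2.1⟩

theorem reach_dist {p : ℝ} (i : Fin n) :
    ∀ t : ℕ, i.val + t + 1 ≤ n → ∀ φ : ℕ → ℝ,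
      wsum p (1-p) (Egr n) (fun S => φ (Rset i t S).card)
        = ∑ r ∈ Finset.range (t+2), rho (1-p) t r * φ r := by
  have hpq : p + (1-p) = 1 := by ring
  intro t
  induction t with
  | zero =>
    intro ht φ
    have hcongr : ∀ S ∈ (Egr n).powerset, φ (Rset i 0 S).card = φ 1 := by
      intro S _
      rw [Rset_base, Finset.card_singleton]
    rw [wsum_congr' (Egr n) hcongr, wsum_const hpq]
    simp [rho, Finset.sum_range_succ]
  | succ t ih =>
    intro ht φ
    set x : ℝ := 1 - p with hxdef
    set w : Fin n := ⟨i.val + t + 1, by omega⟩ with hwdef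
    have hwval : w.val = i.val + t + 1 := rfl
    set A : Finset (Sym2 (Fin n)) := (Wset i t).image (fun v => s(v, w)) with hAdef
    have hmemW : ∀ v : Fin n, v ∈ Wset i t → v.val ≤ i.val + t := by
      intro v hv
      simp only [Wset, Finset.mem_filter] at hv
      exact hv.2.2
    have hA_sub : A ⊆ Egr n := by
      intro e he
      rw [hAdef, Finset.mem_image] at he
      obtain ⟨v, hv, rfl⟩ := he
      rw [mem_Egr]
      intro hcon
      have := hmemW v hv
      rw [hcon] at this
      omega
    have hA_EW : ∀ e ∈ A, e ∉ EW i t := by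
      intro e he hEW
      rw [hAdef, Finset.mem_image] at he
      obtain ⟨v, hv, rfl⟩ := he
      simp only [EW, Finset.mem_filter] at hEW
      have := (hEW.2 w (Sym2.mem_mk_right v w)).2
      omega
    have hsplit : (Egr n \ A) ∪ A = Egr n := Finset.sdiff_union_of_subset hA_sub
    have hdisj : Disjoint (Egr n \ A) A := Finset.sdiff_disjoint
    have hEW_Egr : EW i t ⊆ Egr n := Finset.filter_subset _ _
    have hEW_sub : EW i t ⊆ Egr n \ A := by
      intro e he
      rw [Finset.mem_sdiff]
      exact ⟨hEW_Egr he, fun hA => hA_EW e hA he⟩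
    -- the inner computation
    have inner : ∀ S₀ ∈ (Egr n \ A).powerset,
        wsum p x A (fun S₁ => φ (Rset i (t+1) (S₀ ∪ S₁)).card)
          = x^(Rset i t S₀).card * φ (Rset i t S₀).card
            + (1 - x^(Rset i t S₀).card) * φ ((Rset i t S₀).card + 1) := by
      intro S₀ hS₀
      rw [Finset.mem_powerset] at hS₀
      set R : Finset (Fin n) := Rset i t S₀ with hRdef
      set B : Finset (Sym2 (Fin n)) := R.image (fun v => s(v, w)) with hBdef
      have hB_sub : B ⊆ A := by
        rw [hBdef, hAdef]
        exact Finset.image_subset_image Rset_subset_Wset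
      have hBcard : B.card = R.card := by
        rw [hBdef]
        apply Finset.card_image_of_injOn
        intro v hv v' hv' heq
        have hvne : v ≠ w := by
          intro hcon
          have := hmemW v (Rset_subset_Wset hv)
          rw [hcon] at this; omega
        rcases Sym2.eq_iff.1 heq with ⟨h1, _⟩ | ⟨h1, h2⟩
        · exact h1
        · exfalso; exact hvne h1
      have step : ∀ S₁ ∈ A.powerset,
          φ (Rset i (t+1) (S₀ ∪ S₁)).card
            = if Disjoint S₁ B then φ R.card else φ (R.card + 1) := by
        intro S₁ hS₁
        rw [Finset.mem_powerset] at hS₁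
        have hRsame : Rset i t (S₀ ∪ S₁) = R := by
          apply Rset_congr
          rw [Finset.union_inter_distrib_right]
          have : S₁ ∩ EW i t = ∅ := by
            rw [← Finset.disjoint_iff_inter_eq_empty]
            rw [Finset.disjoint_left]
            intro e heS₁ heEW
            exact hA_EW e (hS₁ heS₁) heEW
          rw [this, Finset.union_empty]
        rw [Rset_step_card hwval (S₀ ∪ S₁), hRsame]
        have hcond : (∃ v ∈ R, s(v,w) ∈ S₀ ∪ S₁) ↔ ¬ Disjoint S₁ B := by
          constructor
          · rintro ⟨v, hvR, hvS⟩
            rw [Finset.mem_union] at hvS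
            have hvA : s(v,w) ∈ A := by
              rw [hAdef, Finset.mem_image]
              exact ⟨v, Rset_subset_Wset hvR, rfl⟩
            rcases hvS with h | h
            · exfalso
              exact (Finset.mem_sdiff.1 (hS₀ h)).2 hvA
            · rw [Finset.not_disjoint_iff]
              exact ⟨s(v,w), h, by rw [hBdef, Finset.mem_image]; exact ⟨v, hvR, rfl⟩⟩
          · intro hnd
            rw [Finset.not_disjoint_iff] at hnd
            obtain ⟨e, heS₁, heB⟩ := hnd
            rw [hBdef, Finset.mem_image] at heB
            obtain ⟨v, hvR, rfl⟩ := heB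
            exact ⟨v, hvR, Finset.mem_union_right _ heS₁⟩
        by_cases hD : Disjoint S₁ B
        · rw [if_neg (by rw [hcond]; exact fun h => h hD), if_pos hD]
        · rw [if_pos (hcond.2 hD), if_neg hD]
      rw [wsum_congr' A step, wsum_ite hpq hB_sub (φ R.card) (φ (R.card+1))]
      rw [hBcard]
    -- assemble
    have main_eq : wsum p x (Egr n) (fun S => φ (Rset i (t+1) S).card)
        = wsum p x (Egr n \ A)
            (fun S₀ => x^(Rset i t S₀).card * φ (Rset i t S₀).card
              + (1 - x^(Rset i t S₀).card) * φ ((Rset i t S₀).card + 1)) := by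
      have h1 : wsum p x (Egr n) (fun S => φ (Rset i (t+1) S).card)
          = ∑ S₀ ∈ (Egr n \ A).powerset,
              p ^ S₀.card * x ^ ((Egr n \ A).card - S₀.card) *
                wsum p x A (fun S₁ => φ (Rset i (t+1) (S₀ ∪ S₁)).card) := by
        conv_lhs => rw [show Egr n = (Egr n \ A) ∪ A from hsplit.symm]
        exact wsum_fubini p x hdisj _
      rw [h1]
      calc ∑ S₀ ∈ (Egr n \ A).powerset,
              p ^ S₀.card * x ^ ((Egr n \ A).card - S₀.card) *
                wsum p x A (fun S₁ => φ (Rset i (t+1) (S₀ ∪ S₁)).card)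
          = ∑ S₀ ∈ (Egr n \ A).powerset,
              p ^ S₀.card * x ^ ((Egr n \ A).card - S₀.card) *
                (x^(Rset i t S₀).card * φ (Rset i t S₀).card
                  + (1 - x^(Rset i t S₀).card) * φ ((Rset i t S₀).card + 1)) :=
            Finset.sum_congr rfl (fun S₀ hS₀ => by rw [inner S₀ hS₀])
        _ = wsum p x (Egr n \ A)
              (fun S₀ => x^(Rset i t S₀).card * φ (Rset i t S₀).card
                + (1 - x^(Rset i t S₀).card) * φ ((Rset i t S₀).card + 1)) := rfl
    set ψ : ℕ → ℝ := fun r => x^r * φ r + (1 - x^r) * φ (r+1) with hψdef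
    have hred : ∀ (E' : Finset (Sym2 (Fin n))), EW i t ⊆ E' → E' ⊆ Egr n →
        wsum p x E' (fun S => ψ (Rset i t S).card)
          = wsum p x (EW i t) (fun S => ψ (Rset i t S).card) := by
      intro E' h1 h2
      apply wsum_reduce hpq h1
      intro S S' hSS
      rw [Rset_congr hSS]
    have hfull : wsum p x (Egr n \ A) (fun S => ψ (Rset i t S).card)
        = wsum p x (Egr n) (fun S => ψ (Rset i t S).card) := by
      rw [hred (Egr n \ A) hEW_sub Finset.sdiff_subset, hred (Egr n) hEW_Egr (le_refl _)]
    have hih := ih (by omega) ψ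
    calc wsum p x (Egr n) (fun S => φ (Rset i (t+1) S).card)
        = wsum p x (Egr n \ A) (fun S => ψ (Rset i t S).card) := main_eq
      _ = wsum p x (Egr n) (fun S => ψ (Rset i t S).card) := hfull
      _ = ∑ r ∈ Finset.range (t+2), rho x t r * ψ r := hih
      _ = ∑ r ∈ Finset.range (t+1+2), rho x (t+1) r * φ r := by
          rw [rho_rec x t φ]

end GraphSide3
end StraightPathAux
namespace StraightPathAux
section GraphSide4
variable {n : ℕ}

theorem pair_prob {p : ℝ} {i j : Fin n} (hij : i < j) :
    wsum p (1-p) (Egr n)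
      (fun S => if HasStraightPath (SimpleGraph.fromEdgeSet ↑S) i j then 0 else 1)
      = gfun (1-p) (j.val - i.val - 1) (1-p) := by
  have hpq : p + (1-p) = 1 := by ring
  set x : ℝ := 1 - p with hxdef
  have hijv : i.val < j.val := hij
  set t : ℕ := j.val - i.val - 1 with htdef
  have hwval : j.val = i.val + t + 1 := by omega
  set A : Finset (Sym2 (Fin n)) := (Wset i t).image (fun v => s(v, j)) with hAdef
  have hmemW : ∀ v : Fin n, v ∈ Wset i t → v.val ≤ i.val + t := by
    intro v hv
    simp only [Wset, Finset.mem_filter] at hv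
    exact hv.2.2
  have hA_sub : A ⊆ Egr n := by
    intro e he
    rw [hAdef, Finset.mem_image] at he
    obtain ⟨v, hv, rfl⟩ := he
    rw [mem_Egr]
    intro hcon
    have := hmemW v hv
    rw [hcon] at this
    omega
  have hA_EW : ∀ e ∈ A, e ∉ EW i t := by
    intro e he hEW
    rw [hAdef, Finset.mem_image] at he
    obtain ⟨v, hv, rfl⟩ := he
    simp only [EW, Finset.mem_filter] at hEW
    have := (hEW.2 j (Sym2.mem_mk_right v j)).2
    omega
  have hsplit : (Egr n \ A) ∪ A = Egr n := Finset.sdiff_union_of_subset hA_sub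
  have hdisj : Disjoint (Egr n \ A) A := Finset.sdiff_disjoint
  have hEW_Egr : EW i t ⊆ Egr n := Finset.filter_subset _ _
  have hEW_sub : EW i t ⊆ Egr n \ A := by
    intro e he
    rw [Finset.mem_sdiff]
    exact ⟨hEW_Egr he, fun hA => hA_EW e hA he⟩
  have inner : ∀ S₀ ∈ (Egr n \ A).powerset,
      wsum p x A (fun S₁ =>
        if HasStraightPath (SimpleGraph.fromEdgeSet ↑(S₀ ∪ S₁)) i j then (0:ℝ) else 1)
        = x^(Rset i t S₀).card := by
    intro S₀ hS₀
    rw [Finset.mem_powerset] at hS₀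
    set R : Finset (Fin n) := Rset i t S₀ with hRdef
    set B : Finset (Sym2 (Fin n)) := R.image (fun v => s(v, j)) with hBdef
    have hB_sub : B ⊆ A := by
      rw [hBdef, hAdef]
      exact Finset.image_subset_image Rset_subset_Wset
    have hBcard : B.card = R.card := by
      rw [hBdef]
      apply Finset.card_image_of_injOn
      intro v hv v' hv' heq
      have hvne : v ≠ j := by
        intro hcon
        have := hmemW v (Rset_subset_Wset hv)
        rw [hcon] at this; omega
      rcases Sym2.eq_iff.1 heq with ⟨h1, _⟩ | ⟨h1, h2⟩
      · exact h1
      · exfalso; exact hvne h1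
    have step : ∀ S₁ ∈ A.powerset,
        (if HasStraightPath (SimpleGraph.fromEdgeSet ↑(S₀ ∪ S₁)) i j then (0:ℝ) else 1)
          = if Disjoint S₁ B then (1:ℝ) else 0 := by
      intro S₁ hS₁
      rw [Finset.mem_powerset] at hS₁
      have hRsame : Rset i t (S₀ ∪ S₁) = R := by
        apply Rset_congr
        rw [Finset.union_inter_distrib_right]
        have : S₁ ∩ EW i t = ∅ := by
          rw [← Finset.disjoint_iff_inter_eq_empty, Finset.disjoint_left]
          intro e heS₁ heEW
          exact hA_EW e (hS₁ heS₁) heEW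
        rw [this, Finset.union_empty]
      have hcond : HasStraightPath (SimpleGraph.fromEdgeSet ↑(S₀ ∪ S₁)) i j
          ↔ ¬ Disjoint S₁ B := by
        rw [hsp_step hij]
        constructor
        · rintro ⟨v, hiv, hvj, hpath, hadj⟩
          rw [SimpleGraph.fromEdgeSet_adj] at hadj
          have hvjv : v.val < j.val := hvj
          have hvR : v ∈ R := by
            rw [← hRsame, mem_Rset]
            exact ⟨hiv, by omega, hpath⟩
          have hvS : s(v,j) ∈ S₀ ∪ S₁ := by
            rw [← Finset.mem_coe]; exact hadj.1
          rw [Finset.mem_union] at hvS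
          rcases hvS with h | h
          · exfalso
            have hvA : s(v,j) ∈ A := by
              rw [hAdef, Finset.mem_image]
              exact ⟨v, Rset_subset_Wset hvR, rfl⟩
            exact (Finset.mem_sdiff.1 (hS₀ h)).2 hvA
          · rw [Finset.not_disjoint_iff]
            exact ⟨s(v,j), h, by rw [hBdef, Finset.mem_image]; exact ⟨v, hvR, rfl⟩⟩
        · intro hnd
          rw [Finset.not_disjoint_iff] at hnd
          obtain ⟨e, heS₁, heB⟩ := hnd
          rw [hBdef, Finset.mem_image] at heB
          obtain ⟨v, hvR, rfl⟩ := heB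
          have hvmem := mem_Rset.1 (hRsame ▸ hvR : v ∈ Rset i t (S₀ ∪ S₁))
          obtain ⟨h1, h2, h3⟩ := hvmem
          refine ⟨v, h1, by rw [Fin.lt_def]; omega, h3, ?_⟩
          rw [SimpleGraph.fromEdgeSet_adj]
          refine ⟨by rw [Finset.mem_coe]; exact Finset.mem_union_right _ heS₁, ?_⟩
          intro h; rw [h] at h2; omega
      by_cases hD : Disjoint S₁ B
      · rw [if_neg (by rw [hcond]; exact fun h => h hD), if_pos hD]
      · rw [if_pos (hcond.2 hD), if_neg hD]
    rw [wsum_congr' A step, wsum_ite hpq hB_sub 1 0, hBcard]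
    ring
  have main_eq : wsum p x (Egr n)
      (fun S => if HasStraightPath (SimpleGraph.fromEdgeSet ↑S) i j then (0:ℝ) else 1)
      = wsum p x (Egr n \ A) (fun S₀ => x^(Rset i t S₀).card) := by
    have h1 : wsum p x (Egr n)
        (fun S => if HasStraightPath (SimpleGraph.fromEdgeSet ↑S) i j then (0:ℝ) else 1)
        = ∑ S₀ ∈ (Egr n \ A).powerset,
            p ^ S₀.card * x ^ ((Egr n \ A).card - S₀.card) *
              wsum p x A (fun S₁ =>
                if HasStraightPath (SimpleGraph.fromEdgeSet ↑(S₀ ∪ S₁)) i j then (0:ℝ) else 1) := by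
      conv_lhs => rw [show Egr n = (Egr n \ A) ∪ A from hsplit.symm]
      exact wsum_fubini p x hdisj _
    rw [h1]
    calc ∑ S₀ ∈ (Egr n \ A).powerset,
            p ^ S₀.card * x ^ ((Egr n \ A).card - S₀.card) *
              wsum p x A (fun S₁ =>
                if HasStraightPath (SimpleGraph.fromEdgeSet ↑(S₀ ∪ S₁)) i j then (0:ℝ) else 1)
        = ∑ S₀ ∈ (Egr n \ A).powerset,
            p ^ S₀.card * x ^ ((Egr n \ A).card - S₀.card) * (x^(Rset i t S₀).card) :=
          Finset.sum_congr rfl (fun S₀ hS₀ => by rw [inner S₀ hS₀])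
      _ = wsum p x (Egr n \ A) (fun S₀ => x^(Rset i t S₀).card) := rfl
  have hred : ∀ (E' : Finset (Sym2 (Fin n))), EW i t ⊆ E' → E' ⊆ Egr n →
      wsum p x E' (fun S => x^(Rset i t S).card)
        = wsum p x (EW i t) (fun S => x^(Rset i t S).card) := by
    intro E' h1 h2
    apply wsum_reduce hpq h1
    intro S S' hSS
    rw [Rset_congr hSS]
  have hfull : wsum p x (Egr n \ A) (fun S => x^(Rset i t S).card)
      = wsum p x (Egr n) (fun S => x^(Rset i t S).card) := by
    rw [hred (Egr n \ A) hEW_sub Finset.sdiff_subset, hred (Egr n) hEW_Egr (le_refl _)]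
  have hdist := reach_dist (p := p) i t (by omega) (fun r => x^r)
  calc wsum p x (Egr n)
        (fun S => if HasStraightPath (SimpleGraph.fromEdgeSet ↑S) i j then (0:ℝ) else 1)
      = wsum p x (Egr n \ A) (fun S₀ => x^(Rset i t S₀).card) := main_eq
    _ = wsum p x (Egr n) (fun S => x^(Rset i t S).card) := hfull
    _ = ∑ r ∈ Finset.range (t+2), rho x t r * x^r := hdist
    _ = gfun x t x := rfl

end GraphSide4
end StraightPathAux
namespace StraightPathAux
section GraphSide5
variable {n : ℕ}

theorem optDef_formula (n : ℕ) (p : ℝ) :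
    optDeficiency n p = ∑ i : Fin n, Hs (1-p) (n - 1 - i.val) (1-p) := by
  have hpq : p + (1-p) = 1 := by ring
  set x : ℝ := 1 - p with hxdef
  have step1 : optDeficiency n p = wsum p x (Egr n)
      (fun S => ((deficiency (SimpleGraph.fromEdgeSet (↑S : Set (Sym2 (Fin n))))) : ℝ)) := by
    unfold optDeficiency graphExpect wsum
    have hE : ∀ h1 : Fintype ((⊤ : SimpleGraph (Fin n)).edgeSet),
        @SimpleGraph.edgeFinset _ _ h1 = Egr n := by
      intro h1
      unfold Egr SimpleGraph.edgeFinset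
      exact congrArg (fun i : Fintype ((⊤ : SimpleGraph (Fin n)).edgeSet) =>
        @Set.toFinset _ _ i) (Subsingleton.elim h1 _)
    simp only [hE]
    rfl
  have hdef : ∀ H : SimpleGraph (Fin n), ((deficiency H : ℕ) : ℝ)
      = ∑ pq : Fin n × Fin n,
          (if pq.1 < pq.2 ∧ ¬ HasStraightPath H pq.1 pq.2 then (1:ℝ) else 0) := by
    intro H
    unfold deficiency
    rw [Finset.card_filter]
    push_cast
    rfl
  have step2 : optDeficiency n p = ∑ pq : Fin n × Fin n,
      wsum p x (Egr n) (fun S =>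
        if pq.1 < pq.2 ∧ ¬ HasStraightPath (SimpleGraph.fromEdgeSet ↑S) pq.1 pq.2
        then (1:ℝ) else 0) := by
    rw [step1]
    unfold wsum
    simp_rw [hdef, Finset.mul_sum]
    rw [Finset.sum_comm]
  have step3 : ∀ (i j : Fin n),
      wsum p x (Egr n) (fun S =>
        if i < j ∧ ¬ HasStraightPath (SimpleGraph.fromEdgeSet ↑S) i j then (1:ℝ) else 0)
      = if i < j then gfun x (j.val - i.val - 1) x else 0 := by
    intro i j
    by_cases hij : i < j
    · rw [if_pos hij, ← pair_prob (p := p) hij]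
      apply wsum_congr'
      intro S _
      by_cases h : HasStraightPath (SimpleGraph.fromEdgeSet (↑S : Set (Sym2 (Fin n)))) i j
      · rw [if_pos h, if_neg (by tauto)]
      · rw [if_neg h, if_pos ⟨hij, h⟩]
    · rw [if_neg hij]
      have : ∀ S ∈ (Egr n).powerset,
          (if i < j ∧ ¬ HasStraightPath (SimpleGraph.fromEdgeSet (↑S : Set (Sym2 (Fin n)))) i j
            then (1:ℝ) else 0) = 0 := by
        intro S _
        rw [if_neg (by tauto)]
      rw [wsum_congr' _ this, wsum_const hpq]
  have inner_eq : ∀ i : Fin n,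
      ∑ j ∈ Finset.univ.filter (fun j => i < j), gfun x (j.val - i.val - 1) x
        = Hs x (n - 1 - i.val) x := by
    intro i
    show _ = ∑ t ∈ Finset.range (n - 1 - i.val), gfun x t x
    apply Finset.sum_nbij' (i := fun j => j.val - i.val - 1)
      (j := fun t => if h : i.val + t + 1 < n then (⟨i.val + t + 1, h⟩ : Fin n) else i)
    · intro j hj
      simp only [Finset.mem_filter, Finset.mem_univ, true_and] at hj
      have h1 : i.val < j.val := hj
      have h2 := j.isLt
      rw [Finset.mem_range]
      omega
    · intro t ht
      rw [Finset.mem_range] at ht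
      have hlt : i.val + t + 1 < n := by
        have := i.isLt
        omega
      rw [dif_pos hlt]
      simp only [Finset.mem_filter, Finset.mem_univ, true_and]
      rw [Fin.lt_def]
      simp only []
      omega
    · intro j hj
      simp only [Finset.mem_filter, Finset.mem_univ, true_and] at hj
      have h1 : i.val < j.val := hj
      have h2 := j.isLt
      have he : i.val + (j.val - i.val - 1) + 1 = j.val := by omega
      rw [dif_pos (by omega)]
      apply Fin.ext
      simp only []
      omega
    · intro t ht
      rw [Finset.mem_range] at ht
      have hlt : i.val + t + 1 < n := by
        have := i.isLt
        omega
      rw [dif_pos hlt]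
      simp only []
      omega
    · intro j _
      rfl
  rw [step2, Fintype.sum_prod_type]
  apply Finset.sum_congr rfl
  intro i _
  calc ∑ j : Fin n, wsum p x (Egr n) (fun S =>
        if i < j ∧ ¬ HasStraightPath (SimpleGraph.fromEdgeSet ↑S) i j then (1:ℝ) else 0)
      = ∑ j : Fin n, (if i < j then gfun x (j.val - i.val - 1) x else 0) := by
        apply Finset.sum_congr rfl
        intro j _
        exact step3 i j
    _ = ∑ j ∈ Finset.univ.filter (fun j => i < j), gfun x (j.val - i.val - 1) x := by
        rw [Finset.sum_filter]
    _ = Hs x (n - 1 - i.val) x := inner_eq i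

end GraphSide5
end StraightPathAux
namespace StraightPathAux

theorem filter_card_eq {n D : ℕ} (hD : D ≤ n) :
    (Finset.univ.filter (fun i : Fin n => i.val + D + 1 ≤ n)).card = n - D := by
  rw [show n - D = (Finset.range (n - D)).card from (Finset.card_range _).symm]
  refine Finset.card_bij' (fun (i : Fin n) _ => i.val)
    (fun t ht => (⟨t, by have := Finset.mem_range.1 ht; omega⟩ : Fin n)) ?_ ?_ ?_ ?_
  · intro a ha
    simp only [Finset.mem_filter, Finset.mem_univ, true_and] at ha
    show a.val ∈ Finset.range (n - D)
    rw [Finset.mem_range]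
    omega
  · intro a ha
    have h1 := Finset.mem_range.1 ha
    simp only [Finset.mem_filter, Finset.mem_univ, true_and]
    show a + D + 1 ≤ n
    omega
  · intro a ha
    rfl
  · intro a ha
    rfl

end StraightPathAux

open StraightPathAux in
theorem stmt_7 :
    ∃ c C : ℝ, 0 < c ∧ c ≤ C ∧
      ∀ u : ℕ, 8 ≤ u → ∀ p : ℝ, p = 1 / (u : ℝ) →
      ∀ n : ℕ, (2 / p) * Real.log (1 / p) ≤ (n : ℝ) →
        c * ((n : ℝ) / p) * Real.log (1 / p) ≤ optDeficiency n p ∧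
          optDeficiency n p ≤ C * ((n : ℝ) / p) * Real.log (1 / p) := by
  refine ⟨1/16, 3, by norm_num, by norm_num, ?_⟩
  intro u hu p hp n hn
  have hu0 : (0:ℝ) < u := u_pos hu
  have hx0 : 0 < xv u := xv_pos hu
  have hx1 : xv u < 1 := xv_lt_one hu
  have hlog2 : 2 ≤ Real.log u := log_u_ge_two hu
  have h8 : (8:ℝ) ≤ u := by exact_mod_cast hu
  have hL16 : (16:ℝ) ≤ (u:ℝ) * Real.log u := by nlinarith
  have hLpos : (0:ℝ) < (u:ℝ) * Real.log u := by linarith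
  have hdiv : (1:ℝ)/p = (u:ℝ) := by rw [hp, one_div_one_div]
  have hlogp : Real.log (1/p) = Real.log u := by rw [hdiv]
  have hnp : (n:ℝ)/p = (n:ℝ) * u := by rw [hp]; field_simp
  have hn' : 2 * ((u:ℝ) * Real.log u) ≤ (n:ℝ) := by
    have h2p : (2:ℝ)/p = 2*u := by rw [hp]; field_simp
    rw [hlogp, h2p] at hn
    linarith
  have hxp : 1 - p = xv u := by rw [hp]; rfl
  have hform : optDeficiency n p = ∑ i : Fin n, Hs (xv u) (n - 1 - i.val) (xv u) := by
    rw [optDef_formula n p, hxp]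
  rw [hnp, hlogp]
  constructor
  · -- lower bound
    set D : ℕ := Nat.floor ((u:ℝ) * Real.log u) with hDdef
    have hD_le : (D:ℝ) ≤ (u:ℝ) * Real.log u := Nat.floor_le hLpos.le
    have hD_ge : (u:ℝ) * Real.log u - 1 ≤ (D:ℝ) := by
      have := Nat.lt_floor_add_one ((u:ℝ) * Real.log u)
      linarith
    have hDn2 : (D:ℝ) ≤ (n:ℝ)/2 := by linarith
    have hn32 : (32:ℝ) ≤ (n:ℝ) := by linarith
    have hDn : D ≤ n := by
      have : (D:ℝ) ≤ (n:ℝ) := by linarith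
      exact_mod_cast this
    have per_i : ∀ i : Fin n, i.val + D + 1 ≤ n → (D:ℝ)/4 ≤ Hs (xv u) (n - 1 - i.val) (xv u) := by
      intro i hi
      have step1 : (D:ℝ)/4 ≤ Hs (xv u) D (xv u) := by
        have hterm : ∀ t ∈ Finset.range D, (1/4:ℝ) ≤ gfun (xv u) t (xv u) := by
          intro t ht
          rw [Finset.mem_range] at ht
          apply gfun_quarter hu t
          have : (t:ℝ) < (D:ℝ) := by exact_mod_cast ht
          linarith
        calc (D:ℝ)/4 = ∑ _t ∈ Finset.range D, (1/4:ℝ) := by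
              rw [Finset.sum_const, Finset.card_range, nsmul_eq_mul]; ring
          _ ≤ ∑ t ∈ Finset.range D, gfun (xv u) t (xv u) := Finset.sum_le_sum hterm
          _ = Hs (xv u) D (xv u) := rfl
      refine step1.trans (Hs_mono hx0 hx1 (by omega) hx0.le)
    have hsum : ((n - D : ℕ):ℝ) * ((D:ℝ)/4) ≤ ∑ i : Fin n, Hs (xv u) (n - 1 - i.val) (xv u) := by
      have h1 : ∑ i ∈ Finset.univ.filter (fun i : Fin n => i.val + D + 1 ≤ n), ((D:ℝ)/4)
          ≤ ∑ i ∈ Finset.univ.filter (fun i : Fin n => i.val + D + 1 ≤ n),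
              Hs (xv u) (n - 1 - i.val) (xv u) := by
        apply Finset.sum_le_sum
        intro i hi
        simp only [Finset.mem_filter, Finset.mem_univ, true_and] at hi
        exact per_i i hi
      have h2 : ∑ i ∈ Finset.univ.filter (fun i : Fin n => i.val + D + 1 ≤ n),
            Hs (xv u) (n - 1 - i.val) (xv u)
          ≤ ∑ i : Fin n, Hs (xv u) (n - 1 - i.val) (xv u) := by
        apply Finset.sum_le_sum_of_subset_of_nonneg (Finset.filter_subset _ _)
        intro i _ _
        exact Hs_nonneg hx0 hx1 _ hx0.le
      have h3 : ∑ i ∈ Finset.univ.filter (fun i : Fin n => i.val + D + 1 ≤ n), ((D:ℝ)/4)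
          = ((n - D : ℕ):ℝ) * ((D:ℝ)/4) := by
        rw [Finset.sum_const, filter_card_eq hDn, nsmul_eq_mul]
      linarith
    rw [hform]
    refine le_trans ?_ hsum
    have hcast : ((n - D : ℕ):ℝ) = (n:ℝ) - (D:ℝ) := by
      rw [Nat.cast_sub hDn]
    rw [hcast]
    have hfact1 : (n:ℝ) - D ≥ (n:ℝ)/2 := by linarith
    have hfact2 : (D:ℝ) ≥ (15/16) * ((u:ℝ) * Real.log u) := by
      have : (1:ℝ) ≤ ((u:ℝ) * Real.log u)/16 := by linarith
      linarith
    calc (1/16:ℝ) * ((n:ℝ) * u) * Real.log u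
        = (1/16) * ((n:ℝ) * ((u:ℝ) * Real.log u)) := by ring
      _ ≤ ((n:ℝ)/2) * ((15/16) * ((u:ℝ) * Real.log u) / 4) := by nlinarith
      _ ≤ ((n:ℝ) - D) * ((D:ℝ)/4) := by
          apply mul_le_mul hfact1 ?_ ?_ (by linarith)
          · linarith
          · positivity
  · -- upper bound
    rw [hform]
    have hub : ∀ i : Fin n, Hs (xv u) (n - 1 - i.val) (xv u) ≤ 3 * (u:ℝ) * Real.log u :=
      fun i => Hs_upper hu _
    calc ∑ i : Fin n, Hs (xv u) (n - 1 - i.val) (xv u)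
        ≤ ∑ _i : Fin n, 3 * (u:ℝ) * Real.log u := Finset.sum_le_sum (fun i _ => hub i)
      _ = (n:ℝ) * (3 * (u:ℝ) * Real.log u) := by
          rw [Finset.sum_const, Finset.card_univ, Fintype.card_fin, nsmul_eq_mul]
      _ = 3 * ((n:ℝ) * u) * Real.log u := by ring
end
end

section
/- Let p ∈ (0,1), let n ≥ 2 be an integer, and let G be a graph on [n] with m edges, where m ≤ (n/8)·log_{1/(1−p)} n. Then for H ~ D(G,p), the expected deficiency satisfies E[f(H)] ≥ n^{3/2}/8. -/
open Finset

attribute [local instance] Classical.propDecidable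

noncomputable section

/-! ### Auxiliary lemmas -/

lemma my_binom {α : Type*} [DecidableEq α] (A : Finset α) (x y : ℝ) :
    ∑ S ∈ A.powerset, x ^ S.card * y ^ (A.card - S.card) = (x + y) ^ A.card := by
  rw [← Finset.prod_const (x + y), Finset.prod_add]
  apply Finset.sum_congr rfl
  intro S hS
  rw [Finset.prod_const, Finset.prod_const, Finset.card_sdiff_of_subset (Finset.mem_powerset.mp hS)]

lemma no_path_left {n : ℕ} {H : SimpleGraph (Fin n)} {i j : Fin n}
    (hij : i < j) (hiso : ∀ k, ¬ H.Adj i k) : ¬ HasStraightPath H i j := by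
  rintro ⟨m, f, h0, hl, hmono, hadj⟩
  cases m with
  | zero =>
    have : f 0 = f (Fin.last 0) := rfl
    rw [h0, hl] at this
    exact absurd this (ne_of_lt hij)
  | succ m =>
    have h := hadj ⟨0, Nat.succ_pos m⟩
    have h0' : (⟨0, Nat.succ_pos m⟩ : Fin (m+1)).castSucc = (0 : Fin (m+2)) := rfl
    rw [h0', h0] at h
    exact hiso _ h

lemma no_path_right {n : ℕ} {H : SimpleGraph (Fin n)} {i j : Fin n}
    (hij : i < j) (hiso : ∀ k, ¬ H.Adj j k) : ¬ HasStraightPath H i j := by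
  rintro ⟨m, f, h0, hl, hmono, hadj⟩
  cases m with
  | zero =>
    have : f 0 = f (Fin.last 0) := rfl
    rw [h0, hl] at this
    exact absurd this (ne_of_lt hij)
  | succ m =>
    have h := hadj ⟨m, Nat.lt_succ_self m⟩
    have h0' : (⟨m, Nat.lt_succ_self m⟩ : Fin (m+1)).succ = Fin.last (m+1) := rfl
    rw [h0', hl] at h
    exact hiso _ h.symm

lemma count_lemma {n : ℕ} (H : SimpleGraph (Fin n)) :
    (n - 1) * (univ.filter fun i : Fin n => ∀ k, ¬ H.Adj i k).card ≤ 2 * deficiency H := by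
  classical
  set Iso : Finset (Fin n) := univ.filter fun i : Fin n => ∀ k, ¬ H.Adj i k with hIso
  set D : Finset (Fin n × Fin n) := univ.filter fun pq : Fin n × Fin n =>
    pq.1 < pq.2 ∧ ¬ HasStraightPath H pq.1 pq.2 with hD
  set A1 : Finset (Fin n × Fin n) := univ.filter fun pq => pq.1 < pq.2 ∧ pq.1 ∈ Iso with hA1
  set A2 : Finset (Fin n × Fin n) := univ.filter fun pq => pq.1 < pq.2 ∧ pq.2 ∈ Iso with hA2
  have hiso_mem : ∀ i : Fin n, i ∈ Iso ↔ ∀ k, ¬ H.Adj i k := by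
    intro i; simp [hIso]
  have h1 : A1 ⊆ D := by
    intro pq hpq
    simp only [hA1, mem_filter, mem_univ, true_and] at hpq
    simp only [hD, mem_filter, mem_univ, true_and]
    exact ⟨hpq.1, no_path_left hpq.1 ((hiso_mem _).mp hpq.2)⟩
  have h2 : A2 ⊆ D := by
    intro pq hpq
    simp only [hA2, mem_filter, mem_univ, true_and] at hpq
    simp only [hD, mem_filter, mem_univ, true_and]
    exact ⟨hpq.1, no_path_right hpq.1 ((hiso_mem _).mp hpq.2)⟩
  have key : A1.card + A2.card = (n - 1) * Iso.card := by
    rw [Finset.card_filter, Finset.card_filter]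
    rw [Fintype.sum_prod_type, Fintype.sum_prod_type]
    rw [Finset.sum_comm (f := fun i j => if (i : Fin n) < j ∧ j ∈ Iso then 1 else 0)]
    rw [← Finset.sum_add_distrib]
    have : ∀ a : Fin n,
        ((∑ b : Fin n, if a < b ∧ a ∈ Iso then 1 else 0) +
         (∑ b : Fin n, if b < a ∧ a ∈ Iso then 1 else 0)) =
        if a ∈ Iso then n - 1 else 0 := by
      intro a
      rw [← Finset.sum_add_distrib]
      by_cases ha : a ∈ Iso
      · simp only [ha, and_true, if_pos]
        have : ∀ b : Fin n, ((if a < b then 1 else 0) + (if b < a then 1 else 0)) =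
            if a ≠ b then 1 else 0 := by
          intro b
          rcases lt_trichotomy a b with h | h | h
          · simp [h, not_lt_of_gt h, ne_of_lt h]
          · simp [h]
          · simp [h, not_lt_of_gt h, (ne_of_lt h).symm]
        rw [Finset.sum_congr rfl fun b _ => this b]
        rw [← Finset.card_filter, Finset.filter_ne, Finset.card_erase_of_mem (mem_univ a),
          Finset.card_univ, Fintype.card_fin]
      · simp [ha]
    rw [Finset.sum_congr rfl fun a _ => this a]
    rw [Finset.sum_ite_mem, Finset.univ_inter, Finset.sum_const, smul_eq_mul, mul_comm]
  have := Finset.card_le_card h1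
  have := Finset.card_le_card h2
  have hD' : D.card = deficiency H := rfl
  omega

lemma prob_isolated {n : ℕ} (G : SimpleGraph (Fin n)) (p : ℝ) (i : Fin n) :
    graphProb G p (fun H => ∀ k, ¬ H.Adj i k)
      = (1 - p) ^ (G.edgeFinset.filter (fun e => i ∈ e)).card := by
  classical
  set E := G.edgeFinset with hE
  set E' := E.filter (fun e => i ∉ e) with hE'
  have hset : E.powerset.filter
      (fun S : Finset (Sym2 (Fin n)) => ∀ k, ¬ (SimpleGraph.fromEdgeSet (S : Set (Sym2 (Fin n)))).Adj i k)
      = E'.powerset := by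
    ext S
    simp only [mem_filter, Finset.mem_powerset, hE']
    constructor
    · rintro ⟨hSE, hiso⟩ e heS
      have heE : e ∈ E := hSE heS
      refine Finset.mem_filter.mpr ⟨heE, ?_⟩
      intro hie
      have hnd : ¬ e.IsDiag := by
        have : e ∈ G.edgeSet := by rwa [← SimpleGraph.mem_edgeFinset]
        exact G.not_isDiag_of_mem_edgeSet this
      have hspec := Sym2.other_spec' hie
      have hne : i ≠ Sym2.Mem.other' hie := by
        intro hcontra
        apply hnd
        rw [← hspec, ← hcontra]
        exact Sym2.mk_isDiag_iff.mpr rfl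
      apply hiso (Sym2.Mem.other' hie)
      rw [SimpleGraph.fromEdgeSet_adj]
      refine ⟨?_, hne⟩
      rw [hspec]
      exact_mod_cast heS
    · intro hS
      have hSE : S ⊆ E := fun e he => (Finset.mem_filter.mp (hS he)).1
      refine ⟨hSE, ?_⟩
      intro k hadj
      rw [SimpleGraph.fromEdgeSet_adj] at hadj
      have : s(i, k) ∈ S := by exact_mod_cast hadj.1
      have := (Finset.mem_filter.mp (hS this)).2
      exact this (Sym2.mem_mk_left i k)
  simp only [graphProb, ← hE]
  rw [Finset.filter_congr_decidable] at hset ⊢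
  rw [hset]
  have hE'sub : E' ⊆ E := Finset.filter_subset _ _
  have hcard : E'.card ≤ E.card := Finset.card_le_card hE'sub
  have hTcard : E.card - E'.card = (E.filter (fun e => i ∈ e)).card := by
    have h2 := Finset.card_filter_add_card_filter_not (s := E) (p := fun e => i ∈ e)
    have h3 : E'.card = (E.filter (fun e => ¬ i ∈ e)).card := by
      rw [hE']
    rw [h3] at hcard ⊢
    omega
  have : ∀ S ∈ E'.powerset,
      p ^ S.card * (1 - p) ^ (E.card - S.card)
      = (1 - p) ^ (E.card - E'.card) * (p ^ S.card * (1 - p) ^ (E'.card - S.card)) := by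
    intro S hS
    have hSc : S.card ≤ E'.card := Finset.card_le_card (Finset.mem_powerset.mp hS)
    have : E.card - S.card = (E.card - E'.card) + (E'.card - S.card) := by omega
    rw [this, pow_add]; ring
  rw [Finset.sum_congr rfl this, ← Finset.mul_sum, my_binom]
  norm_num [hTcard]

lemma t_sum {n : ℕ} (G : SimpleGraph (Fin n)) :
    ∑ i : Fin n, (G.edgeFinset.filter (fun e => i ∈ e)).card = 2 * G.edgeFinset.card := by
  classical
  have h := SimpleGraph.sum_degrees_eq_twice_card_edges G
  rw [← h]
  apply Finset.sum_congr rfl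
  intro i _
  rw [← SimpleGraph.card_incidenceFinset_eq_degree, SimpleGraph.incidenceFinset_eq_filter]

-- Expectation chain lemma
lemma expect_chain {n : ℕ} (G : SimpleGraph (Fin n)) (p : ℝ) (hp0 : 0 ≤ p) (hp1 : p ≤ 1)
    (hn : 1 ≤ n) :
    ((n:ℝ) - 1) / 2 * ∑ i : Fin n, (1 - p) ^ (G.edgeFinset.filter (fun e => i ∈ e)).card
      ≤ graphExpect G p (fun H => (deficiency H : ℝ)) := by
  classical
  have hw : ∀ S : Finset (Sym2 (Fin n)),
      0 ≤ p ^ S.card * (1 - p) ^ (G.edgeFinset.card - S.card) := by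
    intro S
    have : (0:ℝ) ≤ 1 - p := by linarith
    positivity
  calc ((n:ℝ) - 1) / 2 * ∑ i : Fin n, (1 - p) ^ (G.edgeFinset.filter (fun e => i ∈ e)).card
      = ∑ i : Fin n, ((n:ℝ) - 1) / 2 * graphProb G p (fun H => ∀ k, ¬ H.Adj i k) := by
        rw [Finset.mul_sum]
        exact Finset.sum_congr rfl fun i _ => by rw [prob_isolated]
    _ = ∑ i : Fin n, ∑ S ∈ G.edgeFinset.powerset,
          (if (∀ k, ¬ (SimpleGraph.fromEdgeSet (S : Set (Sym2 (Fin n)))).Adj i k) then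
            ((n:ℝ) - 1) / 2 * (p ^ S.card * (1 - p) ^ (G.edgeFinset.card - S.card)) else 0) := by
        apply Finset.sum_congr rfl
        intro i _
        rw [graphProb, Finset.sum_filter, Finset.mul_sum]
        apply Finset.sum_congr rfl
        intro S _
        by_cases h : (∀ k, ¬ (SimpleGraph.fromEdgeSet (S : Set (Sym2 (Fin n)))).Adj i k) <;>
          simp [h]
    _ = ∑ S ∈ G.edgeFinset.powerset,
          p ^ S.card * (1 - p) ^ (G.edgeFinset.card - S.card) *
            (((n:ℝ) - 1) / 2 *
              ((univ.filter fun i : Fin n =>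
                ∀ k, ¬ (SimpleGraph.fromEdgeSet (S : Set (Sym2 (Fin n)))).Adj i k).card : ℝ)) := by
        rw [Finset.sum_comm]
        apply Finset.sum_congr rfl
        intro S _
        rw [Finset.card_filter]
        push_cast
        rw [Finset.mul_sum, Finset.mul_sum]
        apply Finset.sum_congr rfl
        intro x _
        by_cases h : (∀ k, ¬ (SimpleGraph.fromEdgeSet (S : Set (Sym2 (Fin n)))).Adj x k) <;>
          simp [h] <;> ring_nf
    _ ≤ ∑ S ∈ G.edgeFinset.powerset,
          p ^ S.card * (1 - p) ^ (G.edgeFinset.card - S.card) *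
            ((deficiency (SimpleGraph.fromEdgeSet (S : Set (Sym2 (Fin n)))) : ℝ)) := by
        apply Finset.sum_le_sum
        intro S _
        apply mul_le_mul_of_nonneg_left _ (hw S)
        have h := count_lemma (SimpleGraph.fromEdgeSet (S : Set (Sym2 (Fin n))))
        have hcast : ((n:ℝ) - 1) = ((n - 1 : ℕ) : ℝ) := by
          have := hn; push_cast [Nat.cast_sub hn]; ring
        rw [hcast]
        rw [div_mul_eq_mul_div, div_le_iff₀ (by norm_num : (0:ℝ) < 2)]
        have h2 := le_of_le_of_eq h (mul_comm 2 _)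
        norm_cast
        convert h2 using 4
    _ = graphExpect G p (fun H => (deficiency H : ℝ)) := rfl

lemma sum_pow_bound {n : ℕ} (G : SimpleGraph (Fin n)) (p : ℝ)
    (hb0 : 0 < 1 - p) (hb1 : 1 - p < 1) (hn : 2 ≤ n)
    (hm : (G.edgeFinset.card : ℝ) ≤ ((n : ℝ) / 8) * Real.logb (1 / (1 - p)) (n : ℝ)) :
    (n : ℝ) / 2 * (n : ℝ) ^ (-(1 : ℝ) / 2)
      ≤ ∑ i : Fin n, (1 - p) ^ (G.edgeFinset.filter (fun e => i ∈ e)).card := by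
  classical
  set b : ℝ := 1 - p with hbdef
  set t : Fin n → ℕ := fun i => (G.edgeFinset.filter (fun e => i ∈ e)).card with ht
  set m : ℕ := G.edgeFinset.card with hmdef
  have hn0 : (0 : ℝ) < n := by positivity
  have hn0' : (0:ℝ) < (n:ℝ) := hn0
  have hts : ∑ i : Fin n, ((t i : ℝ)) = 2 * m := by
    rw [← Nat.cast_sum]
    exact_mod_cast congrArg (Nat.cast : ℕ → ℝ) (t_sum G)
  set L : ℝ := Real.logb (1 / b) (n : ℝ) with hLdef
  have hlogb_neg : Real.log b < 0 := Real.log_neg hb0 hb1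
  have hkey : b ^ ((L / 2 : ℝ)) = (n : ℝ) ^ (-(1 : ℝ) / 2) := by
    rw [Real.rpow_def_of_pos hb0, Real.rpow_def_of_pos hn0]
    congr 1
    rw [hLdef, Real.logb, one_div, Real.log_inv]
    field_simp [ne_of_lt hlogb_neg]
  have h4 : 4 * (m : ℝ) / n ≤ L / 2 := by
    rw [div_le_div_iff₀ hn0 (by norm_num : (0:ℝ) < 2)]
    have : (m : ℝ) ≤ (n : ℝ) / 8 * L := hm
    nlinarith
  set B : Finset (Fin n) := univ.filter (fun i => ((t i : ℝ)) ≤ 4 * (m : ℝ) / n) with hB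
  have hBcard : (n : ℝ) ≤ 2 * B.card := by
    by_cases hm0 : m = 0
    · have hBuniv : B = univ := by
        apply Finset.eq_univ_of_forall
        intro i
        rw [hB, Finset.mem_filter]
        refine ⟨Finset.mem_univ i, ?_⟩
        have h0 : t i ≤ m := Finset.card_le_card (Finset.filter_subset _ _)
        rw [hm0] at h0
        have h0' : t i = 0 := Nat.le_zero.mp h0
        rw [h0', hm0]
        norm_num
      rw [hBuniv, Finset.card_univ, Fintype.card_fin]
      linarith
    · have hmpos : (0 : ℝ) < m := by
        have : 0 < m := Nat.pos_of_ne_zero hm0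
        exact_mod_cast this
      set C : Finset (Fin n) := univ \ B with hC
      have hCle : ∀ i ∈ C, 4 * (m : ℝ) / n ≤ (t i : ℝ) := by
        intro i hi
        rw [hC, Finset.mem_sdiff, hB, Finset.mem_filter] at hi
        push_neg at hi
        exact le_of_lt (hi.2 (Finset.mem_univ i))
      have hsum1 : (C.card : ℝ) * (4 * (m : ℝ) / n) ≤ ∑ i ∈ C, ((t i : ℝ)) := by
        have := Finset.card_nsmul_le_sum C (fun i => ((t i : ℝ))) (4 * (m : ℝ) / n) hCle
        simpa [nsmul_eq_mul] using this
      have hsum2 : ∑ i ∈ C, ((t i : ℝ)) ≤ 2 * m := by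
        rw [← hts]
        apply Finset.sum_le_sum_of_subset_of_nonneg (Finset.subset_univ C)
        intro i _ _
        positivity
      have hCcard : (C.card : ℝ) ≤ (n : ℝ) / 2 := by
        have h1 : (C.card : ℝ) * (4 * (m : ℝ) / n) ≤ 2 * m := le_trans hsum1 hsum2
        have hd : (C.card : ℝ) * (4 * (m : ℝ) / n) = ((C.card : ℝ) * 4 * m) / n := by ring
        rw [hd] at h1
        have h1' := (div_le_iff₀ hn0).mp h1
        nlinarith [h1', hmpos]
      have hCn : (C.card : ℝ) = (n : ℝ) - B.card := by
        rw [hC, Finset.card_sdiff_of_subset (Finset.subset_univ B)]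
        rw [Nat.cast_sub (by simpa using Finset.card_le_univ B)]
        simp
      linarith [hCn ▸ hCcard]
  have hle : ∀ i ∈ B, b ^ ((L / 2 : ℝ)) ≤ b ^ (t i) := by
    intro i hi
    rw [hB, Finset.mem_filter] at hi
    have h1 : b ^ ((L/2 : ℝ)) ≤ b ^ ((4 * (m:ℝ)/n : ℝ)) :=
      Real.rpow_le_rpow_of_exponent_ge hb0 (le_of_lt hb1) h4
    have h2 : b ^ ((4 * (m:ℝ)/n : ℝ)) ≤ b ^ (((t i : ℕ) : ℝ)) :=
      Real.rpow_le_rpow_of_exponent_ge hb0 (le_of_lt hb1) hi.2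
    rw [Real.rpow_natCast] at h2
    exact le_trans h1 h2
  calc (n : ℝ) / 2 * (n : ℝ) ^ (-(1 : ℝ) / 2)
      ≤ (B.card : ℝ) * b ^ ((L / 2 : ℝ)) := by
        rw [hkey]
        apply mul_le_mul_of_nonneg_right _ (Real.rpow_nonneg (le_of_lt hn0) _)
        linarith
    _ ≤ ∑ i ∈ B, b ^ (t i) := by
        rw [← nsmul_eq_mul, ← Finset.sum_const]
        exact Finset.sum_le_sum hle
    _ ≤ ∑ i : Fin n, b ^ (t i) := by
        apply Finset.sum_le_sum_of_subset_of_nonneg (Finset.subset_univ B)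
        intro i _ _
        positivity


theorem stmt_8 (p : ℝ) (hp : p ∈ Set.Ioo (0 : ℝ) 1) (n : ℕ) (hn : 2 ≤ n)
    (G : SimpleGraph (Fin n))
    (hm : (G.edgeFinset.card : ℝ) ≤ ((n : ℝ) / 8) * Real.logb (1 / (1 - p)) (n : ℝ)) :
    (n : ℝ) ^ ((3 : ℝ) / 2) / 8 ≤ graphExpect G p (fun H => (deficiency H : ℝ)) := by
  obtain ⟨hp0, hp1⟩ := hp
  have hb0 : (0:ℝ) < 1 - p := by linarith
  have hb1 : 1 - p < 1 := by linarith
  have hn1 : 1 ≤ n := by omega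
  have hn0 : (0:ℝ) < n := by positivity
  have hn2 : (2:ℝ) ≤ (n:ℝ) := by exact_mod_cast hn
  have chain := expect_chain G p (le_of_lt hp0) (le_of_lt hp1) hn1
  have sb := sum_pow_bound G p hb0 hb1 hn hm
  set c : ℝ := (n:ℝ) ^ (-(1:ℝ)/2) with hc
  have hcpos : 0 < c := Real.rpow_pos_of_pos hn0 _
  have h32 : (n:ℝ) ^ ((3:ℝ)/2) = (n:ℝ) ^ (2:ℕ) * c := by
    rw [hc, ← Real.rpow_natCast (n:ℝ) 2, ← Real.rpow_add hn0]
    norm_num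
  have hid : ((n:ℝ)-1)/2 * ((n:ℝ)/2 * c) - (n:ℝ) ^ (2:ℕ) * c / 8
      = (n:ℝ) * ((n:ℝ)-2) * c / 8 := by ring
  have hnonneg : 0 ≤ (n:ℝ) * ((n:ℝ)-2) * c / 8 := by
    apply div_nonneg _ (by norm_num)
    apply mul_nonneg (mul_nonneg (le_of_lt hn0) (by linarith)) (le_of_lt hcpos)
  have hstep : ((n:ℝ)-1)/2 * ((n:ℝ)/2 * c)
      ≤ ((n:ℝ)-1)/2 * ∑ i : Fin n, (1 - p) ^ (G.edgeFinset.filter (fun e => i ∈ e)).card := by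
    apply mul_le_mul_of_nonneg_left sb
    linarith
  rw [h32]
  linarith
end
end
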